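/- arXiv:2412.20278 — 5 statements merged into one kernel-verified Lean document; each statement's English description precedes it below -/
import Mathlib

section
/- Existence, stochastic case (Theorem 3.1, first part). Under the stated assumptions, there exists a function u ∈ L^∞(X×(0,∞)) with u ≥ 0 such that u(x,t) = g(x,t) + ∫₀ᵗ ∫_X K(x,y;t−s) h(y,s) G(u(y,s)) dμ(y) ds for a.e. x ∈ X and a.e. t > 0. Moreover u is the almost-everywhere pointwise limit of the nonincreasing sequence {u_m} of non-negative measurable functions defined by u₀(x,t) := ξ − β + g(x,t) and u_{m+1}(x,t) := g(x,t) + ∫₀ᵗ ∫_X K(x,y;t−s) h(y,s) G(u_m(y,s)) dμ(y) ds, where β := ‖g‖_{L^∞(X×(0,∞))}. -/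
open MeasureTheory Set Filter

namespace ExistStoch

variable {X : Type*} [MeasurableSpace X] {μ : Measure X} [SigmaFinite μ]

lemma meas_inner {K : X → X → ℝ → ℝ}
    (hK : Measurable fun q : X × X × ℝ => K q.1 q.2.1 q.2.2)
    {W : X → ℝ → ℝ} (hW : Measurable fun q : X × ℝ => W q.1 q.2) :
    Measurable fun p : (X × ℝ) × ℝ => ∫ y, K p.1.1 y (p.1.2 - p.2) * W y p.2 ∂μ := by
  have h1 : StronglyMeasurable fun z : ((X × ℝ) × ℝ) × X =>
      K z.1.1.1 z.2 (z.1.1.2 - z.1.2) * W z.2 z.1.2 := by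
    apply Measurable.stronglyMeasurable
    have hm1 : Measurable fun z : ((X × ℝ) × ℝ) × X => (z.1.1.1, z.2, z.1.1.2 - z.1.2) := by
      fun_prop
    have hm2 : Measurable fun z : ((X × ℝ) × ℝ) × X => (z.2, z.1.2) := by fun_prop
    exact (hK.comp hm1).mul (hW.comp hm2)
  exact h1.integral_prod_right'.measurable

lemma meas_I {K : X → X → ℝ → ℝ}
    (hK : Measurable fun q : X × X × ℝ => K q.1 q.2.1 q.2.2)
    {W : X → ℝ → ℝ} (hW : Measurable fun q : X × ℝ => W q.1 q.2) :
    Measurable fun q : X × ℝ =>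
      ∫ s in Ioc (0:ℝ) q.2, ∫ y, K q.1 y (q.2 - s) * W y s ∂μ := by
  have hΨ := meas_inner (μ := μ) hK hW
  set Ψ : (X × ℝ) × ℝ → ℝ := fun p => ∫ y, K p.1.1 y (p.1.2 - p.2) * W y p.2 ∂μ with hΨdef
  have hE : MeasurableSet {p : (X × ℝ) × ℝ | p.2 ∈ Ioc 0 p.1.2} := by
    have : {p : (X × ℝ) × ℝ | p.2 ∈ Ioc 0 p.1.2}
        = {p : (X × ℝ) × ℝ | 0 < p.2} ∩ {p : (X × ℝ) × ℝ | p.2 ≤ p.1.2} := by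
      ext p; simp [Ioc]
    rw [this]
    exact (measurableSet_lt measurable_const measurable_snd).inter
      (measurableSet_le measurable_snd (measurable_fst.snd))
  have key : ∀ q : X × ℝ, (∫ s in Ioc (0:ℝ) q.2, Ψ (q, s))
      = ∫ s, ({p : (X × ℝ) × ℝ | p.2 ∈ Ioc 0 p.1.2}.indicator Ψ) (q, s) := by
    intro q
    have hfun : (Ioc (0:ℝ) q.2).indicator (fun s => Ψ (q, s))
        = fun s => ({p : (X × ℝ) × ℝ | p.2 ∈ Ioc 0 p.1.2}.indicator Ψ) (q, s) := by
      funext s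
      simp only [indicator, mem_setOf_eq, mem_Ioc]
    rw [← integral_indicator measurableSet_Ioc, hfun]
  have hmeas : Measurable fun q : X × ℝ =>
      ∫ s, ({p : (X × ℝ) × ℝ | p.2 ∈ Ioc 0 p.1.2}.indicator Ψ) (q, s) :=
    ((hΨ.indicator hE).stronglyMeasurable.integral_prod_right').measurable
  have : (fun q : X × ℝ => ∫ s in Ioc (0:ℝ) q.2, ∫ y, K q.1 y (q.2 - s) * W y s ∂μ)
      = fun q => ∫ s, ({p : (X × ℝ) × ℝ | p.2 ∈ Ioc 0 p.1.2}.indicator Ψ) (q, s) := by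
    funext q; exact key q
  rw [this]; exact hmeas

end ExistStoch

/-- **Existence, stochastic case (Theorem 3.1, first part).**
Under the stated assumptions (stochastic kernel, bounded non-negative `g`,
`h` sandwiched between `p₁` and `p₂`, concave non-linearity `G`, and the
threshold `ξ` with `ξ - G ξ = β`), there exists a non-negative `u ∈ L^∞`
solving the Hammerstein–Volterra integral equation, and `u` is the a.e.
pointwise limit of the nonincreasing iteration `U`. -/
theorem existence_stochastic
    {X : Type*} [MeasurableSpace X] (μ : Measure X) [SigmaFinite μ]
    (K : X → X → ℝ → ℝ) (g h : X → ℝ → ℝ) (G : ℝ → ℝ)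
    (p₁ p₂ : ℝ → ℝ) (β ξ : ℝ)
    (hK_meas : Measurable fun q : X × X × ℝ => K q.1 q.2.1 q.2.2)
    (hK_nonneg : ∀ x y t, 0 ≤ K x y t)
    (hK_stoch : ∀ᵐ x ∂μ, ∀ᵐ t ∂(volume.restrict (Ioi (0:ℝ))),
      (∫ y, K x y t ∂μ) = 1)
    (hg_meas : Measurable fun q : X × ℝ => g q.1 q.2)
    (hg_nonneg : ∀ x t, 0 ≤ g x t)
    (hg_bdd : MemLp (fun q : X × ℝ => g q.1 q.2) ⊤
      (μ.prod (volume.restrict (Ioi (0:ℝ)))))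
    (hβ : β = (eLpNorm (fun q : X × ℝ => g q.1 q.2) ⊤
      (μ.prod (volume.restrict (Ioi (0:ℝ))))).toReal)
    (hh_meas : Measurable fun q : X × ℝ => h q.1 q.2)
    (hh_nonneg : ∀ x t, 0 ≤ h x t)
    (hG_cont : ContinuousOn G (Ici 0))
    (hG_zero : G 0 = 0)
    (hG_nonneg : ∀ u, 0 ≤ u → 0 ≤ G u)
    (hG_mono : StrictMonoOn G (Ici 0))
    (hG_conc : ConcaveOn ℝ (Ici 0) G)
    (hp₁_cont : ContinuousOn p₁ (Ioi 0)) (hp₂_cont : ContinuousOn p₂ (Ioi 0))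
    (hp₁_pos : ∀ t ∈ Ioi (0:ℝ), 0 < p₁ t) (hp₂_pos : ∀ t ∈ Ioi (0:ℝ), 0 < p₂ t)
    (hp_ne : ∃ t ∈ Ioi (0:ℝ), p₁ t ≠ p₂ t)
    (hp₂_int : (∫ t in Ioi (0:ℝ), p₂ t) = 1)
    (hp_bound : ∀ᵐ x ∂μ, ∀ᵐ t ∂(volume.restrict (Ioi (0:ℝ))),
      p₁ t ≤ h x t ∧ h x t ≤ p₂ t)
    (hξ_pos : 0 < ξ) (hξ_eq : ξ - G ξ = β)
    (U : ℕ → X → ℝ → ℝ)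
    (hU0 : ∀ x t, U 0 x t = ξ - β + g x t)
    (hUsucc : ∀ m x t, U (m + 1) x t =
      g x t + ∫ s in Ioc (0:ℝ) t, ∫ y, K x y (t - s) * (h y s * G (U m y s)) ∂μ) :
    ∃ u : X → ℝ → ℝ,
      MemLp (fun q : X × ℝ => u q.1 q.2) ⊤ (μ.prod (volume.restrict (Ioi (0:ℝ)))) ∧
      (∀ᵐ q ∂(μ.prod (volume.restrict (Ioi (0:ℝ)))), 0 ≤ u q.1 q.2) ∧
      (∀ᵐ q ∂(μ.prod (volume.restrict (Ioi (0:ℝ)))),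
        u q.1 q.2 = g q.1 q.2 +
          ∫ s in Ioc (0:ℝ) q.2, ∫ y, K q.1 y (q.2 - s) * (h y s * G (u y s)) ∂μ) ∧
      (∀ m, Measurable fun q : X × ℝ => U m q.1 q.2) ∧
      (∀ᵐ q ∂(μ.prod (volume.restrict (Ioi (0:ℝ)))),
        ∀ m, 0 ≤ U m q.1 q.2 ∧ U (m + 1) q.1 q.2 ≤ U m q.1 q.2) ∧
      (∀ᵐ q ∂(μ.prod (volume.restrict (Ioi (0:ℝ)))),
        Tendsto (fun m => U m q.1 q.2) atTop (nhds (u q.1 q.2))) := by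
  classical
  set ν : Measure ℝ := volume.restrict (Ioi (0:ℝ)) with hνdef
  set π : Measure (X × ℝ) := μ.prod ν with hπdef
  -- basic scalar facts
  have hβ0 : 0 ≤ β := hβ ▸ ENNReal.toReal_nonneg
  have hGξ_pos : 0 < G ξ := by
    have := hG_mono (self_mem_Ici) (le_of_lt hξ_pos : (0:ℝ) ≤ ξ) hξ_pos
    rwa [hG_zero] at this
  have hξβ : ξ - β = G ξ := by linarith
  have hβξ : β ≤ ξ := by linarith
  -- the truncated nonlinearity
  set G' : ℝ → ℝ := fun r => G (max r 0) with hG'def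
  have hG'cont : Continuous G' :=
    hG_cont.comp_continuous (continuous_id.max continuous_const) (fun r => le_max_right r 0)
  have hG'mono : Monotone G' := fun a b hab =>
    hG_mono.monotoneOn (le_max_right a 0) (le_max_right b 0) (max_le_max hab le_rfl)
  have hG'eq : ∀ r, 0 ≤ r → G' r = G r := fun r hr => by
    simp only [hG'def, max_eq_left hr]
  have hG'nonneg : ∀ r, 0 ≤ G' r := fun r => hG_nonneg _ (le_max_right r 0)
  have hG'ξ : G' ξ = G ξ := hG'eq ξ hξ_pos.le
  -- nonnegativity of the iterates, everywhere
  have hU_nonneg : ∀ m x t, 0 ≤ U m x t := by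
    intro m
    induction m with
    | zero =>
      intro x t
      have := hg_nonneg x t
      rw [hU0]; linarith
    | succ m ih =>
      intro x t
      rw [hUsucc]
      have h1 : 0 ≤ ∫ s in Ioc (0:ℝ) t, ∫ y, K x y (t - s) * (h y s * G (U m y s)) ∂μ := by
        apply integral_nonneg
        intro s
        apply integral_nonneg
        intro y
        exact mul_nonneg (hK_nonneg _ _ _)
          (mul_nonneg (hh_nonneg _ _) (hG_nonneg _ (ih y s)))
      have := hg_nonneg x t
      linarith
  have hGU : ∀ m y s, G (U m y s) = G' (U m y s) :=
    fun m y s => (hG'eq _ (hU_nonneg m y s)).symm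
  -- measurability of the iterates
  have hU_meas : ∀ m, Measurable fun q : X × ℝ => U m q.1 q.2 := by
    intro m
    induction m with
    | zero =>
      have : (fun q : X × ℝ => U 0 q.1 q.2) = fun q => ξ - β + g q.1 q.2 := by
        funext q; rw [hU0]
      rw [this]; exact measurable_const.add hg_meas
    | succ m ih =>
      have hW : Measurable fun q : X × ℝ => h q.1 q.2 * G' (U m q.1 q.2) :=
        hh_meas.mul (hG'cont.measurable.comp ih)
      have hIm := ExistStoch.meas_I (μ := μ) (W := fun y s => h y s * G' (U m y s)) hK_meas hW
      have heq : (fun q : X × ℝ => U (m+1) q.1 q.2) = fun q : X × ℝ => g q.1 q.2 +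
          ∫ s in Ioc (0:ℝ) q.2, ∫ y, K q.1 y (q.2 - s) * (h y s * G' (U m y s)) ∂μ := by
        funext q; rw [hUsucc]
        simp only [hGU]
      rw [heq]
      exact hg_meas.add hIm
  -- the integral operator (with the truncated nonlinearity)
  set I : (X → ℝ → ℝ) → X × ℝ → ℝ := fun w q =>
    ∫ s in Ioc (0:ℝ) q.2, ∫ y, K q.1 y (q.2 - s) * (h y s * G' (w y s)) ∂μ with hIdef
  have hI_meas : ∀ w : X → ℝ → ℝ, (Measurable fun q : X × ℝ => w q.1 q.2) →
      Measurable (I w) := by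
    intro w hw
    exact ExistStoch.meas_I (μ := μ) (W := fun y s => h y s * G' (w y s)) hK_meas (hh_meas.mul (hG'cont.measurable.comp hw))
  have hUsucc' : ∀ m (q : X × ℝ), U (m+1) q.1 q.2 = g q.1 q.2 + I (U m) q := by
    intro m q
    rw [hUsucc]
    simp only [hIdef, hGU]
  -- measurable modification of p₂ on (0,∞)
  have hp₂_aemeas : AEMeasurable p₂ ν := hp₂_cont.aemeasurable measurableSet_Ioi
  set P : ℝ → ℝ := hp₂_aemeas.mk p₂ with hPdef
  have hP_meas : Measurable P := hp₂_aemeas.measurable_mk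
  have hP_ae : ∀ᵐ s ∂ν, p₂ s = P s := hp₂_aemeas.ae_eq_mk
  have hp₂_int' : IntegrableOn p₂ (Ioi (0:ℝ)) volume := by
    by_contra hcon
    rw [MeasureTheory.integral_undef hcon] at hp₂_int
    exact one_ne_zero hp₂_int.symm
  have hP_int : Integrable P ν := hp₂_int'.congr hP_ae
  have hP_fact : ∀ᵐ s ∂ν, 0 < P s ∧ p₂ s = P s := by
    filter_upwards [hP_ae, ae_restrict_mem measurableSet_Ioi] with s h1 h2
    exact ⟨h1 ▸ hp₂_pos s h2, h1⟩
  -- g is a.e. bounded by β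
  have hgβ : ∀ᵐ q ∂π, g q.1 q.2 ≤ β := by
    have h1 : ∀ᵐ q ∂π, ((‖g q.1 q.2‖₊ : ENNReal)) ≤ eLpNormEssSup (fun q : X × ℝ => g q.1 q.2) π :=
      ae_le_eLpNormEssSup
    have hfin : eLpNormEssSup (fun q : X × ℝ => g q.1 q.2) π ≠ ⊤ := by
      have h2 := hg_bdd.2
      rw [eLpNorm_exponent_top] at h2
      exact h2.ne
    filter_upwards [h1] with q hq
    have h2 : ‖g q.1 q.2‖ ≤ β := by
      rw [hβ, eLpNorm_exponent_top]
      calc ‖g q.1 q.2‖ = (((‖g q.1 q.2‖₊ : ENNReal))).toReal := by simp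
        _ ≤ (eLpNormEssSup (fun q : X × ℝ => g q.1 q.2) π).toReal :=
          ENNReal.toReal_mono hfin hq
    calc g q.1 q.2 ≤ ‖g q.1 q.2‖ := le_abs_self _
      _ ≤ β := h2
  -- kernel data
  have hKx : ∀ᵐ x ∂μ, ∀ᵐ τ ∂ν, Integrable (fun y => K x y τ) μ ∧ (∫ y, K x y τ ∂μ) = 1 := by
    filter_upwards [hK_stoch] with x hx
    filter_upwards [hx] with τ hτ
    refine ⟨?_, hτ⟩
    by_contra hcon
    rw [MeasureTheory.integral_undef hcon] at hτ
    exact one_ne_zero hτ.symm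
  -- transfer a.e. statements along reflection and restriction
  have refl_ae : ∀ (t : ℝ), 0 < t → ∀ {Q : ℝ → Prop}, (∀ᵐ τ ∂ν, Q τ) →
      ∀ᵐ s ∂(volume.restrict (Ioc (0:ℝ) t)), Q (t - s) := by
    intro t ht Q hQ
    have h2 : ∀ᵐ τ ∂(volume : Measure ℝ), τ ∈ Ioi (0:ℝ) → Q τ :=
      (ae_restrict_iff' measurableSet_Ioi).mp hQ
    have h3 : ∀ᵐ s ∂(volume : Measure ℝ), (t - s) ∈ Ioi (0:ℝ) → Q (t - s) :=
      (Measure.measurePreserving_sub_left volume t).quasiMeasurePreserving.ae h2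
    have ht' : ∀ᵐ s : ℝ ∂volume, s ≠ t := by
      refine ae_iff.mpr ?_
      have : {s : ℝ | ¬s ≠ t} = {t} := by ext s; simp
      rw [this]
      exact measure_singleton t
    rw [ae_restrict_iff' measurableSet_Ioc]
    filter_upwards [h3, ht'] with s hQs hst hmem
    exact hQs (by simp only [mem_Ioi]; rcases hmem with ⟨h1', h2'⟩; cases lt_or_eq_of_le h2' with
      | inl hlt => linarith
      | inr heq => exact absurd heq hst)
  have restrict_ae : ∀ (t : ℝ) {Q : ℝ → Prop}, (∀ᵐ s ∂ν, Q s) →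
      ∀ᵐ s ∂(volume.restrict (Ioc (0:ℝ) t)), Q s := by
    intro t Q hQ
    have h2 : ∀ᵐ s ∂(volume : Measure ℝ), s ∈ Ioi (0:ℝ) → Q s :=
      (ae_restrict_iff' measurableSet_Ioi).mp hQ
    rw [ae_restrict_iff' measurableSet_Ioc]
    filter_upwards [h2] with s hs hmem
    exact hs hmem.1
  -- inner comparison/bound lemma
  have inner_lemma : ∀ (v w : X → ℝ → ℝ), (∀ y s, 0 ≤ v y s) → (∀ y s, 0 ≤ w y s) →
      (Measurable fun q : X × ℝ => v q.1 q.2) → (Measurable fun q : X × ℝ => w q.1 q.2) →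
      ∀ (x : X) (t s : ℝ), 0 < P s →
      Integrable (fun y => K x y (t - s)) μ → (∫ y, K x y (t - s) ∂μ) = 1 →
      (∀ᵐ y ∂μ, h y s ≤ P s) → (∀ᵐ y ∂μ, w y s ≤ ξ) → (∀ᵐ y ∂μ, v y s ≤ w y s) →
      (∫ y, K x y (t - s) * (h y s * G' (v y s)) ∂μ)
        ≤ (∫ y, K x y (t - s) * (h y s * G' (w y s)) ∂μ)
      ∧ (∫ y, K x y (t - s) * (h y s * G' (w y s)) ∂μ) ≤ P s * G ξ := by
    intro v w hv0 hw0 hvm hwm x t s hPs hKint hKone hhP hwξ hvw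
    have hmw : AEStronglyMeasurable (fun y => K x y (t - s) * (h y s * G' (w y s))) μ := by
      apply Measurable.aestronglyMeasurable
      have hm1 : Measurable fun y => K x y (t - s) :=
        hK_meas.comp (measurable_const.prodMk (measurable_id.prodMk measurable_const))
      have hm2 : Measurable fun y => h y s :=
        hh_meas.comp (measurable_id.prodMk measurable_const)
      have hm3 : Measurable fun y => G' (w y s) :=
        hG'cont.measurable.comp (hwm.comp (measurable_id.prodMk measurable_const))
      exact hm1.mul (hm2.mul hm3)
    have hmv : AEStronglyMeasurable (fun y => K x y (t - s) * (h y s * G' (v y s))) μ := by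
      apply Measurable.aestronglyMeasurable
      have hm1 : Measurable fun y => K x y (t - s) :=
        hK_meas.comp (measurable_const.prodMk (measurable_id.prodMk measurable_const))
      have hm2 : Measurable fun y => h y s :=
        hh_meas.comp (measurable_id.prodMk measurable_const)
      have hm3 : Measurable fun y => G' (v y s) :=
        hG'cont.measurable.comp (hvm.comp (measurable_id.prodMk measurable_const))
      exact hm1.mul (hm2.mul hm3)
    have hDint : Integrable (fun y => K x y (t - s) * (P s * G ξ)) μ := hKint.mul_const _
    have hble : ∀ᵐ y ∂μ, K x y (t - s) * (h y s * G' (w y s)) ≤ K x y (t - s) * (P s * G ξ) := by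
      filter_upwards [hhP, hwξ] with y h1 h2
      apply mul_le_mul_of_nonneg_left _ (hK_nonneg x y (t - s))
      have h3 : G' (w y s) ≤ G ξ := by rw [← hG'ξ]; exact hG'mono h2
      exact mul_le_mul h1 h3 (hG'nonneg _) hPs.le
    have hbw : ∀ᵐ y ∂μ, ‖K x y (t - s) * (h y s * G' (w y s))‖ ≤ K x y (t - s) * (P s * G ξ) := by
      filter_upwards [hble] with y h1
      rwa [Real.norm_of_nonneg (mul_nonneg (hK_nonneg _ _ _)
        (mul_nonneg (hh_nonneg _ _) (hG'nonneg _)))]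
    have hIw : Integrable (fun y => K x y (t - s) * (h y s * G' (w y s))) μ :=
      Integrable.mono' hDint hmw hbw
    constructor
    · apply integral_mono_of_nonneg
      · exact ae_of_all _ fun y => mul_nonneg (hK_nonneg _ _ _)
          (mul_nonneg (hh_nonneg _ _) (hG'nonneg _))
      · exact hIw
      · filter_upwards [hvw] with y h1
        exact mul_le_mul_of_nonneg_left
          (mul_le_mul_of_nonneg_left (hG'mono h1) (hh_nonneg _ _)) (hK_nonneg _ _ _)
    · calc (∫ y, K x y (t - s) * (h y s * G' (w y s)) ∂μ)
          ≤ ∫ y, K x y (t - s) * (P s * G ξ) ∂μ := by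
            apply integral_mono_of_nonneg
            · exact ae_of_all _ fun y => mul_nonneg (hK_nonneg _ _ _)
                (mul_nonneg (hh_nonneg _ _) (hG'nonneg _))
            · exact hDint
            · exact hble
        _ = (∫ y, K x y (t - s) ∂μ) * (P s * G ξ) := by
            rw [integral_mul_const]
        _ = P s * G ξ := by rw [hKone, one_mul]
  -- outer comparison/bound lemma
  have outer_lemma : ∀ (v w : X → ℝ → ℝ), (∀ y s, 0 ≤ v y s) → (∀ y s, 0 ≤ w y s) →
      (Measurable fun q : X × ℝ => v q.1 q.2) → (Measurable fun q : X × ℝ => w q.1 q.2) →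
      ∀ (x : X) (t : ℝ), 0 < t →
      (∀ᵐ s ∂(volume.restrict (Ioc (0:ℝ) t)),
        (0 < P s ∧ p₂ s = P s) ∧ (Integrable (fun y => K x y (t - s)) μ ∧
          (∫ y, K x y (t - s) ∂μ) = 1) ∧
        (∀ᵐ y ∂μ, h y s ≤ P s) ∧ (∀ᵐ y ∂μ, w y s ≤ ξ) ∧ (∀ᵐ y ∂μ, v y s ≤ w y s)) →
      I v (x, t) ≤ I w (x, t) ∧ I w (x, t) ≤ G ξ := by
    intro v w hv0 hw0 hvm hwm x t ht hdata
    have hJw_meas : Measurable fun s : ℝ => ∫ y, K x y (t - s) * (h y s * G' (w y s)) ∂μ := by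
      have := ExistStoch.meas_inner (μ := μ) (W := fun y s => h y s * G' (w y s)) hK_meas
        (hh_meas.mul (hG'cont.measurable.comp hwm))
      exact this.comp (measurable_const.prodMk measurable_id : Measurable fun s : ℝ => ((x, t), s))
    have hJv_meas : Measurable fun s : ℝ => ∫ y, K x y (t - s) * (h y s * G' (v y s)) ∂μ := by
      have := ExistStoch.meas_inner (μ := μ) (W := fun y s => h y s * G' (v y s)) hK_meas
        (hh_meas.mul (hG'cont.measurable.comp hvm))
      exact this.comp (measurable_const.prodMk measurable_id : Measurable fun s : ℝ => ((x, t), s))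
    have hJ_nonneg : ∀ (u' : X → ℝ → ℝ) (s : ℝ),
        0 ≤ ∫ y, K x y (t - s) * (h y s * G' (u' y s)) ∂μ := by
      intro u' s
      exact integral_nonneg fun y => mul_nonneg (hK_nonneg _ _ _)
        (mul_nonneg (hh_nonneg _ _) (hG'nonneg _))
    have hbound : ∀ᵐ s ∂(volume.restrict (Ioc (0:ℝ) t)),
        (∫ y, K x y (t - s) * (h y s * G' (v y s)) ∂μ)
          ≤ (∫ y, K x y (t - s) * (h y s * G' (w y s)) ∂μ)
        ∧ (∫ y, K x y (t - s) * (h y s * G' (w y s)) ∂μ) ≤ P s * G ξ := by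
      filter_upwards [hdata] with s hs
      exact inner_lemma v w hv0 hw0 hvm hwm x t s hs.1.1 hs.2.1.1 hs.2.1.2
        hs.2.2.1 hs.2.2.2.1 hs.2.2.2.2
    have hPInt : IntegrableOn (fun s => P s * G ξ) (Ioc (0:ℝ) t) volume := by
      have h1 : IntegrableOn P (Ioi (0:ℝ)) volume := hP_int
      exact (h1.mono_set Ioc_subset_Ioi_self).mul_const _
    have hJw_int : IntegrableOn (fun s => ∫ y, K x y (t - s) * (h y s * G' (w y s)) ∂μ)
        (Ioc (0:ℝ) t) volume := by
      apply Integrable.mono' hPInt hJw_meas.aestronglyMeasurable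
      filter_upwards [hbound] with s hs
      rw [Real.norm_of_nonneg (hJ_nonneg w s)]
      exact hs.2
    constructor
    · apply integral_mono_of_nonneg
      · exact ae_of_all _ fun s => hJ_nonneg v s
      · exact hJw_int
      · filter_upwards [hbound] with s hs using hs.1
    · calc I w (x, t) ≤ (∫ s in Ioc (0:ℝ) t, P s * G ξ) := by
              apply integral_mono_of_nonneg
              · exact ae_of_all _ fun s => hJ_nonneg w s
              · exact hPInt
              · filter_upwards [hbound] with s hs using hs.2
        _ = (∫ s in Ioc (0:ℝ) t, P s) * G ξ := by rw [integral_mul_const]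
        _ = (∫ s in Ioc (0:ℝ) t, p₂ s) * G ξ := by
          congr 1
          apply integral_congr_ae
          have := restrict_ae t (Q := fun s => p₂ s = P s) hP_ae
          filter_upwards [this] with s hs using hs.symm
        _ ≤ 1 * G ξ := by
          apply mul_le_mul_of_nonneg_right _ hGξ_pos.le
          rw [← hp₂_int]
          apply setIntegral_mono_set hp₂_int'
          · filter_upwards [ae_restrict_mem measurableSet_Ioi] with s hs
            exact (hp₂_pos s hs).le
          · exact HasSubset.Subset.eventuallyLE Ioc_subset_Ioi_self
        _ = G ξ := one_mul _
  -- swap product-a.e. statements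
  have swap_ae : ∀ (p : X → ℝ → Prop), MeasurableSet {q : X × ℝ | p q.1 q.2} →
      (∀ᵐ q ∂π, p q.1 q.2) → ∀ᵐ s ∂ν, ∀ᵐ y ∂μ, p y s := by
    intro p hset hp
    have h1 : ∀ᵐ y ∂μ, ∀ᵐ s ∂ν, p y s := Measure.ae_ae_of_ae_prod hp
    exact (Measure.ae_ae_comm hset).mp h1
  -- h is a.e. dominated by P
  have hhP : ∀ᵐ s ∂ν, ∀ᵐ y ∂μ, h y s ≤ P s := by
    apply swap_ae (fun y s => h y s ≤ P s)
      (measurableSet_le hh_meas (hP_meas.comp measurable_snd))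
    have h' : ∀ᵐ x ∂μ, ∀ᵐ t ∂ν, h x t ≤ P t := by
      filter_upwards [hp_bound] with x hx
      filter_upwards [hx, hP_ae] with t h1 h2
      exact h2 ▸ h1.2
    exact (Measure.ae_prod_iff_ae_ae
      (measurableSet_le hh_meas (hP_meas.comp measurable_snd))).mpr h'
  -- the main comparison machine: from product-a.e. facts to a.e. conclusions about I
  have data_of : ∀ (v w : X → ℝ → ℝ), (∀ y s, 0 ≤ v y s) → (∀ y s, 0 ≤ w y s) →
      (Measurable fun q : X × ℝ => v q.1 q.2) → (Measurable fun q : X × ℝ => w q.1 q.2) →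
      (∀ᵐ q ∂π, w q.1 q.2 ≤ ξ) → (∀ᵐ q ∂π, v q.1 q.2 ≤ w q.1 q.2) →
      ∀ᵐ x ∂μ, ∀ᵐ t ∂ν, I v (x, t) ≤ I w (x, t) ∧ I w (x, t) ≤ G ξ := by
    intro v w hv0 hw0 hvm hwm hwξ hvw
    have hswξ : ∀ᵐ s ∂ν, ∀ᵐ y ∂μ, w y s ≤ ξ :=
      swap_ae (fun y s => w y s ≤ ξ) (measurableSet_le hwm measurable_const) hwξ
    have hsvw : ∀ᵐ s ∂ν, ∀ᵐ y ∂μ, v y s ≤ w y s :=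
      swap_ae (fun y s => v y s ≤ w y s) (measurableSet_le hvm hwm) hvw
    have hsdata : ∀ᵐ s ∂ν, (0 < P s ∧ p₂ s = P s) ∧
        (∀ᵐ y ∂μ, h y s ≤ P s) ∧ (∀ᵐ y ∂μ, w y s ≤ ξ) ∧ (∀ᵐ y ∂μ, v y s ≤ w y s) := by
      filter_upwards [hP_fact, hhP, hswξ, hsvw] with s h1 h2 h3 h4
      exact ⟨h1, h2, h3, h4⟩
    filter_upwards [hKx] with x hxK
    filter_upwards [ae_restrict_mem measurableSet_Ioi] with t ht
    apply outer_lemma v w hv0 hw0 hvm hwm x t ht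
    have hd1 : ∀ᵐ s ∂(volume.restrict (Ioc (0:ℝ) t)),
        Integrable (fun y => K x y (t - s)) μ ∧ (∫ y, K x y (t - s) ∂μ) = 1 :=
      refl_ae t ht (Q := fun τ => Integrable (fun y => K x y τ) μ ∧ (∫ y, K x y τ ∂μ) = 1) hxK
    have hd2 := restrict_ae t hsdata
    filter_upwards [hd1, hd2] with s h1 h2
    exact ⟨h2.1, h1, h2.2⟩
  -- the limit function
  set u : X → ℝ → ℝ := fun x t => (⨅ m, ENNReal.ofReal (U m x t)).toReal with hudef
  have hu_nonneg : ∀ x t, 0 ≤ u x t := fun x t => ENNReal.toReal_nonneg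
  have hu_meas : Measurable fun q : X × ℝ => u q.1 q.2 := by
    apply ENNReal.measurable_toReal.comp
    exact Measurable.iInf fun m => (hU_meas m).ennreal_ofReal
  have tend_of_anti : ∀ x t, (∀ m, U (m+1) x t ≤ U m x t) →
      Tendsto (fun m => U m x t) atTop (nhds (u x t)) := by
    intro x t hanti'
    have hanti : Antitone fun m => U m x t := antitone_nat_of_succ_le hanti'
    have hbdd : BddBelow (range fun m => U m x t) := by
      refine ⟨0, ?_⟩
      rintro r ⟨m, rfl⟩
      exact hU_nonneg m x t
    have htd : Tendsto (fun m => U m x t) atTop (nhds (⨅ m, U m x t)) :=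
      tendsto_atTop_ciInf hanti hbdd
    have h0 : 0 ≤ ⨅ m, U m x t := le_ciInf fun m => hU_nonneg m x t
    have h1 : Tendsto (fun m => ENNReal.ofReal (U m x t)) atTop
        (nhds (ENNReal.ofReal (⨅ m, U m x t))) :=
      (ENNReal.continuous_ofReal.tendsto _).comp htd
    have h2 : Tendsto (fun m => ENNReal.ofReal (U m x t)) atTop
        (nhds (⨅ m, ENNReal.ofReal (U m x t))) :=
      tendsto_atTop_iInf fun a b hab => ENNReal.ofReal_le_ofReal (hanti hab)
    have h3 : (⨅ m, ENNReal.ofReal (U m x t)) = ENNReal.ofReal (⨅ m, U m x t) :=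
      tendsto_nhds_unique h2 h1
    have h4 : u x t = ⨅ m, U m x t := by
      rw [hudef]
      simp only
      rw [h3, ENNReal.toReal_ofReal h0]
    rw [h4]
    exact htd
  -- main induction: a.e. bounds and monotonicity
  have main : ∀ m, (∀ᵐ q ∂π, U m q.1 q.2 ≤ ξ) ∧ (∀ᵐ q ∂π, U (m+1) q.1 q.2 ≤ U m q.1 q.2) := by
    intro m
    induction m with
    | zero =>
      have h0ξ : ∀ᵐ q ∂π, U 0 q.1 q.2 ≤ ξ := by
        filter_upwards [hgβ] with q hq
        rw [hU0]; linarith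
      refine ⟨h0ξ, ?_⟩
      have hd := data_of (U 0) (U 0) (hU_nonneg 0) (hU_nonneg 0) (hU_meas 0) (hU_meas 0) h0ξ
        (ae_of_all _ fun q => le_rfl)
      have hset : MeasurableSet {q : X × ℝ | I (U 0) q ≤ G ξ} :=
        measurableSet_le (hI_meas (U 0) (hU_meas 0)) measurable_const
      have hprod : ∀ᵐ q ∂π, I (U 0) q ≤ G ξ := by
        refine (Measure.ae_prod_iff_ae_ae hset).mpr ?_
        filter_upwards [hd] with x hx
        filter_upwards [hx] with t htt
        exact htt.2
      filter_upwards [hprod] with q hq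
      rw [hUsucc' 0 q, hU0]
      linarith
    | succ m ih =>
      obtain ⟨ihξ, ihmono⟩ := ih
      have hm1ξ : ∀ᵐ q ∂π, U (m+1) q.1 q.2 ≤ ξ := by
        have hd := data_of (U m) (U m) (hU_nonneg m) (hU_nonneg m) (hU_meas m) (hU_meas m) ihξ
          (ae_of_all _ fun q => le_rfl)
        have hset : MeasurableSet {q : X × ℝ | I (U m) q ≤ G ξ} :=
          measurableSet_le (hI_meas (U m) (hU_meas m)) measurable_const
        have hprod : ∀ᵐ q ∂π, I (U m) q ≤ G ξ := by
          refine (Measure.ae_prod_iff_ae_ae hset).mpr ?_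
          filter_upwards [hd] with x hx
          filter_upwards [hx] with t htt
          exact htt.2
        filter_upwards [hprod, hgβ] with q h1 h2
        rw [hUsucc' m q]
        linarith
      refine ⟨hm1ξ, ?_⟩
      have hd := data_of (U (m+1)) (U m) (hU_nonneg (m+1)) (hU_nonneg m) (hU_meas (m+1))
        (hU_meas m) ihξ ihmono
      have hset : MeasurableSet {q : X × ℝ | I (U (m+1)) q ≤ I (U m) q} :=
        measurableSet_le (hI_meas _ (hU_meas (m+1))) (hI_meas _ (hU_meas m))
      have hprod : ∀ᵐ q ∂π, I (U (m+1)) q ≤ I (U m) q := by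
        refine (Measure.ae_prod_iff_ae_ae hset).mpr ?_
        filter_upwards [hd] with x hx
        filter_upwards [hx] with t htt
        exact htt.1
      filter_upwards [hprod] with q hq
      rw [hUsucc' (m+1) q, hUsucc' m q]
      linarith
  have hall : ∀ᵐ q ∂π, ∀ m, U m q.1 q.2 ≤ ξ ∧ U (m+1) q.1 q.2 ≤ U m q.1 q.2 := by
    rw [ae_all_iff]
    intro m
    filter_upwards [(main m).1, (main m).2] with q h1 h2
    exact ⟨h1, h2⟩
  have hall_sy : ∀ᵐ s ∂ν, ∀ᵐ y ∂μ, ∀ m, U m y s ≤ ξ ∧ U (m+1) y s ≤ U m y s := by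
    apply swap_ae (fun y s => ∀ m, U m y s ≤ ξ ∧ U (m+1) y s ≤ U m y s) ?_ hall
    have hseteq : {q : X × ℝ | ∀ m, U m q.1 q.2 ≤ ξ ∧ U (m+1) q.1 q.2 ≤ U m q.1 q.2}
        = ⋂ m, ({q : X × ℝ | U m q.1 q.2 ≤ ξ} ∩ {q : X × ℝ | U (m+1) q.1 q.2 ≤ U m q.1 q.2}) := by
      ext q
      simp only [mem_iInter, mem_inter_iff, mem_setOf_eq, forall_and]
    rw [hseteq]
    exact MeasurableSet.iInter fun m =>
      (measurableSet_le (hU_meas m) measurable_const).inter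
        (measurableSet_le (hU_meas (m+1)) (hU_meas m))
  -- a.e. convergence of the integral terms
  have conv : ∀ᵐ x ∂μ, ∀ᵐ t ∂ν,
      Tendsto (fun m => I (U m) (x, t)) atTop (nhds (I u (x, t))) := by
    filter_upwards [hKx] with x hxK
    filter_upwards [ae_restrict_mem measurableSet_Ioi] with t ht
    have hd1 : ∀ᵐ s ∂(volume.restrict (Ioc (0:ℝ) t)),
        Integrable (fun y => K x y (t - s)) μ ∧ (∫ y, K x y (t - s) ∂μ) = 1 :=
      refl_ae t ht (Q := fun τ => Integrable (fun y => K x y τ) μ ∧ (∫ y, K x y τ ∂μ) = 1) hxK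
    have hd2 := restrict_ae t hP_fact
    have hd3 := restrict_ae t hhP
    have hd4 := restrict_ae t hall_sy
    apply tendsto_integral_of_dominated_convergence (fun s => P s * G ξ)
    · intro m
      have hJm : Measurable fun s : ℝ => ∫ y, K x y (t - s) * (h y s * G' (U m y s)) ∂μ := by
        have := ExistStoch.meas_inner (μ := μ) (W := fun y s => h y s * G' (U m y s)) hK_meas
          (hh_meas.mul (hG'cont.measurable.comp (hU_meas m)))
        exact this.comp (measurable_const.prodMk measurable_id :
          Measurable fun s : ℝ => ((x, t), s))
      exact hJm.aestronglyMeasurable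
    · have h1 : IntegrableOn P (Ioi (0:ℝ)) volume := hP_int
      exact (h1.mono_set Ioc_subset_Ioi_self).mul_const _
    · intro m
      filter_upwards [hd1, hd2, hd3, hd4] with s h1 h2 h3 h4
      have hb := (inner_lemma (U m) (U m) (hU_nonneg m) (hU_nonneg m) (hU_meas m) (hU_meas m)
        x t s h2.1 h1.1 h1.2 h3 (by filter_upwards [h4] with y hy using (hy m).1)
        (ae_of_all _ fun y => le_rfl)).2
      rw [Real.norm_of_nonneg (integral_nonneg fun y => mul_nonneg (hK_nonneg _ _ _)
        (mul_nonneg (hh_nonneg _ _) (hG'nonneg _)))]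
      exact hb
    · filter_upwards [hd1, hd2, hd3, hd4] with s h1 h2 h3 h4
      apply tendsto_integral_of_dominated_convergence (fun y => K x y (t - s) * (P s * G ξ))
      · intro m
        apply Measurable.aestronglyMeasurable
        have hm1 : Measurable fun y => K x y (t - s) :=
          hK_meas.comp (measurable_const.prodMk (measurable_id.prodMk measurable_const))
        have hm2 : Measurable fun y => h y s :=
          hh_meas.comp (measurable_id.prodMk measurable_const)
        have hm3 : Measurable fun y => G' (U m y s) :=
          hG'cont.measurable.comp ((hU_meas m).comp (measurable_id.prodMk measurable_const))
        exact hm1.mul (hm2.mul hm3)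
      · exact h1.1.mul_const _
      · intro m
        filter_upwards [h3, h4] with y hy1 hy2
        rw [Real.norm_of_nonneg (mul_nonneg (hK_nonneg _ _ _)
          (mul_nonneg (hh_nonneg _ _) (hG'nonneg _)))]
        apply mul_le_mul_of_nonneg_left _ (hK_nonneg x y (t - s))
        have hgg : G' (U m y s) ≤ G ξ := by
          rw [← hG'ξ]; exact hG'mono (hy2 m).1
        exact mul_le_mul hy1 hgg (hG'nonneg _) h2.1.le
      · filter_upwards [h4] with y hy
        have htd : Tendsto (fun m => U m y s) atTop (nhds (u y s)) :=
          tend_of_anti y s (fun m => (hy m).2)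
        have htd2 : Tendsto (fun m => G' (U m y s)) atTop (nhds (G' (u y s))) :=
          (hG'cont.tendsto _).comp htd
        exact (htd2.const_mul (h y s)).const_mul (K x y (t - s))
  have hset_conv : MeasurableSet {q : X × ℝ |
      Tendsto (fun m => I (U m) q) atTop (nhds (I u q))} :=
    measurableSet_tendsto_fun (fun m => hI_meas (U m) (hU_meas m)) (hI_meas u hu_meas)
  have conv_prod : ∀ᵐ q ∂π, Tendsto (fun m => I (U m) q) atTop (nhds (I u q)) :=
    (Measure.ae_prod_iff_ae_ae hset_conv).mpr conv
  -- a.e. convergence of the iterates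
  have htend : ∀ᵐ q ∂π, Tendsto (fun m => U m q.1 q.2) atTop (nhds (u q.1 q.2)) := by
    filter_upwards [hall] with q hq
    exact tend_of_anti q.1 q.2 fun m => (hq m).2
  have huξ : ∀ᵐ q ∂π, u q.1 q.2 ≤ ξ := by
    filter_upwards [htend, hall] with q h1 h2
    exact le_of_tendsto h1 (Eventually.of_forall fun m => (h2 m).1)
  have heq : ∀ᵐ q ∂π, u q.1 q.2 = g q.1 q.2 + I u q := by
    filter_upwards [conv_prod, htend] with q h1 h2
    have hL : Tendsto (fun m => U (m+1) q.1 q.2) atTop (nhds (u q.1 q.2)) :=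
      h2.comp (tendsto_add_atTop_nat 1)
    have hfe : (fun m => U (m+1) q.1 q.2) = fun m => g q.1 q.2 + I (U m) q := by
      funext m; exact hUsucc' m q
    rw [hfe] at hL
    exact tendsto_nhds_unique hL (tendsto_const_nhds.add h1)
  have hGu : ∀ y s, G (u y s) = G' (u y s) := fun y s => (hG'eq _ (hu_nonneg y s)).symm
  refine ⟨u, ?_, ?_, ?_, hU_meas, ?_, htend⟩
  · apply memLp_top_of_bound hu_meas.aestronglyMeasurable ξ
    filter_upwards [huξ] with q hq
    rw [Real.norm_of_nonneg (hu_nonneg q.1 q.2)]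
    exact hq
  · exact ae_of_all _ fun q => hu_nonneg q.1 q.2
  · filter_upwards [heq] with q hq
    simp only [hGu]
    exact hq
  · filter_upwards [hall] with q hq m
    exact ⟨hU_nonneg m q.1 q.2, (hq m).2⟩
end

section
/- Existence, substochastic case (Theorem 3.2, first part). Under the stated assumptions, there exists u ∈ L^∞(X×(0,∞)) with u ≥ 0 such that u(x,t) = g(x,t) + ∫₀ᵗ ∫_X K(x,y;t−s) h(y,s) G(u(y,s)) dμ(y) ds for a.e. x ∈ X and a.e. t > 0. Moreover u is the almost-everywhere pointwise limit of the nonincreasing sequence {u_m} of non-negative measurable functions given by u₀(x,t) := η − β + g(x,t) and u_{m+1}(x,t) := g(x,t) + ∫₀ᵗ ∫_X K(x,y;t−s) h(y,s) G(u_m(y,s)) dμ(y) ds, where β := ‖g‖_{L^∞(X×(0,∞))}. -/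
open MeasureTheory Set Filter

/-- **Existence, substochastic case (Theorem 3.2, first part).**
Under the substochastic kernel bounds `e^{-tλ₊} ≤ ∫ K ≤ e^{-tλ₋}` with
`λ₊ ≥ λ₋ > 0`, bounded `h` with `γ = ‖h‖_∞`, and the threshold `η` with
`γ G(η) = (η - β) λ₋`, there exists a non-negative `u ∈ L^∞` solving the
integral equation, obtained as the a.e. limit of the nonincreasing
iteration `U`. -/
theorem existence_substochastic
    {X : Type*} [MeasurableSpace X] (μ : Measure X) [SigmaFinite μ]
    (K : X → X → ℝ → ℝ) (g h : X → ℝ → ℝ) (G : ℝ → ℝ)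
    (lamm lamp β γ η : ℝ)
    (hlam : 0 < lamm) (hlam_le : lamm ≤ lamp)
    (hK_meas : Measurable fun q : X × X × ℝ => K q.1 q.2.1 q.2.2)
    (hK_nonneg : ∀ x y t, 0 ≤ K x y t)
    (hK_sub : ∀ᵐ x ∂μ, ∀ᵐ t ∂(volume.restrict (Ioi (0:ℝ))),
      Real.exp (-(t * lamp)) ≤ (∫ y, K x y t ∂μ) ∧
      (∫ y, K x y t ∂μ) ≤ Real.exp (-(t * lamm)))
    (hg_meas : Measurable fun q : X × ℝ => g q.1 q.2)
    (hg_nonneg : ∀ x t, 0 ≤ g x t)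
    (hg_bdd : MemLp (fun q : X × ℝ => g q.1 q.2) ⊤
      (μ.prod (volume.restrict (Ioi (0:ℝ)))))
    (hβ : β = (eLpNorm (fun q : X × ℝ => g q.1 q.2) ⊤
      (μ.prod (volume.restrict (Ioi (0:ℝ))))).toReal)
    (hh_meas : Measurable fun q : X × ℝ => h q.1 q.2)
    (hh_nonneg : ∀ x t, 0 ≤ h x t)
    (hh_bdd : MemLp (fun q : X × ℝ => h q.1 q.2) ⊤
      (μ.prod (volume.restrict (Ioi (0:ℝ)))))
    (hγ : γ = (eLpNorm (fun q : X × ℝ => h q.1 q.2) ⊤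
      (μ.prod (volume.restrict (Ioi (0:ℝ))))).toReal)
    (hG_cont : ContinuousOn G (Ici 0))
    (hG_zero : G 0 = 0)
    (hG_nonneg : ∀ u, 0 ≤ u → 0 ≤ G u)
    (hG_mono : StrictMonoOn G (Ici 0))
    (hG_conc : ConcaveOn ℝ (Ici 0) G)
    (hη_pos : 0 < η) (hη_eq : γ * G η = (η - β) * lamm)
    (U : ℕ → X → ℝ → ℝ)
    (hU0 : ∀ x t, U 0 x t = η - β + g x t)
    (hUsucc : ∀ m x t, U (m + 1) x t =
      g x t + ∫ s in Ioc (0:ℝ) t, ∫ y, K x y (t - s) * (h y s * G (U m y s)) ∂μ) :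
    ∃ u : X → ℝ → ℝ,
      MemLp (fun q : X × ℝ => u q.1 q.2) ⊤ (μ.prod (volume.restrict (Ioi (0:ℝ)))) ∧
      (∀ᵐ q ∂(μ.prod (volume.restrict (Ioi (0:ℝ)))), 0 ≤ u q.1 q.2) ∧
      (∀ᵐ q ∂(μ.prod (volume.restrict (Ioi (0:ℝ)))),
        u q.1 q.2 = g q.1 q.2 +
          ∫ s in Ioc (0:ℝ) q.2, ∫ y, K q.1 y (q.2 - s) * (h y s * G (u y s)) ∂μ) ∧
      (∀ m, Measurable fun q : X × ℝ => U m q.1 q.2) ∧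
      (∀ᵐ q ∂(μ.prod (volume.restrict (Ioi (0:ℝ)))),
        ∀ m, 0 ≤ U m q.1 q.2 ∧ U (m + 1) q.1 q.2 ≤ U m q.1 q.2) ∧
      (∀ᵐ q ∂(μ.prod (volume.restrict (Ioi (0:ℝ)))),
        Tendsto (fun m => U m q.1 q.2) atTop (nhds (u q.1 q.2))) := by
  classical
  set ν : Measure ℝ := volume.restrict (Ioi (0:ℝ)) with hν
  -- basic constants
  have hβ0 : 0 ≤ β := hβ ▸ ENNReal.toReal_nonneg
  have hγ0 : 0 ≤ γ := hγ ▸ ENNReal.toReal_nonneg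
  have hGη0 : 0 ≤ G η := hG_nonneg η hη_pos.le
  have hηβ : β ≤ η := by nlinarith [mul_nonneg hγ0 hGη0]
  obtain ⟨C, hCdef⟩ : ∃ C : ℝ, C = γ * G η := ⟨_, rfl⟩
  have hC0 : 0 ≤ C := hCdef ▸ mul_nonneg hγ0 hGη0
  have hCle : C / lamm = η - β := by
    rw [hCdef, hη_eq, mul_div_assoc, div_self hlam.ne', mul_one]
  -- the truncated nonlinearity
  set G' : ℝ → ℝ := fun x => G (max x 0) with hG'def
  have hG'cont : Continuous G' := by
    apply hG_cont.comp_continuous (continuous_id.max continuous_const)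
    intro x; exact le_max_right x 0
  have hG'meas : Measurable G' := hG'cont.measurable
  have hG'eq : ∀ x : ℝ, 0 ≤ x → G' x = G x := fun x hx => by
    simp [hG'def, max_eq_left hx]
  have hG'nonneg : ∀ x : ℝ, 0 ≤ G' x := fun x => hG_nonneg _ (le_max_right _ _)
  have hG'mono : Monotone G' := fun a b hab =>
    hG_mono.monotoneOn (le_max_right a 0) (le_max_right b 0) (max_le_max hab le_rfl)
  have hG'le : ∀ x : ℝ, x ≤ η → G' x ≤ G η := fun x hx => by
    calc G' x ≤ G' η := hG'mono hx
      _ = G η := hG'eq η hη_pos.le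
  -- pointwise facts about the iteration
  have hUnn : ∀ m x t, 0 ≤ U m x t := by
    intro m
    induction m with
    | zero => intro x t; rw [hU0]; have := hg_nonneg x t; linarith
    | succ m ih =>
      intro x t; rw [hUsucc]
      have h1 : 0 ≤ ∫ s in Ioc (0:ℝ) t, ∫ y, K x y (t - s) * (h y s * G (U m y s)) ∂μ :=
        setIntegral_nonneg measurableSet_Ioc fun s _ =>
          integral_nonneg fun y => mul_nonneg (hK_nonneg _ _ _)
            (mul_nonneg (hh_nonneg _ _) (hG_nonneg _ (ih y s)))
      have := hg_nonneg x t; linarith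
  have hGU : ∀ m y s, G (U m y s) = G' (U m y s) := fun m y s => (hG'eq _ (hUnn m y s)).symm
  have hUsucc' : ∀ m x t, U (m + 1) x t =
      g x t + ∫ s in Ioc (0:ℝ) t, ∫ y, K x y (t - s) * (h y s * G' (U m y s)) ∂μ := by
    intro m x t; rw [hUsucc]; simp only [hGU]
  -- measurability machinery
  have meas_inner : ∀ (v : X → ℝ → ℝ), Measurable (fun q : X × ℝ => v q.1 q.2) →
      Measurable (fun p : (X × ℝ) × ℝ =>
        ∫ y, K p.1.1 y (p.1.2 - p.2) * (h y p.2 * G' (v y p.2)) ∂μ) := by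
    intro v hv
    have h1 : Measurable (fun r : ((X × ℝ) × ℝ) × X =>
        K r.1.1.1 r.2 (r.1.1.2 - r.1.2) * (h r.2 r.1.2 * G' (v r.2 r.1.2))) := by
      have m1 : Measurable (fun r : ((X × ℝ) × ℝ) × X => (r.1.1.1, r.2, r.1.1.2 - r.1.2)) := by
        fun_prop
      have m2 : Measurable (fun r : ((X × ℝ) × ℝ) × X => (r.2, r.1.2)) := by fun_prop
      exact (hK_meas.comp m1).mul ((hh_meas.comp m2).mul (hG'meas.comp (hv.comp m2)))
    exact h1.stronglyMeasurable.integral_prod_right'.measurable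
  have meas_slice : ∀ (v : X → ℝ → ℝ), Measurable (fun q : X × ℝ => v q.1 q.2) →
      ∀ (x : X) (τ s : ℝ), Measurable (fun y => K x y τ * (h y s * G' (v y s))) := by
    intro v hv x τ s
    have m1 : Measurable (fun y : X => (x, y, τ)) := by fun_prop
    have m2 : Measurable (fun y : X => (y, s)) := by fun_prop
    exact (hK_meas.comp m1).mul ((hh_meas.comp m2).mul (hG'meas.comp (hv.comp m2)))
  have meas_I : ∀ (v : X → ℝ → ℝ), Measurable (fun q : X × ℝ => v q.1 q.2) →
      Measurable (fun q : X × ℝ =>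
        ∫ s in Ioc (0:ℝ) q.2, ∫ y, K q.1 y (q.2 - s) * (h y s * G' (v y s)) ∂μ) := by
    intro v hv
    have hJ := meas_inner v hv
    have hset : MeasurableSet {p : (X × ℝ) × ℝ | p.2 ∈ Ioc 0 p.1.2} := by
      have : {p : (X × ℝ) × ℝ | p.2 ∈ Ioc 0 p.1.2}
          = {p : (X × ℝ) × ℝ | 0 < p.2} ∩ {p : (X × ℝ) × ℝ | p.2 ≤ p.1.2} := by
        ext p; simp [mem_Ioc]
      rw [this]
      exact (measurableSet_lt measurable_const measurable_snd).inter
        (measurableSet_le measurable_snd (measurable_fst.snd))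
    have hind : Measurable (fun p : (X × ℝ) × ℝ =>
        ({p : (X × ℝ) × ℝ | p.2 ∈ Ioc 0 p.1.2}).indicator
          (fun p => ∫ y, K p.1.1 y (p.1.2 - p.2) * (h y p.2 * G' (v y p.2)) ∂μ) p) :=
      hJ.indicator hset
    have key : (fun q : X × ℝ =>
        ∫ s in Ioc (0:ℝ) q.2, ∫ y, K q.1 y (q.2 - s) * (h y s * G' (v y s)) ∂μ)
        = fun q : X × ℝ => ∫ s, ({p : (X × ℝ) × ℝ | p.2 ∈ Ioc 0 p.1.2}).indicator
          (fun p => ∫ y, K p.1.1 y (p.1.2 - p.2) * (h y p.2 * G' (v y p.2)) ∂μ) (q, s) := by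
      funext q
      rw [← integral_indicator measurableSet_Ioc]
      congr 1
    rw [key]
    exact hind.stronglyMeasurable.integral_prod_right'.measurable
  have measU : ∀ m, Measurable fun q : X × ℝ => U m q.1 q.2 := by
    intro m
    induction m with
    | zero =>
      simp only [hU0]
      exact measurable_const.add hg_meas
    | succ m ih =>
      simp only [hUsucc']
      exact hg_meas.add (meas_I (U m) ih)
  -- essential sup bounds
  have hgβ : ∀ᵐ q ∂(μ.prod ν), g q.1 q.2 ≤ β := by
    have hfin : eLpNormEssSup (fun q : X × ℝ => g q.1 q.2) (μ.prod ν) ≠ ⊤ := by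
      rw [← eLpNorm_exponent_top]; exact hg_bdd.2.ne
    filter_upwards [ae_le_eLpNormEssSup (f := fun q : X × ℝ => g q.1 q.2) (μ := μ.prod ν)]
      with q hq
    have h1 := ENNReal.toReal_mono hfin hq
    have h2 : ‖g q.1 q.2‖ ≤ (eLpNormEssSup (fun q : X × ℝ => g q.1 q.2) (μ.prod ν)).toReal := by
      simpa using h1
    rw [hβ, eLpNorm_exponent_top]
    calc g q.1 q.2 ≤ ‖g q.1 q.2‖ := by rw [Real.norm_eq_abs]; exact le_abs_self _
      _ ≤ _ := h2
  have hhγ : ∀ᵐ q ∂(μ.prod ν), h q.1 q.2 ≤ γ := by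
    have hfin : eLpNormEssSup (fun q : X × ℝ => h q.1 q.2) (μ.prod ν) ≠ ⊤ := by
      rw [← eLpNorm_exponent_top]; exact hh_bdd.2.ne
    filter_upwards [ae_le_eLpNormEssSup (f := fun q : X × ℝ => h q.1 q.2) (μ := μ.prod ν)]
      with q hq
    have h1 := ENNReal.toReal_mono hfin hq
    have h2 : ‖h q.1 q.2‖ ≤ (eLpNormEssSup (fun q : X × ℝ => h q.1 q.2) (μ.prod ν)).toReal := by
      simpa using h1
    rw [hγ, eLpNorm_exponent_top]
    calc h q.1 q.2 ≤ ‖h q.1 q.2‖ := by rw [Real.norm_eq_abs]; exact le_abs_self _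
      _ ≤ _ := h2
  -- kernel integrability
  have hKint : ∀ᵐ x ∂μ, ∀ᵐ t ∂(volume : Measure ℝ), 0 < t →
      (Integrable (fun y => K x y t) μ ∧ (∫ y, K x y t ∂μ) ≤ Real.exp (-(t * lamm))) := by
    filter_upwards [hK_sub] with x hx
    rw [hν, ae_restrict_iff' measurableSet_Ioi] at hx
    filter_upwards [hx] with t ht htpos
    obtain ⟨h1, h2⟩ := ht htpos
    refine ⟨?_, h2⟩
    by_contra hni
    rw [integral_undef hni] at h1
    exact (Real.exp_pos _).not_ge h1
  -- slicing helpers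
  have swap_ae : ∀ (p : X → ℝ → Prop), (∀ᵐ q ∂(μ.prod ν), p q.1 q.2) →
      ∀ᵐ s ∂ν, ∀ᵐ y ∂μ, p y s := by
    intro p hp
    have h1 : ∀ᵐ r ∂(ν.prod μ), p r.2 r.1 :=
      (Measure.measurePreserving_swap (μ := ν) (ν := μ)).quasiMeasurePreserving.ae hp
    exact Measure.ae_ae_of_ae_prod h1
  have hslice : ∀ (p : X → ℝ → Prop), (∀ᵐ q ∂(μ.prod ν), p q.1 q.2) →
      ∀ (t : ℝ), ∀ᵐ s ∂(volume.restrict (Ioc (0:ℝ) t)), ∀ᵐ y ∂μ, p y s := by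
    intro p hp t
    have h1 : ∀ᵐ s ∂ν, ∀ᵐ y ∂μ, p y s := swap_ae p hp
    rw [hν, ae_restrict_iff' measurableSet_Ioi] at h1
    filter_upwards [ae_restrict_of_ae h1, ae_restrict_mem measurableSet_Ioc] with s hs hmem
    exact hs hmem.1
  have hKslice : ∀ᵐ x ∂μ, ∀ (t : ℝ), ∀ᵐ s ∂(volume.restrict (Ioc (0:ℝ) t)),
      Integrable (fun y => K x y (t - s)) μ ∧
      (∫ y, K x y (t - s) ∂μ) ≤ Real.exp (-((t - s) * lamm)) := by
    filter_upwards [hKint] with x hx t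
    have h2 : ∀ᵐ s ∂(volume : Measure ℝ), 0 < t - s →
        (Integrable (fun y => K x y (t - s)) μ ∧
          (∫ y, K x y (t - s) ∂μ) ≤ Real.exp (-((t - s) * lamm))) :=
      (Measure.measurePreserving_sub_left volume t).quasiMeasurePreserving.ae hx
    have h3 : ∀ᵐ s ∂(volume : Measure ℝ), s ≠ t := by
      rw [ae_iff]
      simp [Set.setOf_eq_eq_singleton', measure_singleton]
    filter_upwards [ae_restrict_of_ae h2, ae_restrict_of_ae h3,
      ae_restrict_mem measurableSet_Ioc] with s hs hne hmem
    exact hs (sub_pos.2 (lt_of_le_of_ne hmem.2 hne))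
  -- inner integral estimates
  have inner_pack : ∀ (v : X → ℝ → ℝ), Measurable (fun q : X × ℝ => v q.1 q.2) →
      ∀ (x : X) (τ s : ℝ), Integrable (fun y => K x y τ) μ →
      (∀ᵐ y ∂μ, h y s ≤ γ ∧ v y s ≤ η) →
      Integrable (fun y => K x y τ * (h y s * G' (v y s))) μ ∧
      (∫ y, K x y τ * (h y s * G' (v y s)) ∂μ) ≤ (∫ y, K x y τ ∂μ) * C := by
    intro v hv x τ s hK hae
    have hKC : Integrable (fun y => K x y τ * C) μ := hK.mul_const C
    have hle : ∀ᵐ y ∂μ, K x y τ * (h y s * G' (v y s)) ≤ K x y τ * C := by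
      filter_upwards [hae] with y hy
      refine mul_le_mul_of_nonneg_left ?_ (hK_nonneg _ _ _)
      rw [hCdef]
      exact mul_le_mul hy.1 (hG'le _ hy.2) (hG'nonneg _) hγ0
    have hint : Integrable (fun y => K x y τ * (h y s * G' (v y s))) μ := by
      refine hKC.mono' (meas_slice v hv x τ s).aestronglyMeasurable ?_
      filter_upwards [hle] with y hy
      rw [Real.norm_eq_abs, abs_of_nonneg (mul_nonneg (hK_nonneg _ _ _)
        (mul_nonneg (hh_nonneg _ _) (hG'nonneg _)))]
      exact hy
    refine ⟨hint, ?_⟩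
    calc (∫ y, K x y τ * (h y s * G' (v y s)) ∂μ) ≤ ∫ y, K x y τ * C ∂μ :=
        integral_mono_ae hint hKC hle
      _ = (∫ y, K x y τ ∂μ) * C := integral_mul_const C _
  have inner_mono : ∀ (v w : X → ℝ → ℝ), Measurable (fun q : X × ℝ => v q.1 q.2) →
      Measurable (fun q : X × ℝ => w q.1 q.2) →
      ∀ (x : X) (τ s : ℝ), Integrable (fun y => K x y τ) μ →
      (∀ᵐ y ∂μ, h y s ≤ γ ∧ w y s ≤ η ∧ v y s ≤ w y s) →
      (∫ y, K x y τ * (h y s * G' (v y s)) ∂μ)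
        ≤ ∫ y, K x y τ * (h y s * G' (w y s)) ∂μ := by
    intro v w hv hw x τ s hK hae
    have hw' : ∀ᵐ y ∂μ, h y s ≤ γ ∧ w y s ≤ η := by
      filter_upwards [hae] with y hy; exact ⟨hy.1, hy.2.1⟩
    have hintw := (inner_pack w hw x τ s hK hw').1
    have hle : ∀ᵐ y ∂μ, K x y τ * (h y s * G' (v y s)) ≤ K x y τ * (h y s * G' (w y s)) := by
      filter_upwards [hae] with y hy
      exact mul_le_mul_of_nonneg_left
        (mul_le_mul_of_nonneg_left (hG'mono hy.2.2) (hh_nonneg _ _)) (hK_nonneg _ _ _)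
    have hintv : Integrable (fun y => K x y τ * (h y s * G' (v y s))) μ := by
      refine hintw.mono' (meas_slice v hv x τ s).aestronglyMeasurable ?_
      filter_upwards [hle] with y hy
      rw [Real.norm_eq_abs, abs_of_nonneg (mul_nonneg (hK_nonneg _ _ _)
        (mul_nonneg (hh_nonneg _ _) (hG'nonneg _)))]
      exact hy
    exact integral_mono_ae hintv hintw hle
  -- the exponential integral bound
  have exp_integral : ∀ t : ℝ, 0 < t →
      (∫ s in Ioc (0:ℝ) t, Real.exp (-((t - s) * lamm))) ≤ 1 / lamm := by
    intro t ht
    have h0 : (∫ s in Ioc (0:ℝ) t, Real.exp (-((t - s) * lamm)))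
        = ∫ s in (0:ℝ)..t, Real.exp (-((t - s) * lamm)) :=
      (intervalIntegral.integral_of_le ht.le).symm
    have h1 : (∫ s in (0:ℝ)..t, Real.exp (-((t - s) * lamm)))
        = ∫ τ in (0:ℝ)..t, Real.exp (-(τ * lamm)) := by
      have := intervalIntegral.integral_comp_sub_left
        (a := (0:ℝ)) (b := t) (fun τ => Real.exp (-(τ * lamm))) t
      simpa using this
    have h2 : (∫ τ in (0:ℝ)..t, Real.exp (-(τ * lamm)))
        = (1 - Real.exp (-(t * lamm))) / lamm := by
      have hder : ∀ τ : ℝ, HasDerivAt (fun τ => -Real.exp (-(τ * lamm)) / lamm)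
          (Real.exp (-(τ * lamm))) τ := by
        intro τ
        have h1 : HasDerivAt (fun τ : ℝ => -(τ * lamm)) (-lamm) τ :=
          (hasDerivAt_mul_const lamm).neg
        have h3 := h1.exp.neg.div_const lamm
        refine HasDerivAt.congr_deriv h3 ?_
        field_simp
      have hint : IntervalIntegrable (fun τ => Real.exp (-(τ * lamm))) volume 0 t :=
        Continuous.intervalIntegrable (by fun_prop) 0 t
      rw [intervalIntegral.integral_eq_sub_of_hasDerivAt (fun τ _ => hder τ) hint]
      rw [zero_mul, neg_zero, Real.exp_zero]
      ring
    rw [h0, h1, h2]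
    have hexp : 0 ≤ Real.exp (-(t * lamm)) := (Real.exp_pos _).le
    gcongr
    linarith
  -- outer integral estimates
  have outer_pack : ∀ (v : X → ℝ → ℝ), Measurable (fun q : X × ℝ => v q.1 q.2) →
      ∀ (x : X) (t : ℝ), 0 < t →
      (∀ᵐ s ∂(volume.restrict (Ioc (0:ℝ) t)),
        (∫ y, K x y (t - s) * (h y s * G' (v y s)) ∂μ)
          ≤ C * Real.exp (-((t - s) * lamm))) →
      IntegrableOn (fun s => ∫ y, K x y (t - s) * (h y s * G' (v y s)) ∂μ) (Ioc 0 t) volume ∧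
      (∫ s in Ioc (0:ℝ) t, ∫ y, K x y (t - s) * (h y s * G' (v y s)) ∂μ) ≤ η - β := by
    intro v hv x t ht hbd
    have hFmeas : Measurable (fun s => ∫ y, K x y (t - s) * (h y s * G' (v y s)) ∂μ) := by
      have h5 : Measurable (fun s : ℝ => ((x, t), s)) := by fun_prop
      exact (meas_inner v hv).comp h5
    have hFnn : ∀ s, 0 ≤ ∫ y, K x y (t - s) * (h y s * G' (v y s)) ∂μ := fun s =>
      integral_nonneg fun y => mul_nonneg (hK_nonneg _ _ _)
        (mul_nonneg (hh_nonneg _ _) (hG'nonneg _))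
    have hexp_cont : Continuous fun s : ℝ => C * Real.exp (-((t - s) * lamm)) := by fun_prop
    have hexp_int : IntegrableOn (fun s : ℝ => C * Real.exp (-((t - s) * lamm)))
        (Ioc 0 t) volume := hexp_cont.integrableOn_Ioc
    have hFint : IntegrableOn (fun s => ∫ y, K x y (t - s) * (h y s * G' (v y s)) ∂μ)
        (Ioc 0 t) volume := by
      refine hexp_int.mono' hFmeas.aestronglyMeasurable ?_
      filter_upwards [hbd] with s hs
      rw [Real.norm_eq_abs, abs_of_nonneg (hFnn s)]
      exact hs
    refine ⟨hFint, ?_⟩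
    calc (∫ s in Ioc (0:ℝ) t, ∫ y, K x y (t - s) * (h y s * G' (v y s)) ∂μ)
        ≤ ∫ s in Ioc (0:ℝ) t, C * Real.exp (-((t - s) * lamm)) :=
          integral_mono_ae hFint hexp_int hbd
      _ = C * ∫ s in Ioc (0:ℝ) t, Real.exp (-((t - s) * lamm)) := integral_const_mul C _
      _ ≤ C * (1 / lamm) := mul_le_mul_of_nonneg_left (exp_integral t ht) hC0
      _ = η - β := by rw [mul_one_div, hCle]
  -- a.e. slice bound for the inner integral
  have slice_bd : ∀ (v : X → ℝ → ℝ), Measurable (fun q : X × ℝ => v q.1 q.2) →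
      (∀ᵐ q ∂(μ.prod ν), v q.1 q.2 ≤ η) →
      ∀ᵐ x ∂μ, ∀ (t : ℝ), ∀ᵐ s ∂(volume.restrict (Ioc (0:ℝ) t)),
        (∫ y, K x y (t - s) * (h y s * G' (v y s)) ∂μ)
          ≤ C * Real.exp (-((t - s) * lamm)) := by
    intro v hv hvη
    have hs2 := hslice (fun y s => h y s ≤ γ ∧ v y s ≤ η)
      (by filter_upwards [hhγ, hvη] with q h1 h2; exact ⟨h1, h2⟩)
    filter_upwards [hKslice] with x hx t
    filter_upwards [hx t, hs2 t] with s h1 h2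
    calc (∫ y, K x y (t - s) * (h y s * G' (v y s)) ∂μ)
        ≤ (∫ y, K x y (t - s) ∂μ) * C := (inner_pack v hv x (t - s) s h1.1 h2).2
      _ ≤ Real.exp (-((t - s) * lamm)) * C := mul_le_mul_of_nonneg_right h1.2 hC0
      _ = C * Real.exp (-((t - s) * lamm)) := mul_comm _ _
  have hpos : ∀ᵐ t ∂ν, 0 < t := by
    rw [hν]; exact ae_restrict_mem measurableSet_Ioi
  -- bound on the integral operator
  have Ibound : ∀ (v : X → ℝ → ℝ), Measurable (fun q : X × ℝ => v q.1 q.2) →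
      (∀ᵐ q ∂(μ.prod ν), v q.1 q.2 ≤ η) →
      ∀ᵐ x ∂μ, ∀ᵐ t ∂ν,
        (∫ s in Ioc (0:ℝ) t, ∫ y, K x y (t - s) * (h y s * G' (v y s)) ∂μ) ≤ η - β := by
    intro v hv hvη
    filter_upwards [slice_bd v hv hvη] with x hx
    filter_upwards [hpos] with t ht
    exact (outer_pack v hv x t ht (hx t)).2
  -- monotonicity of the integral operator
  have Imono : ∀ (v w : X → ℝ → ℝ), Measurable (fun q : X × ℝ => v q.1 q.2) →
      Measurable (fun q : X × ℝ => w q.1 q.2) →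
      (∀ᵐ q ∂(μ.prod ν), w q.1 q.2 ≤ η) → (∀ᵐ q ∂(μ.prod ν), v q.1 q.2 ≤ η) →
      (∀ᵐ q ∂(μ.prod ν), v q.1 q.2 ≤ w q.1 q.2) →
      ∀ᵐ x ∂μ, ∀ᵐ t ∂ν,
        (∫ s in Ioc (0:ℝ) t, ∫ y, K x y (t - s) * (h y s * G' (v y s)) ∂μ)
          ≤ ∫ s in Ioc (0:ℝ) t, ∫ y, K x y (t - s) * (h y s * G' (w y s)) ∂μ := by
    intro v w hv hw hwη hvη hvw
    have hs1 := hslice (fun y s => h y s ≤ γ ∧ w y s ≤ η ∧ v y s ≤ w y s)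
      (by filter_upwards [hhγ, hwη, hvw] with q h1 h2 h3; exact ⟨h1, h2, h3⟩)
    filter_upwards [hKslice, slice_bd v hv hvη, slice_bd w hw hwη] with x hx hbv hbw
    filter_upwards [hpos] with t ht
    have hintv := (outer_pack v hv x t ht (hbv t)).1
    have hintw := (outer_pack w hw x t ht (hbw t)).1
    refine integral_mono_ae hintv hintw ?_
    filter_upwards [hx t, hs1 t] with s h1 h2
    exact inner_mono v w hv hw x (t - s) s h1.1 h2
  -- the main induction: bounds and monotonicity a.e.
  have main : ∀ m, (∀ᵐ q ∂(μ.prod ν), U m q.1 q.2 ≤ η) ∧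
      (∀ᵐ q ∂(μ.prod ν), U (m + 1) q.1 q.2 ≤ U m q.1 q.2) := by
    intro m
    induction m with
    | zero =>
      have B0 : ∀ᵐ q ∂(μ.prod ν), U 0 q.1 q.2 ≤ η := by
        filter_upwards [hgβ] with q hq; rw [hU0]; linarith
      refine ⟨B0, ?_⟩
      have hM0 : ∀ᵐ x ∂μ, ∀ᵐ t ∂ν, U 1 x t ≤ U 0 x t := by
        filter_upwards [Ibound (U 0) (measU 0) B0] with x hx
        filter_upwards [hx] with t ht
        rw [hUsucc' 0 x t, hU0]
        linarith
      exact (Measure.ae_prod_iff_ae_ae (measurableSet_le (measU 1) (measU 0))).2 hM0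
    | succ m ih =>
      obtain ⟨Bm, Mm⟩ := ih
      have Bm1 : ∀ᵐ q ∂(μ.prod ν), U (m + 1) q.1 q.2 ≤ η := by
        filter_upwards [Bm, Mm] with q h1 h2; linarith
      refine ⟨Bm1, ?_⟩
      have hM : ∀ᵐ x ∂μ, ∀ᵐ t ∂ν, U (m + 2) x t ≤ U (m + 1) x t := by
        filter_upwards [Imono (U (m + 1)) (U m) (measU (m + 1)) (measU m) Bm Bm1 Mm] with x hx
        filter_upwards [hx] with t ht
        rw [hUsucc' (m + 1) x t, hUsucc' m x t]
        linarith
      exact (Measure.ae_prod_iff_ae_ae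
        (measurableSet_le (measU (m + 2)) (measU (m + 1)))).2 hM
  have hB : ∀ᵐ q ∂(μ.prod ν), ∀ m, U m q.1 q.2 ≤ η := ae_all_iff.2 fun m => (main m).1
  have hM : ∀ᵐ q ∂(μ.prod ν), ∀ m, U (m + 1) q.1 q.2 ≤ U m q.1 q.2 :=
    ae_all_iff.2 fun m => (main m).2
  -- the limit function
  set u : X → ℝ → ℝ := fun x t => ⨅ m, U m x t with hudef
  have hu_meas : Measurable (fun q : X × ℝ => u q.1 q.2) := Measurable.iInf fun m => measU m
  have hbdd : ∀ x t, BddBelow (range fun m => U m x t) := fun x t =>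
    ⟨0, by rintro _ ⟨m, rfl⟩; exact hUnn m x t⟩
  have hu_nonneg : ∀ x t, 0 ≤ u x t := fun x t => le_ciInf fun m => hUnn m x t
  have hu_le : ∀ m x t, u x t ≤ U m x t := fun m x t => ciInf_le (hbdd x t) m
  have htendsto : ∀ x t, (∀ m, U (m + 1) x t ≤ U m x t) →
      Tendsto (fun m => U m x t) atTop (nhds (u x t)) := fun x t hmono =>
    tendsto_atTop_ciInf (antitone_nat_of_succ_le hmono) (hbdd x t)
  have hconv : ∀ᵐ q ∂(μ.prod ν), Tendsto (fun m => U m q.1 q.2) atTop (nhds (u q.1 q.2)) := by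
    filter_upwards [hM] with q hq
    exact htendsto q.1 q.2 hq
  have hu_mem : MemLp (fun q : X × ℝ => u q.1 q.2) ⊤ (μ.prod ν) := by
    refine memLp_top_of_bound hu_meas.aestronglyMeasurable η ?_
    filter_upwards [hB] with q hq
    rw [Real.norm_eq_abs, abs_of_nonneg (hu_nonneg _ _)]
    exact (hu_le 0 q.1 q.2).trans (hq 0)
  -- the integral equation for u
  have hs_conv : ∀ (t : ℝ), ∀ᵐ s ∂(volume.restrict (Ioc (0:ℝ) t)), ∀ᵐ y ∂μ,
      h y s ≤ γ ∧ (∀ m, U m y s ≤ η) ∧ (∀ m, U (m + 1) y s ≤ U m y s) :=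
    hslice _ (by filter_upwards [hhγ, hB, hM] with q h1 h2 h3; exact ⟨h1, h2, h3⟩)
  have hEq : ∀ᵐ x ∂μ, ∀ᵐ t ∂ν,
      u x t = g x t + ∫ s in Ioc (0:ℝ) t, ∫ y, K x y (t - s) * (h y s * G' (u y s)) ∂μ := by
    filter_upwards [hKslice, Measure.ae_ae_of_ae_prod hM,
      ae_all_iff.2 (fun m => slice_bd (U m) (measU m) (main m).1)] with x hKx hMx hbdx
    filter_upwards [hMx, hpos] with t hMt htpos
    have hL : Tendsto (fun m => U (m + 1) x t) atTop (nhds (u x t)) :=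
      (htendsto x t hMt).comp (tendsto_add_atTop_nat 1)
    have hRtend : Tendsto
        (fun m => ∫ s in Ioc (0:ℝ) t, ∫ y, K x y (t - s) * (h y s * G' (U m y s)) ∂μ)
        atTop (nhds (∫ s in Ioc (0:ℝ) t, ∫ y, K x y (t - s) * (h y s * G' (u y s)) ∂μ)) := by
      apply tendsto_integral_of_dominated_convergence (bound := fun _ => C)
      · intro m
        have h5 : Measurable (fun s : ℝ => ((x, t), s)) := by fun_prop
        exact ((meas_inner (U m) (measU m)).comp h5).aestronglyMeasurable
      · refine integrableOn_const ?_
        rw [Real.volume_Ioc]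
        exact ENNReal.ofReal_ne_top
      · intro m
        filter_upwards [hbdx m t, ae_restrict_mem measurableSet_Ioc] with s hs hmem
        rw [Real.norm_eq_abs, abs_of_nonneg (integral_nonneg fun y => mul_nonneg
          (hK_nonneg _ _ _) (mul_nonneg (hh_nonneg _ _) (hG'nonneg _)))]
        calc (∫ y, K x y (t - s) * (h y s * G' (U m y s)) ∂μ)
            ≤ C * Real.exp (-((t - s) * lamm)) := hs
          _ ≤ C * 1 := by
              refine mul_le_mul_of_nonneg_left ?_ hC0
              rw [Real.exp_le_one_iff]
              have : 0 ≤ (t - s) * lamm := mul_nonneg (by linarith [hmem.2]) hlam.le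
              linarith
          _ = C := mul_one C
      · filter_upwards [hKx t, hs_conv t] with s h1 h2
        apply tendsto_integral_of_dominated_convergence (bound := fun y => K x y (t - s) * C)
        · intro m
          exact (meas_slice (U m) (measU m) x (t - s) s).aestronglyMeasurable
        · exact h1.1.mul_const C
        · intro m
          filter_upwards [h2] with y hy
          rw [Real.norm_eq_abs, abs_of_nonneg (mul_nonneg (hK_nonneg _ _ _)
            (mul_nonneg (hh_nonneg _ _) (hG'nonneg _)))]
          refine mul_le_mul_of_nonneg_left ?_ (hK_nonneg _ _ _)
          rw [hCdef]
          exact mul_le_mul hy.1 (hG'le _ (hy.2.1 m)) (hG'nonneg _) hγ0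
        · filter_upwards [h2] with y hy
          have hy_t : Tendsto (fun m => U m y s) atTop (nhds (u y s)) := htendsto y s hy.2.2
          have hGt : Tendsto (fun m => G' (U m y s)) atTop (nhds (G' (u y s))) :=
            (hG'cont.tendsto _).comp hy_t
          exact (hGt.const_mul (h y s)).const_mul (K x y (t - s))
    have hR : Tendsto (fun m => U (m + 1) x t) atTop
        (nhds (g x t + ∫ s in Ioc (0:ℝ) t, ∫ y, K x y (t - s) * (h y s * G' (u y s)) ∂μ)) := by
      simp only [hUsucc']
      exact hRtend.const_add (g x t)
    exact tendsto_nhds_unique hL hR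
  have hEq' : ∀ᵐ q ∂(μ.prod ν), u q.1 q.2 = g q.1 q.2 +
      ∫ s in Ioc (0:ℝ) q.2, ∫ y, K q.1 y (q.2 - s) * (h y s * G' (u y s)) ∂μ := by
    refine (Measure.ae_prod_iff_ae_ae ?_).2 hEq
    exact measurableSet_eq_fun hu_meas (hg_meas.add (meas_I u hu_meas))
  have hG'u : ∀ y s, G' (u y s) = G (u y s) := fun y s => hG'eq _ (hu_nonneg y s)
  refine ⟨u, hu_mem, ?_, ?_, measU, ?_, hconv⟩
  · exact Eventually.of_forall fun q => hu_nonneg q.1 q.2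
  · filter_upwards [hEq'] with q hq
    simp only [hG'u] at hq
    exact hq
  · filter_upwards [hM] with q hq m
    exact ⟨hUnn m q.1 q.2, hq m⟩
end

section
/- Existence with relaxed data, stochastic case (Corollary 3.3). Under the stated assumptions, there exists v ∈ L^∞(X×(0,∞)) with v ≥ 0 such that v(x,t) = g̃(x,t) + ∫₀ᵗ ∫_X K(x,y;t−s) h(y,s) G̃(v(y,s)) dμ(y) ds for a.e. x ∈ X and a.e. t > 0; v is the uniform limit of the nonincreasing sequence {v_m} of non-negative measurable functions defined by v₀(x,t) := ξ̃ − β̃ + g̃(x,t) and v_{m+1}(x,t) := g̃(x,t) + ∫₀ᵗ ∫_X K(x,y;t−s) h(y,s) G̃(v_m(y,s)) dμ(y) ds, where β̃ := ‖g̃‖_{L^∞}; and there exist C > 0 and k ∈ (0,1) with 0 ≤ v_{m+1}(x,t) − v(x,t) ≤ C k^m for a.e. x ∈ X, a.e. t > 0 and all m ∈ ℕ. -/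
open MeasureTheory Set Filter

open Topology
open scoped ENNReal NNReal

namespace CorStoch

theorem aeSwap {A B : Type*} [MeasurableSpace A] [MeasurableSpace B]
    {μ : Measure A} {ν : Measure B} [SigmaFinite μ] [SigmaFinite ν]
    {S : Set (A × B)} (hS : MeasurableSet S) (hae : ∀ᵐ q ∂(μ.prod ν), q ∈ S) :
    ∀ᵐ s ∂ν, ∀ᵐ x ∂μ, (x, s) ∈ S := by
  rw [← Measure.prod_swap] at hae
  have h2 : ∀ᵐ z ∂(ν.prod μ), Prod.swap z ∈ S :=
    (ae_map_iff measurable_swap.aemeasurable hS).1 hae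
  exact Measure.ae_ae_of_ae_prod h2

variable {X : Type*} [MeasurableSpace X]

noncomputable def TT (K : X → X → ℝ → ℝ) (μ : Measure X) (W : X → ℝ → ℝ) (x : X) (t : ℝ) : ℝ :=
  ∫ s in Ioc (0:ℝ) t, ∫ y, K x y (t - s) * W y s ∂μ

theorem TT_nonneg {K : X → X → ℝ → ℝ} {μ : Measure X} {W : X → ℝ → ℝ}
    (hK : ∀ x y t, 0 ≤ K x y t) (hW : ∀ y s, 0 ≤ W y s) (x : X) (t : ℝ) :
    0 ≤ TT K μ W x t :=
  integral_nonneg fun _ => integral_nonneg fun _ => mul_nonneg (hK _ _ _) (hW _ _)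

theorem TT_const_mul {K : X → X → ℝ → ℝ} {μ : Measure X} (W : X → ℝ → ℝ) (c : ℝ) (x : X) (t : ℝ) :
    TT K μ (fun y s => c * W y s) x t = c * TT K μ W x t := by
  unfold TT
  have h1 : ∀ s : ℝ, (∫ y, K x y (t - s) * (c * W y s) ∂μ)
      = c * ∫ y, K x y (t - s) * W y s ∂μ := by
    intro s
    rw [← integral_const_mul]
    congr 1; funext y; ring
  simp_rw [h1]
  rw [integral_const_mul]

theorem TT_inner_meas {μ : Measure X} [SigmaFinite μ] {K : X → X → ℝ → ℝ}
    (hK_meas : Measurable fun q : X × X × ℝ => K q.1 q.2.1 q.2.2)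
    {W : X → ℝ → ℝ} (hW : Measurable fun q : X × ℝ => W q.1 q.2) (x : X) (t : ℝ) :
    Measurable fun s : ℝ => ∫ y, K x y (t - s) * W y s ∂μ := by
  have h1 : Measurable fun z : ℝ × X => K x z.2 (t - z.1) * W z.2 z.1 := by
    apply Measurable.mul
    · exact hK_meas.comp (measurable_const.prodMk
        (measurable_snd.prodMk (measurable_const.sub measurable_fst)))
    · exact hW.comp (measurable_snd.prodMk measurable_fst)
  exact h1.stronglyMeasurable.integral_prod_right'.measurable

theorem TT_meas {μ : Measure X} [SigmaFinite μ] {K : X → X → ℝ → ℝ}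
    (hK_meas : Measurable fun q : X × X × ℝ => K q.1 q.2.1 q.2.2)
    {W : X → ℝ → ℝ} (hW : Measurable fun q : X × ℝ => W q.1 q.2) :
    Measurable fun q : X × ℝ => TT K μ W q.1 q.2 := by
  classical
  have hinner : Measurable fun p : (X × ℝ) × ℝ => ∫ y, K p.1.1 y (p.1.2 - p.2) * W y p.2 ∂μ := by
    have h1 : Measurable fun z : ((X × ℝ) × ℝ) × X =>
        K z.1.1.1 z.2 (z.1.1.2 - z.1.2) * W z.2 z.1.2 := by
      apply Measurable.mul
      · exact hK_meas.comp ((measurable_fst.comp (measurable_fst.comp measurable_fst)).prodMk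
          (measurable_snd.prodMk
            (((measurable_snd.comp measurable_fst).comp measurable_fst).sub
              (measurable_snd.comp measurable_fst))))
      · exact hW.comp (measurable_snd.prodMk (measurable_snd.comp measurable_fst))
    exact h1.stronglyMeasurable.integral_prod_right'.measurable
  have hF : Measurable fun p : (X × ℝ) × ℝ =>
      if p.2 ∈ Ioc (0:ℝ) p.1.2 then ∫ y, K p.1.1 y (p.1.2 - p.2) * W y p.2 ∂μ else 0 := by
    apply Measurable.ite ?_ hinner measurable_const
    have he : {p : (X × ℝ) × ℝ | p.2 ∈ Ioc (0:ℝ) p.1.2}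
        = {p : (X × ℝ) × ℝ | (0:ℝ) < p.2} ∩ {p : (X × ℝ) × ℝ | p.2 ≤ p.1.2} := by
      ext p; simp [mem_Ioc]
    rw [he]
    exact (measurableSet_lt measurable_const measurable_snd).inter
      (measurableSet_le measurable_snd (measurable_snd.comp measurable_fst))
  have hout : Measurable fun q : X × ℝ =>
      ∫ s, (if s ∈ Ioc (0:ℝ) q.2 then ∫ y, K q.1 y (q.2 - s) * W y s ∂μ else 0) :=
    hF.stronglyMeasurable.integral_prod_right'.measurable
  have heq : (fun q : X × ℝ => TT K μ W q.1 q.2)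
      = fun q : X × ℝ =>
        ∫ s, (if s ∈ Ioc (0:ℝ) q.2 then ∫ y, K q.1 y (q.2 - s) * W y s ∂μ else 0) := by
    funext q
    unfold TT
    rw [← integral_indicator measurableSet_Ioc]
    congr 1; funext s; rw [indicator_apply]
  rw [heq]; exact hout

theorem goodS {μ : Measure X} [SigmaFinite μ] {K : X → X → ℝ → ℝ}
    (hK_meas : Measurable fun q : X × X × ℝ => K q.1 q.2.1 q.2.2)
    {x : X} (hx : ∀ᵐ r ∂(volume.restrict (Ioi (0:ℝ))), (∫ y, K x y r ∂μ) = 1) (t : ℝ) :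
    ∀ᵐ s ∂(volume.restrict (Ioc (0:ℝ) t)), (∫ y, K x y (t - s) ∂μ) = 1 := by
  have hmem : ∀ᵐ s ∂(volume.restrict (Ioc (0:ℝ) t)), s ∈ Ioc (0:ℝ) t :=
    ae_restrict_mem measurableSet_Ioc
  have hlt : ∀ᵐ s ∂(volume.restrict (Ioc (0:ℝ) t)), s ≠ t := by
    rw [ae_iff]
    have he : {s : ℝ | ¬ s ≠ t} = {t} := by ext u; simp
    rw [he, Measure.restrict_apply (measurableSet_singleton t)]
    exact measure_mono_null inter_subset_left (measure_singleton t)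
  have hmeasI : Measurable fun r : ℝ => ∫ y, K x y r ∂μ := by
    have h1 : Measurable fun z : ℝ × X => K x z.2 z.1 :=
      hK_meas.comp (measurable_const.prodMk (measurable_snd.prodMk measurable_fst))
    exact h1.stronglyMeasurable.integral_prod_right'.measurable
  have hmeasB : MeasurableSet {r : ℝ | ¬ (∫ y, K x y r ∂μ) = 1} :=
    (hmeasI (measurableSet_singleton 1)).compl
  have hnull : volume ({r : ℝ | ¬ (∫ y, K x y r ∂μ) = 1} ∩ Ioi 0) = 0 := by
    have h0 := hx
    rw [ae_iff, Measure.restrict_apply hmeasB] at h0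
    exact h0
  have hpre : volume ((fun s : ℝ => t - s) ⁻¹'
      ({r : ℝ | ¬ (∫ y, K x y r ∂μ) = 1} ∩ Ioi 0)) = 0 := by
    rw [(Measure.measurePreserving_sub_left volume t).measure_preimage
      ((hmeasB.inter measurableSet_Ioi).nullMeasurableSet)]
    exact hnull
  have h1 : ∀ᵐ s ∂volume, ¬ (t - s ∈ ({r : ℝ | ¬ (∫ y, K x y r ∂μ) = 1} ∩ Ioi 0)) := by
    rw [ae_iff]
    simpa [Set.setOf_and, Set.Iio_def] using hpre
  have h2 : ∀ᵐ s ∂(volume.restrict (Ioc (0:ℝ) t)),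
      ¬ (t - s ∈ ({r : ℝ | ¬ (∫ y, K x y r ∂μ) = 1} ∩ Ioi 0)) := ae_restrict_of_ae h1
  filter_upwards [h2, hmem, hlt] with s hs hsmem hst
  by_contra hP
  exact hs ⟨hP, mem_Ioi.2 (sub_pos.2 (lt_of_le_of_ne hsmem.2 hst))⟩

theorem TT_le {μ : Measure X} [SigmaFinite μ] {K : X → X → ℝ → ℝ} {p₂ : ℝ → ℝ}
    (hK_meas : Measurable fun q : X × X × ℝ => K q.1 q.2.1 q.2.2)
    (hK_nonneg : ∀ x y t, 0 ≤ K x y t)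
    (hp₂_pos : ∀ t ∈ Ioi (0:ℝ), 0 < p₂ t)
    (hp₂_int : (∫ t in Ioi (0:ℝ), p₂ t) = 1)
    {F G : X → ℝ → ℝ}
    (hG_meas : Measurable fun q : X × ℝ => G q.1 q.2)
    (hF0 : ∀ y s, 0 ≤ F y s) (hG0 : ∀ y s, 0 ≤ G y s)
    {c : ℝ} (hc : 0 ≤ c)
    (hle : ∀ᵐ s ∂(volume.restrict (Ioi (0:ℝ))), ∀ᵐ y ∂μ, F y s ≤ G y s)
    (hGbd : ∀ᵐ s ∂(volume.restrict (Ioi (0:ℝ))), ∀ᵐ y ∂μ, G y s ≤ c * p₂ s)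
    {x : X} (hx : ∀ᵐ r ∂(volume.restrict (Ioi (0:ℝ))), (∫ y, K x y r ∂μ) = 1) (t : ℝ) :
    TT K μ F x t ≤ TT K μ G x t ∧ TT K μ G x t ≤ c := by
  have hp₂_intgr : IntegrableOn p₂ (Ioi (0:ℝ)) volume := integrable_of_integral_eq_one hp₂_int
  rcases le_or_gt t 0 with ht | ht
  · have hempty : Ioc (0:ℝ) t = ∅ := Ioc_eq_empty (not_lt.mpr ht)
    constructor <;> simp [TT, hempty, hc]
  · have hsub : volume.restrict (Ioc (0:ℝ) t) ≤ volume.restrict (Ioi (0:ℝ)) :=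
      Measure.restrict_mono Ioc_subset_Ioi_self le_rfl
    have hKt := goodS hK_meas hx t
    have hle' : ∀ᵐ s ∂(volume.restrict (Ioc (0:ℝ) t)), ∀ᵐ y ∂μ, F y s ≤ G y s :=
      hle.filter_mono (ae_mono hsub)
    have hGbd' : ∀ᵐ s ∂(volume.restrict (Ioc (0:ℝ) t)), ∀ᵐ y ∂μ, G y s ≤ c * p₂ s :=
      hGbd.filter_mono (ae_mono hsub)
    have hinner : ∀ᵐ s ∂(volume.restrict (Ioc (0:ℝ) t)),
        (∫ y, K x y (t - s) * G y s ∂μ) ≤ c * p₂ s ∧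
        (∫ y, K x y (t - s) * F y s ∂μ) ≤ (∫ y, K x y (t - s) * G y s ∂μ) := by
      filter_upwards [hKt, hle', hGbd'] with s h1 h3 h4
      have h2 : Integrable (fun y => K x y (t - s)) μ := integrable_of_integral_eq_one h1
      have hIconst : Integrable (fun y => K x y (t - s) * (c * p₂ s)) μ := h2.mul_const _
      have hmeasG : Measurable fun y => K x y (t - s) * G y s := by
        apply Measurable.mul
        · exact hK_meas.comp (measurable_const.prodMk (measurable_id.prodMk measurable_const))
        · exact hG_meas.comp (measurable_id.prodMk measurable_const)
      have hIG : Integrable (fun y => K x y (t - s) * G y s) μ := by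
        apply Integrable.mono' hIconst hmeasG.aestronglyMeasurable
        filter_upwards [h4] with y hy
        rw [Real.norm_eq_abs, abs_of_nonneg (mul_nonneg (hK_nonneg _ _ _) (hG0 _ _))]
        exact mul_le_mul_of_nonneg_left hy (hK_nonneg _ _ _)
      constructor
      · calc (∫ y, K x y (t - s) * G y s ∂μ) ≤ ∫ y, K x y (t - s) * (c * p₂ s) ∂μ := by
              apply integral_mono_of_nonneg
                (Eventually.of_forall fun y => mul_nonneg (hK_nonneg _ _ _) (hG0 _ _)) hIconst
              filter_upwards [h4] with y hy
              exact mul_le_mul_of_nonneg_left hy (hK_nonneg _ _ _)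
          _ = (∫ y, K x y (t - s) ∂μ) * (c * p₂ s) := integral_mul_const _ _
          _ = c * p₂ s := by rw [h1, one_mul]
      · apply integral_mono_of_nonneg
          (Eventually.of_forall fun y => mul_nonneg (hK_nonneg _ _ _) (hF0 _ _)) hIG
        filter_upwards [h3] with y hy
        exact mul_le_mul_of_nonneg_left hy (hK_nonneg _ _ _)
    have hIop2 : IntegrableOn (fun s => c * p₂ s) (Ioc (0:ℝ) t) volume :=
      (hp₂_intgr.mono_set Ioc_subset_Ioi_self).const_mul c
    have hIG_out : IntegrableOn (fun s => ∫ y, K x y (t - s) * G y s ∂μ) (Ioc (0:ℝ) t) volume := by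
      apply Integrable.mono' hIop2 (TT_inner_meas hK_meas hG_meas x t).aestronglyMeasurable
      filter_upwards [hinner] with s hs
      rw [Real.norm_eq_abs, abs_of_nonneg (integral_nonneg fun y =>
        mul_nonneg (hK_nonneg _ _ _) (hG0 _ _))]
      exact hs.1
    constructor
    · apply integral_mono_of_nonneg
        (Eventually.of_forall fun s => integral_nonneg fun y =>
          mul_nonneg (hK_nonneg _ _ _) (hF0 _ _)) hIG_out
      exact hinner.mono fun s hs => hs.2
    · calc TT K μ G x t ≤ ∫ s in Ioc (0:ℝ) t, c * p₂ s := by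
            apply integral_mono_of_nonneg
              (Eventually.of_forall fun s => integral_nonneg fun y =>
                mul_nonneg (hK_nonneg _ _ _) (hG0 _ _)) hIop2
            exact hinner.mono fun s hs => hs.1
        _ = c * ∫ s in Ioc (0:ℝ) t, p₂ s := integral_const_mul _ _
        _ ≤ c * ∫ s in Ioi (0:ℝ), p₂ s := by
            apply mul_le_mul_of_nonneg_left ?_ hc
            apply setIntegral_mono_set hp₂_intgr ?_
              (HasSubset.Subset.eventuallyLE Ioc_subset_Ioi_self)
            filter_upwards [ae_restrict_mem measurableSet_Ioi] with r hr
            exact (hp₂_pos r hr).le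
        _ = c := by rw [hp₂_int, mul_one]

theorem TT_tendsto {μ : Measure X} [SigmaFinite μ] {K : X → X → ℝ → ℝ} {p₂ : ℝ → ℝ}
    (hK_meas : Measurable fun q : X × X × ℝ => K q.1 q.2.1 q.2.2)
    (hK_nonneg : ∀ x y t, 0 ≤ K x y t)
    (hp₂_intgr : IntegrableOn p₂ (Ioi (0:ℝ)) volume)
    {Fn : ℕ → X → ℝ → ℝ} {Fl : X → ℝ → ℝ}
    (hFn_meas : ∀ n, Measurable fun q : X × ℝ => Fn n q.1 q.2)
    (hFn0 : ∀ n y s, 0 ≤ Fn n y s)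
    {c : ℝ}
    (hbd : ∀ n, ∀ᵐ s ∂(volume.restrict (Ioi (0:ℝ))), ∀ᵐ y ∂μ, Fn n y s ≤ c * p₂ s)
    (htend : ∀ᵐ s ∂(volume.restrict (Ioi (0:ℝ))), ∀ᵐ y ∂μ,
      Tendsto (fun n => Fn n y s) atTop (𝓝 (Fl y s)))
    {x : X} (hx : ∀ᵐ r ∂(volume.restrict (Ioi (0:ℝ))), (∫ y, K x y r ∂μ) = 1) (t : ℝ) :
    Tendsto (fun n => TT K μ (Fn n) x t) atTop (𝓝 (TT K μ Fl x t)) := by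
  rcases le_or_gt t 0 with ht | ht
  · have hempty : Ioc (0:ℝ) t = ∅ := Ioc_eq_empty (not_lt.mpr ht)
    simp only [TT, hempty, Measure.restrict_empty, integral_zero_measure]
    exact tendsto_const_nhds
  · have hsub : volume.restrict (Ioc (0:ℝ) t) ≤ volume.restrict (Ioi (0:ℝ)) :=
      Measure.restrict_mono Ioc_subset_Ioi_self le_rfl
    have hKt := goodS hK_meas hx t
    have hbd' : ∀ᵐ s ∂(volume.restrict (Ioc (0:ℝ) t)), ∀ n, ∀ᵐ y ∂μ, Fn n y s ≤ c * p₂ s :=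
      ae_all_iff.2 fun n => (hbd n).filter_mono (ae_mono hsub)
    have htend' : ∀ᵐ s ∂(volume.restrict (Ioc (0:ℝ) t)), ∀ᵐ y ∂μ,
        Tendsto (fun n => Fn n y s) atTop (𝓝 (Fl y s)) := htend.filter_mono (ae_mono hsub)
    have hIop2 : IntegrableOn (fun s => c * p₂ s) (Ioc (0:ℝ) t) volume :=
      (hp₂_intgr.mono_set Ioc_subset_Ioi_self).const_mul c
    have hinnerbd : ∀ᵐ s ∂(volume.restrict (Ioc (0:ℝ) t)), ∀ n,
        (∫ y, K x y (t - s) * Fn n y s ∂μ) ≤ c * p₂ s := by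
      filter_upwards [hKt, hbd'] with s h1 h4
      intro n
      have h2 : Integrable (fun y => K x y (t - s)) μ := integrable_of_integral_eq_one h1
      calc (∫ y, K x y (t - s) * Fn n y s ∂μ) ≤ ∫ y, K x y (t - s) * (c * p₂ s) ∂μ := by
            apply integral_mono_of_nonneg
              (Eventually.of_forall fun y => mul_nonneg (hK_nonneg _ _ _) (hFn0 n _ _))
              (h2.mul_const _)
            filter_upwards [h4 n] with y hy
            exact mul_le_mul_of_nonneg_left hy (hK_nonneg _ _ _)
        _ = (∫ y, K x y (t - s) ∂μ) * (c * p₂ s) := integral_mul_const _ _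
        _ = c * p₂ s := by rw [h1, one_mul]
    unfold TT
    apply tendsto_integral_of_dominated_convergence (fun s => c * p₂ s)
    · intro n; exact (TT_inner_meas hK_meas (hFn_meas n) x t).aestronglyMeasurable
    · exact hIop2
    · intro n
      filter_upwards [hinnerbd] with s hs
      rw [Real.norm_eq_abs, abs_of_nonneg (integral_nonneg fun y =>
        mul_nonneg (hK_nonneg _ _ _) (hFn0 n _ _))]
      exact hs n
    · filter_upwards [hKt, hbd', htend'] with s h1 hb ht2
      have h2 : Integrable (fun y => K x y (t - s)) μ := integrable_of_integral_eq_one h1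
      apply tendsto_integral_of_dominated_convergence (fun y => K x y (t - s) * (c * p₂ s))
      · intro n
        apply Measurable.aestronglyMeasurable
        apply Measurable.mul
        · exact hK_meas.comp (measurable_const.prodMk (measurable_id.prodMk measurable_const))
        · exact (hFn_meas n).comp (measurable_id.prodMk measurable_const)
      · exact h2.mul_const _
      · intro n
        filter_upwards [hb n] with y hy
        rw [Real.norm_eq_abs, abs_of_nonneg (mul_nonneg (hK_nonneg _ _ _) (hFn0 n _ _))]
        exact mul_le_mul_of_nonneg_left hy (hK_nonneg _ _ _)
      · filter_upwards [ht2] with y hy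
        exact hy.const_mul _

end CorStoch

open CorStoch


/-- **Existence with relaxed data, stochastic case (Corollary 3.3).**
With the non-linearity `Gt` defined on `[-β₀, ∞)` vanishing at `-β₀`,
bounded non-negative `gt`, `h` sandwiched between `p₁` and `p₂`, the
concave homeomorphism `φ` with the shifted comparison inequality, and the
threshold `ξt`, there exists a non-negative `v ∈ L^∞` solving the integral
equation; `v` is the uniform limit of the nonincreasing iteration `V`,
with a geometric error bound. -/
theorem existence_relaxed_stochastic
    {X : Type*} [MeasurableSpace X] (μ : Measure X) [SigmaFinite μ]
    (K : X → X → ℝ → ℝ) (gt h : X → ℝ → ℝ) (Gt : ℝ → ℝ)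
    (p₁ p₂ : ℝ → ℝ) (β₀ βt ξt ratLim : ℝ) (φ : ℝ → ℝ)
    (hK_meas : Measurable fun q : X × X × ℝ => K q.1 q.2.1 q.2.2)
    (hK_nonneg : ∀ x y t, 0 ≤ K x y t)
    (hK_stoch : ∀ᵐ x ∂μ, ∀ᵐ t ∂(volume.restrict (Ioi (0:ℝ))),
      (∫ y, K x y t ∂μ) = 1)
    (hg_meas : Measurable fun q : X × ℝ => gt q.1 q.2)
    (hg_nonneg : ∀ x t, 0 ≤ gt x t)
    (hg_bdd : MemLp (fun q : X × ℝ => gt q.1 q.2) ⊤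
      (μ.prod (volume.restrict (Ioi (0:ℝ)))))
    (hβt : βt = (eLpNorm (fun q : X × ℝ => gt q.1 q.2) ⊤
      (μ.prod (volume.restrict (Ioi (0:ℝ))))).toReal)
    (hh_meas : Measurable fun q : X × ℝ => h q.1 q.2)
    (hh_nonneg : ∀ x t, 0 ≤ h x t)
    (hβ₀_pos : 0 < β₀)
    (hG_cont : ContinuousOn Gt (Ici (-β₀)))
    (hG_zero : Gt (-β₀) = 0)
    (hG_nonneg : ∀ u, -β₀ ≤ u → 0 ≤ Gt u)
    (hG_mono : StrictMonoOn Gt (Ici (-β₀)))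
    (hG_conc : ConcaveOn ℝ (Ici (-β₀)) Gt)
    (hp₁_cont : ContinuousOn p₁ (Ioi 0)) (hp₂_cont : ContinuousOn p₂ (Ioi 0))
    (hp₁_pos : ∀ t ∈ Ioi (0:ℝ), 0 < p₁ t) (hp₂_pos : ∀ t ∈ Ioi (0:ℝ), 0 < p₂ t)
    (hp_ne : ∃ t ∈ Ioi (0:ℝ), p₁ t ≠ p₂ t)
    (hp₂_int : (∫ t in Ioi (0:ℝ), p₂ t) = 1)
    (hp_bound : ∀ᵐ x ∂μ, ∀ᵐ t ∂(volume.restrict (Ioi (0:ℝ))),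
      p₁ t ≤ h x t ∧ h x t ≤ p₂ t)
    (hrat_pos : 0 < ratLim)
    (hrat_lim : Tendsto (fun t => p₁ t / p₂ t) (nhdsWithin 0 (Ioi 0)) (nhds ratLim))
    (hφ_cont : ContinuousOn φ (Icc 0 1))
    (hφ0 : φ 0 = 0) (hφ1 : φ 1 = 1)
    (hφ_mono : StrictMonoOn φ (Icc 0 1))
    (hφ_conc : ConcaveOn ℝ (Icc 0 1) φ)
    (hξt : -β₀ < ξt) (hξt_eq : ξt - Gt ξt = βt)
    (hφG : ∀ σ ∈ Icc (0:ℝ) 1, ∀ v ∈ Icc (-β₀) ξt,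
      φ σ * Gt v ≤ Gt (σ * v - (1 - σ) * β₀))
    (V : ℕ → X → ℝ → ℝ)
    (hV0 : ∀ x t, V 0 x t = ξt - βt + gt x t)
    (hVsucc : ∀ m x t, V (m + 1) x t =
      gt x t + ∫ s in Ioc (0:ℝ) t, ∫ y, K x y (t - s) * (h y s * Gt (V m y s)) ∂μ) :
    ∃ v : X → ℝ → ℝ,
      MemLp (fun q : X × ℝ => v q.1 q.2) ⊤ (μ.prod (volume.restrict (Ioi (0:ℝ)))) ∧
      (∀ᵐ q ∂(μ.prod (volume.restrict (Ioi (0:ℝ)))), 0 ≤ v q.1 q.2) ∧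
      (∀ᵐ q ∂(μ.prod (volume.restrict (Ioi (0:ℝ)))),
        v q.1 q.2 = gt q.1 q.2 +
          ∫ s in Ioc (0:ℝ) q.2, ∫ y, K q.1 y (q.2 - s) * (h y s * Gt (v y s)) ∂μ) ∧
      (∀ m, Measurable fun q : X × ℝ => V m q.1 q.2) ∧
      (∀ᵐ q ∂(μ.prod (volume.restrict (Ioi (0:ℝ)))),
        ∀ m, 0 ≤ V m q.1 q.2 ∧ V (m + 1) q.1 q.2 ≤ V m q.1 q.2) ∧
      (∀ ε > (0:ℝ), ∃ N : ℕ, ∀ m ≥ N,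
        ∀ᵐ q ∂(μ.prod (volume.restrict (Ioi (0:ℝ)))),
          |V m q.1 q.2 - v q.1 q.2| ≤ ε) ∧
      (∃ C > (0:ℝ), ∃ k ∈ Ioo (0:ℝ) 1,
        ∀ m : ℕ, ∀ᵐ q ∂(μ.prod (volume.restrict (Ioi (0:ℝ)))),
          0 ≤ V (m + 1) q.1 q.2 - v q.1 q.2 ∧
          V (m + 1) q.1 q.2 - v q.1 q.2 ≤ C * k ^ m) := by
  classical
  clear hp₁_cont hp₁_pos hp_ne hrat_pos hrat_lim hφ_cont hφ0 hφ1 hφ_mono hφ_conc hφG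
  -- basic scalar facts
  have hβt0 : 0 ≤ βt := by rw [hβt]; exact ENNReal.toReal_nonneg
  have hGξ_pos : 0 < Gt ξt := by
    have h1 := hG_mono (self_mem_Ici (a := -β₀)) (mem_Ici.2 hξt.le) hξt
    rwa [hG_zero] at h1
  have hGξ : Gt ξt = ξt - βt := by linarith
  have hξ_pos : 0 < ξt := by linarith
  have hξβ : (0:ℝ) < ξt + β₀ := by linarith
  have hGmono : ∀ a b : ℝ, -β₀ ≤ a → a ≤ b → Gt a ≤ Gt b := fun a b ha hab =>
    hG_mono.monotoneOn (mem_Ici.2 ha) (mem_Ici.2 (le_trans ha hab)) hab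
  -- pointwise facts on V
  have hVge : ∀ m x t, gt x t ≤ V m x t := by
    intro m
    induction m with
    | zero => intro x t; rw [hV0]; linarith [hGξ_pos]
    | succ m ih =>
      intro x t
      rw [hVsucc]
      have h1 : 0 ≤ ∫ s in Ioc (0:ℝ) t, ∫ y, K x y (t - s) * (h y s * Gt (V m y s)) ∂μ := by
        apply integral_nonneg; intro s
        apply integral_nonneg; intro y
        have h2 : 0 ≤ Gt (V m y s) :=
          hG_nonneg _ (by linarith [ih y s, hg_nonneg y s, hβ₀_pos])
        exact mul_nonneg (hK_nonneg _ _ _) (mul_nonneg (hh_nonneg _ _) h2)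
      linarith
  have hV_nonneg : ∀ m x t, 0 ≤ V m x t := fun m x t =>
    le_trans (hg_nonneg x t) (hVge m x t)
  -- measurability of V m
  have hGt' : Measurable (fun u : ℝ => Gt (max u (-β₀))) := by
    have hcont : Continuous (fun u : ℝ => Gt (max u (-β₀))) := by
      apply hG_cont.comp_continuous (continuous_id.max continuous_const)
      intro u; exact mem_Ici.2 (le_max_right _ _)
    exact hcont.measurable
  have hGtV : ∀ (W : X → ℝ → ℝ), Measurable (fun q : X × ℝ => W q.1 q.2) →
      (∀ y s, 0 ≤ W y s) → Measurable (fun q : X × ℝ => Gt (W q.1 q.2)) := by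
    intro W hW hW0
    have he : (fun q : X × ℝ => Gt (W q.1 q.2)) = fun q => Gt (max (W q.1 q.2) (-β₀)) := by
      funext q; rw [max_eq_left (by linarith [hW0 q.1 q.2])]
    rw [he]; exact hGt'.comp hW
  have hVmeas : ∀ m, Measurable fun q : X × ℝ => V m q.1 q.2 := by
    intro m
    induction m with
    | zero =>
      have he : (fun q : X × ℝ => V 0 q.1 q.2) = fun q : X × ℝ => ξt - βt + gt q.1 q.2 := by
        funext q; exact hV0 q.1 q.2
      rw [he]; exact measurable_const.add hg_meas
    | succ m ih =>
      have he : (fun q : X × ℝ => V (m+1) q.1 q.2) = fun q : X × ℝ =>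
          gt q.1 q.2 + TT K μ (fun y s => h y s * Gt (V m y s)) q.1 q.2 := by
        funext q; exact hVsucc m q.1 q.2
      rw [he]
      exact hg_meas.add (TT_meas hK_meas (hh_meas.mul (hGtV _ ih (hV_nonneg m))))
  have hWmeas : ∀ m, Measurable fun q : X × ℝ => h q.1 q.2 * Gt (V m q.1 q.2) := fun m =>
    hh_meas.mul (hGtV _ (hVmeas m) (hV_nonneg m))
  have hW0 : ∀ m (y : X) (s : ℝ), 0 ≤ h y s * Gt (V m y s) := fun m y s =>
    mul_nonneg (hh_nonneg y s) (hG_nonneg _ (by linarith [hV_nonneg m y s, hβ₀_pos]))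
  -- the candidate limit
  set v : X → ℝ → ℝ := fun x t => ⨅ m, V m x t with hv_def
  have hbdd : ∀ x t, BddBelow (range fun m => V m x t) := fun x t =>
    ⟨0, by rintro u ⟨m, rfl⟩; exact hV_nonneg m x t⟩
  have hvle : ∀ m x t, v x t ≤ V m x t := fun m x t => ciInf_le (hbdd x t) m
  have hv_nonneg : ∀ x t, 0 ≤ v x t := fun x t => le_ciInf fun m => hV_nonneg m x t
  have hv_meas : Measurable fun q : X × ℝ => v q.1 q.2 := Measurable.iInf fun m => hVmeas m
  have hWvmeas : Measurable fun q : X × ℝ => h q.1 q.2 * Gt (v q.1 q.2) :=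
    hh_meas.mul (hGtV _ hv_meas hv_nonneg)
  have hWv0 : ∀ (y : X) (s : ℝ), 0 ≤ h y s * Gt (v y s) := fun y s =>
    mul_nonneg (hh_nonneg y s) (hG_nonneg _ (by linarith [hv_nonneg y s, hβ₀_pos]))
  -- lift along fst
  have liftx : ∀ {Q : X → Prop}, (∀ᵐ x ∂μ, Q x) →
      (∀ᵐ q ∂(μ.prod (volume.restrict (Ioi (0:ℝ)))), Q q.1) := fun hQ =>
    Measure.quasiMeasurePreserving_fst.ae hQ
  -- gt ≤ βt a.e.
  have hgle : ∀ᵐ q ∂(μ.prod (volume.restrict (Ioi (0:ℝ)))), gt q.1 q.2 ≤ βt := by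
    have h1 := ae_le_eLpNormEssSup
      (f := fun q : X × ℝ => gt q.1 q.2) (μ := μ.prod (volume.restrict (Ioi (0:ℝ))))
    have hfin : eLpNormEssSup (fun q : X × ℝ => gt q.1 q.2)
        (μ.prod (volume.restrict (Ioi (0:ℝ)))) ≠ ⊤ := by
      have h2 := hg_bdd.2
      rw [eLpNorm_exponent_top] at h2
      exact h2.ne
    filter_upwards [h1] with q hq
    have h3 : ((‖gt q.1 q.2‖₊ : ℝ≥0∞)).toReal ≤ (eLpNormEssSup (fun q : X × ℝ => gt q.1 q.2)
        (μ.prod (volume.restrict (Ioi (0:ℝ))))).toReal := ENNReal.toReal_mono hfin hq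
    rw [hβt, eLpNorm_exponent_top]
    simpa [Real.norm_eq_abs, abs_of_nonneg (hg_nonneg q.1 q.2)] using h3
  -- swap helper
  have swapLe : ∀ (f g : X → ℝ → ℝ), Measurable (fun q : X × ℝ => f q.1 q.2) →
      Measurable (fun q : X × ℝ => g q.1 q.2) →
      (∀ᵐ q ∂(μ.prod (volume.restrict (Ioi (0:ℝ)))), f q.1 q.2 ≤ g q.1 q.2) →
      (∀ᵐ s ∂(volume.restrict (Ioi (0:ℝ))), ∀ᵐ y ∂μ, f y s ≤ g y s) := by
    intro f g hf hg hfg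
    exact aeSwap (measurableSet_le hf hg) hfg
  -- h ≤ p₂ in swapped form
  have hp₂_am : AEMeasurable p₂ (volume.restrict (Ioi (0:ℝ))) :=
    hp₂_cont.aemeasurable measurableSet_Ioi
  have hsg : ∀ᵐ s ∂(volume.restrict (Ioi (0:ℝ))), ∀ᵐ y ∂μ, h y s ≤ p₂ s := by
    have hSm : MeasurableSet {q : X × ℝ | h q.1 q.2 ≤ hp₂_am.mk p₂ q.2} :=
      measurableSet_le hh_meas (hp₂_am.measurable_mk.comp measurable_snd)
    have hp_prod : ∀ᵐ q ∂(μ.prod (volume.restrict (Ioi (0:ℝ)))),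
        h q.1 q.2 ≤ hp₂_am.mk p₂ q.2 := by
      apply (Measure.ae_prod_iff_ae_ae hSm).2
      filter_upwards [hp_bound] with x hx
      filter_upwards [hx, hp₂_am.ae_eq_mk] with s h1 h2
      rw [← h2]; exact h1.2
    have h1 := aeSwap hSm hp_prod
    filter_upwards [h1, hp₂_am.ae_eq_mk] with s hs h2
    filter_upwards [hs] with y hy
    rw [h2]; exact hy
  have hp₂_intgr : IntegrableOn p₂ (Ioi (0:ℝ)) volume := integrable_of_integral_eq_one hp₂_int
  -- uniform bound on integrands
  have hWbd : ∀ (Wf : X → ℝ → ℝ), (∀ y s, 0 ≤ Wf y s) →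
      (∀ᵐ s ∂(volume.restrict (Ioi (0:ℝ))), ∀ᵐ y ∂μ, Wf y s ≤ ξt) →
      ∀ᵐ s ∂(volume.restrict (Ioi (0:ℝ))), ∀ᵐ y ∂μ,
        h y s * Gt (Wf y s) ≤ Gt ξt * p₂ s := by
    intro Wf h0 h1
    filter_upwards [h1, hsg] with s hs1 hs2
    filter_upwards [hs1, hs2] with y hy1 hy2
    have hGle : Gt (Wf y s) ≤ Gt ξt := hGmono _ _ (by linarith [h0 y s]) hy1
    have hp0 : 0 ≤ p₂ s := le_trans (hh_nonneg y s) hy2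
    calc h y s * Gt (Wf y s) ≤ p₂ s * Gt ξt :=
          mul_le_mul hy2 hGle (hG_nonneg _ (by linarith [h0 y s])) hp0
      _ = Gt ξt * p₂ s := mul_comm _ _
  -- monotonicity & upper bound, by induction
  have key : ∀ m, ∀ᵐ q ∂(μ.prod (volume.restrict (Ioi (0:ℝ)))),
      V m q.1 q.2 ≤ ξt ∧ V (m+1) q.1 q.2 ≤ V m q.1 q.2 := by
    intro m
    induction m with
    | zero =>
      have h0le : ∀ᵐ q ∂(μ.prod (volume.restrict (Ioi (0:ℝ)))), V 0 q.1 q.2 ≤ ξt := by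
        filter_upwards [hgle] with q hq
        rw [hV0]; linarith
      have h0sw := swapLe _ (fun _ _ => ξt) (hVmeas 0) measurable_const h0le
      have h1 : ∀ᵐ x ∂μ, ∀ t, TT K μ (fun y s => h y s * Gt (V 0 y s)) x t ≤ Gt ξt := by
        filter_upwards [hK_stoch] with x hx
        intro t
        exact (TT_le hK_meas hK_nonneg hp₂_pos hp₂_int (hWmeas 0) (hW0 0) (hW0 0)
          hGξ_pos.le (Eventually.of_forall fun s => Eventually.of_forall fun y => le_refl _)
          (hWbd _ (hV_nonneg 0) h0sw) hx t).2
      filter_upwards [h0le, liftx h1] with q hq h2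
      refine ⟨hq, ?_⟩
      have e1 : V 1 q.1 q.2 = gt q.1 q.2 +
          TT K μ (fun y s => h y s * Gt (V 0 y s)) q.1 q.2 := hVsucc 0 q.1 q.2
      have e0 : V 0 q.1 q.2 = ξt - βt + gt q.1 q.2 := hV0 q.1 q.2
      have := h2 q.2
      linarith
    | succ m ih =>
      have sw1 := swapLe _ (fun _ _ => ξt) (hVmeas m) measurable_const (ih.mono fun q hq => hq.1)
      have sw2 := swapLe _ _ (hVmeas (m+1)) (hVmeas m) (ih.mono fun q hq => hq.2)
      have sw3 : ∀ᵐ s ∂(volume.restrict (Ioi (0:ℝ))), ∀ᵐ y ∂μ, V (m+1) y s ≤ ξt := by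
        filter_upwards [sw1, sw2] with s a1 a2
        filter_upwards [a1, a2] with y b1 b2
        exact le_trans b2 b1
      have hFle : ∀ᵐ s ∂(volume.restrict (Ioi (0:ℝ))), ∀ᵐ y ∂μ,
          h y s * Gt (V (m+1) y s) ≤ h y s * Gt (V m y s) := by
        filter_upwards [sw2] with s a2
        filter_upwards [a2] with y hy
        exact mul_le_mul_of_nonneg_left
          (hGmono _ _ (by linarith [hV_nonneg (m+1) y s]) hy) (hh_nonneg y s)
      have h1 : ∀ᵐ x ∂μ, ∀ t,
          TT K μ (fun y s => h y s * Gt (V (m+1) y s)) x t ≤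
            TT K μ (fun y s => h y s * Gt (V m y s)) x t ∧
          TT K μ (fun y s => h y s * Gt (V m y s)) x t ≤ Gt ξt := by
        filter_upwards [hK_stoch] with x hx
        intro t
        exact TT_le hK_meas hK_nonneg hp₂_pos hp₂_int (hWmeas m) (hW0 (m+1)) (hW0 m)
          hGξ_pos.le hFle (hWbd _ (hV_nonneg m) sw1) hx t
      filter_upwards [liftx h1, hgle] with q hq hg2
      have e1 : V (m+1+1) q.1 q.2 = gt q.1 q.2 +
          TT K μ (fun y s => h y s * Gt (V (m+1) y s)) q.1 q.2 := hVsucc (m+1) q.1 q.2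
      have e2 : V (m+1) q.1 q.2 = gt q.1 q.2 +
          TT K μ (fun y s => h y s * Gt (V m y s)) q.1 q.2 := hVsucc m q.1 q.2
      have h3 := (hq q.2).1
      have h4 := (hq q.2).2
      constructor
      · linarith
      · linarith
  have hkeyAll : ∀ᵐ q ∂(μ.prod (volume.restrict (Ioi (0:ℝ)))),
      ∀ m, V m q.1 q.2 ≤ ξt ∧ V (m+1) q.1 q.2 ≤ V m q.1 q.2 := ae_all_iff.2 key
  have htendV : ∀ᵐ q ∂(μ.prod (volume.restrict (Ioi (0:ℝ)))),
      Tendsto (fun m => V m q.1 q.2) atTop (𝓝 (v q.1 q.2)) := by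
    filter_upwards [hkeyAll] with q hq
    exact tendsto_atTop_ciInf (antitone_nat_of_succ_le fun m => (hq m).2) (hbdd q.1 q.2)
  -- swapped combined facts
  have swAll : ∀ᵐ s ∂(volume.restrict (Ioi (0:ℝ))), ∀ᵐ y ∂μ,
      ∀ m, V m y s ≤ ξt ∧ V (m+1) y s ≤ V m y s := by
    have h1 : ∀ m, ∀ᵐ s ∂(volume.restrict (Ioi (0:ℝ))), ∀ᵐ y ∂μ,
        V m y s ≤ ξt ∧ V (m+1) y s ≤ V m y s := by
      intro m
      have a1 := swapLe _ (fun _ _ => ξt) (hVmeas m) measurable_const ((key m).mono fun q hq => hq.1)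
      have a2 := swapLe _ _ (hVmeas (m+1)) (hVmeas m) ((key m).mono fun q hq => hq.2)
      filter_upwards [a1, a2] with s b1 b2
      filter_upwards [b1, b2] with y c1 c2
      exact ⟨c1, c2⟩
    have h2 := ae_all_iff.2 h1
    filter_upwards [h2] with s hs
    exact ae_all_iff.2 hs
  have swTend : ∀ᵐ s ∂(volume.restrict (Ioi (0:ℝ))), ∀ᵐ y ∂μ,
      Tendsto (fun m => h y s * Gt (V m y s)) atTop (𝓝 (h y s * Gt (v y s))) := by
    filter_upwards [swAll] with s hs
    filter_upwards [hs] with y hy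
    have h1 : Tendsto (fun m => V m y s) atTop (𝓝 (v y s)) :=
      tendsto_atTop_ciInf (antitone_nat_of_succ_le fun m => (hy m).2) (hbdd y s)
    have h2 : Tendsto (fun m => Gt (V m y s)) atTop (𝓝 (Gt (v y s))) := by
      have hc : ContinuousWithinAt Gt (Ici (-β₀)) (v y s) :=
        hG_cont _ (mem_Ici.2 (by linarith [hv_nonneg y s]))
      apply hc.tendsto.comp
      rw [tendsto_nhdsWithin_iff]
      exact ⟨h1, Eventually.of_forall fun m =>
        mem_Ici.2 (by linarith [hV_nonneg m y s])⟩
    exact h2.const_mul (h y s)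
  have swBd : ∀ m, ∀ᵐ s ∂(volume.restrict (Ioi (0:ℝ))), ∀ᵐ y ∂μ,
      h y s * Gt (V m y s) ≤ Gt ξt * p₂ s := by
    intro m
    apply hWbd _ (hV_nonneg m)
    filter_upwards [swAll] with s hs
    filter_upwards [hs] with y hy
    exact (hy m).1
  have hvsw : ∀ᵐ s ∂(volume.restrict (Ioi (0:ℝ))), ∀ᵐ y ∂μ, v y s ≤ ξt := by
    filter_upwards [swAll] with s hs
    filter_upwards [hs] with y hy
    exact le_trans (hvle 0 y s) (hy 0).1
  -- the integral equation for v
  have hveq : ∀ᵐ q ∂(μ.prod (volume.restrict (Ioi (0:ℝ)))),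
      v q.1 q.2 = gt q.1 q.2 + TT K μ (fun y s => h y s * Gt (v y s)) q.1 q.2 := by
    have hTl : ∀ᵐ x ∂μ, ∀ t,
        Tendsto (fun m => TT K μ (fun y s => h y s * Gt (V m y s)) x t) atTop
          (𝓝 (TT K μ (fun y s => h y s * Gt (v y s)) x t)) := by
      filter_upwards [hK_stoch] with x hx
      intro t
      exact TT_tendsto hK_meas hK_nonneg hp₂_intgr (fun n => hWmeas n)
        (fun n => hW0 n) swBd swTend hx t
    filter_upwards [liftx hTl, htendV] with q h1 h2
    have h3 : Tendsto (fun m => V (m+1) q.1 q.2) atTop (𝓝 (v q.1 q.2)) :=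
      h2.comp (tendsto_add_atTop_nat 1)
    have h4 : Tendsto (fun m => V (m+1) q.1 q.2) atTop
        (𝓝 (gt q.1 q.2 + TT K μ (fun y s => h y s * Gt (v y s)) q.1 q.2)) := by
      have h5 : (fun m => V (m+1) q.1 q.2) = fun m => gt q.1 q.2 +
          TT K μ (fun y s => h y s * Gt (V m y s)) q.1 q.2 :=
        funext fun m => hVsucc m q.1 q.2
      rw [h5]
      exact tendsto_const_nhds.add (h1 q.2)
    exact tendsto_nhds_unique h3 h4
  -- the contraction constant
  set kk : ℝ := ξt / (ξt + β₀) with hkk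
  have hk0 : 0 < kk := div_pos hξ_pos hξβ
  have hk1 : kk < 1 := (div_lt_one hξβ).2 (by linarith)
  -- concavity slope estimate
  have hcontr : ∀ a b : ℝ, 0 ≤ a → a ≤ b → ∀ c : ℝ, 0 ≤ c → b - a ≤ c * (b + β₀) →
      Gt b - Gt a ≤ c * Gt b := by
    intro a b ha hab c hc hbac
    have hb0 : (0:ℝ) < b + β₀ := by linarith
    have ha0 : (0:ℝ) ≤ a + β₀ := by linarith
    have hσ : Gt b * (a + β₀) ≤ Gt a * (b + β₀) := by
      have hmem1 : b ∈ Ici (-β₀) := mem_Ici.2 (by linarith)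
      have hmem2 : (-β₀) ∈ Ici (-β₀) := self_mem_Ici
      have hs1 : (0:ℝ) ≤ (a + β₀) / (b + β₀) := div_nonneg ha0 hb0.le
      have hs2 : (0:ℝ) ≤ 1 - (a + β₀) / (b + β₀) := by
        have := (div_le_one hb0).2 (by linarith : a + β₀ ≤ b + β₀)
        linarith
      have hcon := hG_conc.2 hmem1 hmem2 hs1 hs2 (by ring)
      have heq : (a + β₀) / (b + β₀) * b + (1 - (a + β₀) / (b + β₀)) * (-β₀) = a := by
        field_simp
        ring
      rw [smul_eq_mul, smul_eq_mul, smul_eq_mul, smul_eq_mul, hG_zero, mul_zero,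
        add_zero, heq] at hcon
      have h6 : ((a + β₀) * Gt b) / (b + β₀) ≤ Gt a := by
        rw [← div_mul_eq_mul_div]; exact hcon
      have h7 := (div_le_iff₀ hb0).1 h6
      linarith
    have hGb0 : 0 ≤ Gt b := hG_nonneg b (by linarith)
    have h7 := mul_le_mul_of_nonneg_left hbac hGb0
    rw [← sub_nonneg]
    have h8 : (c * Gt b - (Gt b - Gt a)) * (b + β₀) ≥ 0 := by nlinarith
    nlinarith
  -- geometric decay
  have hA : ∀ m, ∀ᵐ q ∂(μ.prod (volume.restrict (Ioi (0:ℝ)))),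
      V m q.1 q.2 - v q.1 q.2 ≤ kk ^ m * (V m q.1 q.2 + β₀) := by
    intro m
    induction m with
    | zero =>
      apply Eventually.of_forall
      intro q
      rw [pow_zero, one_mul]
      linarith [hv_nonneg q.1 q.2, hβ₀_pos]
    | succ m ih =>
      have ihsw : ∀ᵐ s ∂(volume.restrict (Ioi (0:ℝ))), ∀ᵐ y ∂μ,
          V m y s - v y s ≤ kk ^ m * (V m y s + β₀) :=
        swapLe (fun y s => V m y s - v y s) (fun y s => kk ^ m * (V m y s + β₀))
          ((hVmeas m).sub hv_meas)
          (measurable_const.mul ((hVmeas m).add measurable_const)) ih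
      have hkm0 : (0:ℝ) ≤ kk ^ m := pow_nonneg hk0.le m
      have hkm1 : kk ^ m ≤ 1 := pow_le_one₀ hk0.le hk1.le
      have hDle : ∀ᵐ s ∂(volume.restrict (Ioi (0:ℝ))), ∀ᵐ y ∂μ,
          (1 - kk ^ m) * (h y s * Gt (V m y s)) ≤ h y s * Gt (v y s) := by
        filter_upwards [ihsw, swAll] with s h1 h2
        filter_upwards [h1, h2] with y hy1 hy2
        have hc := hcontr (v y s) (V m y s) (hv_nonneg y s) (hvle m y s) (kk ^ m) hkm0 hy1
        nlinarith [mul_le_mul_of_nonneg_left hc (hh_nonneg y s),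
          hG_nonneg (V m y s) (by linarith [hV_nonneg m y s, hβ₀_pos]), hh_nonneg y s]
      have hmain : ∀ᵐ x ∂μ, ∀ t,
          (1 - kk ^ m) * TT K μ (fun y s => h y s * Gt (V m y s)) x t
            ≤ TT K μ (fun y s => h y s * Gt (v y s)) x t := by
        filter_upwards [hK_stoch] with x hx
        intro t
        rw [← TT_const_mul]
        exact (TT_le hK_meas hK_nonneg hp₂_pos hp₂_int hWvmeas
          (fun y s => mul_nonneg (by linarith) (hW0 m y s)) hWv0
          hGξ_pos.le hDle (hWbd _ hv_nonneg hvsw) hx t).1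
      filter_upwards [liftx hmain, hveq, hkeyAll] with q h1 h2 h3
      have e1 : V (m+1) q.1 q.2 = gt q.1 q.2 +
          TT K μ (fun y s => h y s * Gt (V m y s)) q.1 q.2 := hVsucc m q.1 q.2
      have step1 : V (m+1) q.1 q.2 - v q.1 q.2
          ≤ kk ^ m * TT K μ (fun y s => h y s * Gt (V m y s)) q.1 q.2 := by
        have h4 := h1 q.2
        linarith
      have step2 : TT K μ (fun y s => h y s * Gt (V m y s)) q.1 q.2 ≤ V (m+1) q.1 q.2 := by
        have := hg_nonneg q.1 q.2
        linarith
      have step3 : V (m+1) q.1 q.2 ≤ kk * (V (m+1) q.1 q.2 + β₀) := by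
        rw [hkk, div_mul_eq_mul_div, le_div_iff₀ hξβ]
        nlinarith [hV_nonneg (m+1) q.1 q.2, (h3 (m+1)).1, hβ₀_pos]
      calc V (m+1) q.1 q.2 - v q.1 q.2
          ≤ kk ^ m * TT K μ (fun y s => h y s * Gt (V m y s)) q.1 q.2 := step1
        _ ≤ kk ^ m * V (m+1) q.1 q.2 := mul_le_mul_of_nonneg_left step2 hkm0
        _ ≤ kk ^ m * (kk * (V (m+1) q.1 q.2 + β₀)) := mul_le_mul_of_nonneg_left step3 hkm0
        _ = kk ^ (m+1) * (V (m+1) q.1 q.2 + β₀) := by rw [pow_succ]; ring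
  -- the geometric statement
  have hgeom : ∀ m, ∀ᵐ q ∂(μ.prod (volume.restrict (Ioi (0:ℝ)))),
      0 ≤ V (m + 1) q.1 q.2 - v q.1 q.2 ∧
      V (m + 1) q.1 q.2 - v q.1 q.2 ≤ (kk * (ξt + β₀)) * kk ^ m := by
    intro m
    filter_upwards [hA (m+1), hkeyAll] with q h1 h2
    refine ⟨by linarith [hvle (m+1) q.1 q.2], ?_⟩
    have hb : V (m+1) q.1 q.2 + β₀ ≤ ξt + β₀ := by linarith [(h2 (m+1)).1]
    calc V (m+1) q.1 q.2 - v q.1 q.2 ≤ kk ^ (m+1) * (V (m+1) q.1 q.2 + β₀) := h1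
      _ ≤ kk ^ (m+1) * (ξt + β₀) := mul_le_mul_of_nonneg_left hb (pow_nonneg hk0.le _)
      _ = (kk * (ξt + β₀)) * kk ^ m := by rw [pow_succ]; ring
  refine ⟨v, ?_, ?_, ?_, hVmeas, ?_, ?_, ?_⟩
  · -- Memℒp
    apply memLp_top_of_bound hv_meas.aestronglyMeasurable ξt
    filter_upwards [hgle] with q hq
    rw [Real.norm_eq_abs, abs_of_nonneg (hv_nonneg q.1 q.2)]
    refine le_trans (hvle 0 q.1 q.2) ?_
    rw [hV0]
    linarith
  · exact Eventually.of_forall fun q => hv_nonneg q.1 q.2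
  · filter_upwards [hveq] with q hq
    exact hq
  · filter_upwards [hkeyAll] with q hq
    intro m
    exact ⟨hV_nonneg m q.1 q.2, (hq m).2⟩
  · -- uniform convergence
    intro ε hε
    have htend0 : Tendsto (fun n : ℕ => (kk * (ξt + β₀)) * kk ^ n) atTop (𝓝 0) := by
      have h1 := tendsto_pow_atTop_nhds_zero_of_lt_one hk0.le hk1
      have h2 := h1.const_mul (kk * (ξt + β₀))
      simpa using h2
    have hev : ∀ᶠ n : ℕ in atTop, (kk * (ξt + β₀)) * kk ^ n < ε :=
      htend0.eventually (gt_mem_nhds hε)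
    obtain ⟨N, hN⟩ := eventually_atTop.1 hev
    refine ⟨N + 1, fun m hm => ?_⟩
    obtain ⟨j, rfl⟩ : ∃ j, m = j + 1 := ⟨m - 1, by omega⟩
    filter_upwards [hgeom j] with q hq
    rw [abs_of_nonneg hq.1]
    exact le_trans hq.2 (le_of_lt (hN j (by omega)))
  · exact ⟨kk * (ξt + β₀), mul_pos hk0 hξβ, kk, ⟨hk0, hk1⟩, hgeom⟩
end

section
/- Monotonicity and non-negativity of the iteration (equations (3.6)–(3.7) of the proof of Theorem 3.1). Define v₀(x,t) := ξ − β and v_{m+1}(x,t) := ∫₀ᵗ ∫_X K(x,y;t−s) h(y,s) G(v_m(y,s) + g(y,s)) dμ(y) ds. Then every v_m is measurable on X×(0,∞), v_m(x,t) ≥ 0 for all m ∈ ℕ∪{0} and a.e. (x,t), and the sequence is nonincreasing in m: v_{m+1}(x,t) ≤ v_m(x,t) for all m ∈ ℕ∪{0}, a.e. x ∈ X and a.e. t > 0. -/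
set_option maxHeartbeats 2000000


open MeasureTheory Set Filter

/-- **Monotonicity and non-negativity of the iteration (eqs. (3.6)–(3.7),
proof of Theorem 3.1).** With `V 0 = ξ - β` and
`V (m+1) (x,t) = ∫₀ᵗ ∫_X K(x,y;t-s) h(y,s) G(V m (y,s) + g(y,s)) dμ ds`,
every `V m` is measurable, non-negative a.e., and the sequence is
nonincreasing in `m` a.e. -/
theorem iteration_monotone_stochastic
    {X : Type*} [MeasurableSpace X] (μ : Measure X) [SigmaFinite μ]
    (K : X → X → ℝ → ℝ) (g h : X → ℝ → ℝ) (G : ℝ → ℝ)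
    (p₁ p₂ : ℝ → ℝ) (β ξ : ℝ)
    (hK_meas : Measurable fun q : X × X × ℝ => K q.1 q.2.1 q.2.2)
    (hK_nonneg : ∀ x y t, 0 ≤ K x y t)
    (hK_stoch : ∀ᵐ x ∂μ, ∀ᵐ t ∂(volume.restrict (Ioi (0:ℝ))),
      (∫ y, K x y t ∂μ) = 1)
    (hg_meas : Measurable fun q : X × ℝ => g q.1 q.2)
    (hg_nonneg : ∀ x t, 0 ≤ g x t)
    (hg_bdd : MemLp (fun q : X × ℝ => g q.1 q.2) ⊤
      (μ.prod (volume.restrict (Ioi (0:ℝ)))))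
    (hβ : β = (eLpNorm (fun q : X × ℝ => g q.1 q.2) ⊤
      (μ.prod (volume.restrict (Ioi (0:ℝ))))).toReal)
    (hh_meas : Measurable fun q : X × ℝ => h q.1 q.2)
    (hh_nonneg : ∀ x t, 0 ≤ h x t)
    (hG_cont : ContinuousOn G (Ici 0))
    (hG_zero : G 0 = 0)
    (hG_nonneg : ∀ u, 0 ≤ u → 0 ≤ G u)
    (hG_mono : StrictMonoOn G (Ici 0))
    (hG_conc : ConcaveOn ℝ (Ici 0) G)
    (hp₁_cont : ContinuousOn p₁ (Ioi 0)) (hp₂_cont : ContinuousOn p₂ (Ioi 0))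
    (hp₁_pos : ∀ t ∈ Ioi (0:ℝ), 0 < p₁ t) (hp₂_pos : ∀ t ∈ Ioi (0:ℝ), 0 < p₂ t)
    (hp_ne : ∃ t ∈ Ioi (0:ℝ), p₁ t ≠ p₂ t)
    (hp₂_int : (∫ t in Ioi (0:ℝ), p₂ t) = 1)
    (hp_bound : ∀ᵐ x ∂μ, ∀ᵐ t ∂(volume.restrict (Ioi (0:ℝ))),
      p₁ t ≤ h x t ∧ h x t ≤ p₂ t)
    (hξ_pos : 0 < ξ) (hξ_eq : ξ - G ξ = β)
    (V : ℕ → X → ℝ → ℝ)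
    (hV0 : ∀ x t, V 0 x t = ξ - β)
    (hVsucc : ∀ m x t, V (m + 1) x t =
      ∫ s in Ioc (0:ℝ) t, ∫ y, K x y (t - s) * (h y s * G (V m y s + g y s)) ∂μ) :
    (∀ m, Measurable fun q : X × ℝ => V m q.1 q.2) ∧
    (∀ m, ∀ᵐ q ∂(μ.prod (volume.restrict (Ioi (0:ℝ)))), 0 ≤ V m q.1 q.2) ∧
    (∀ m, ∀ᵐ q ∂(μ.prod (volume.restrict (Ioi (0:ℝ)))),
      V (m + 1) q.1 q.2 ≤ V m q.1 q.2) := by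

  set ν : Measure ℝ := volume.restrict (Ioi (0:ℝ)) with hν
  -- basic facts
  have hβ0 : 0 ≤ β := hβ ▸ ENNReal.toReal_nonneg
  have hGξpos : 0 < G ξ := by
    have := hG_mono (le_refl (0:ℝ)) hξ_pos.le hξ_pos
    rwa [hG_zero] at this
  have hGξ : ξ - β = G ξ := by linarith
  have hξβ : 0 ≤ ξ - β := by rw [hGξ]; exact hGξpos.le
  have hGmono' : MonotoneOn G (Ici 0) := hG_mono.monotoneOn
  -- continuous/measurable version of G
  have hG'cont : Continuous (fun u : ℝ => G (max u 0)) :=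
    hG_cont.comp_continuous (continuous_id.max continuous_const) (fun u => le_max_right u 0)
  have hG'meas : Measurable (fun u : ℝ => G (max u 0)) := hG'cont.measurable
  have hG'eq : ∀ u : ℝ, 0 ≤ u → G u = G (max u 0) := fun u hu => by rw [max_eq_left hu]
  -- pointwise nonnegativity
  have hVnonneg : ∀ m x t, 0 ≤ V m x t := by
    intro m
    induction m with
    | zero => intro x t; rw [hV0]; exact hξβ
    | succ m ih =>
      intro x t; rw [hVsucc]
      refine integral_nonneg fun s => integral_nonneg fun y => ?_
      exact mul_nonneg (hK_nonneg _ _ _)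
        (mul_nonneg (hh_nonneg _ _) (hG_nonneg _ (add_nonneg (ih y s) (hg_nonneg y s))))
  -- measurability helpers
  have hKmeas_y : ∀ (x : X) (τ : ℝ), Measurable fun y => K x y τ := fun x τ =>
    hK_meas.comp (by fun_prop : Measurable fun y : X => (x, y, τ))
  have hF1 : ∀ (w : X → ℝ → ℝ), Measurable (fun q : X × ℝ => w q.1 q.2) → (∀ y s, 0 ≤ w y s) →
      StronglyMeasurable (fun a : (X × ℝ) × ℝ =>
        ∫ y, K a.1.1 y (a.1.2 - a.2) * (h y a.2 * G (w y a.2 + g y a.2)) ∂μ) := by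
    intro w hw hw0
    have heq : (fun a : (X × ℝ) × ℝ =>
        ∫ y, K a.1.1 y (a.1.2 - a.2) * (h y a.2 * G (w y a.2 + g y a.2)) ∂μ)
        = fun a : (X × ℝ) × ℝ =>
          ∫ y, K a.1.1 y (a.1.2 - a.2) * (h y a.2 * G (max (w y a.2 + g y a.2) 0)) ∂μ := by
      funext a
      congr 1
      funext y
      rw [hG'eq _ (add_nonneg (hw0 _ _) (hg_nonneg _ _))]
    rw [heq]
    have hfm : Measurable (fun p : ((X × ℝ) × ℝ) × X =>
        K p.1.1.1 p.2 (p.1.1.2 - p.1.2) * (h p.2 p.1.2 * G (max (w p.2 p.1.2 + g p.2 p.1.2) 0))) := by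
      refine Measurable.mul ?_ (Measurable.mul ?_ ?_)
      · exact hK_meas.comp
          (by fun_prop : Measurable fun p : ((X × ℝ) × ℝ) × X => (p.1.1.1, p.2, p.1.1.2 - p.1.2))
      · exact hh_meas.comp (by fun_prop : Measurable fun p : ((X × ℝ) × ℝ) × X => (p.2, p.1.2))
      · exact hG'meas.comp
          ((hw.comp (by fun_prop : Measurable fun p : ((X × ℝ) × ℝ) × X => (p.2, p.1.2))).add
            (hg_meas.comp (by fun_prop : Measurable fun p : ((X × ℝ) × ℝ) × X => (p.2, p.1.2))))
    exact hfm.stronglyMeasurable.integral_prod_right'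
  have hmeas_T : ∀ (w : X → ℝ → ℝ), Measurable (fun q : X × ℝ => w q.1 q.2) → (∀ y s, 0 ≤ w y s) →
      Measurable (fun q : X × ℝ =>
        ∫ s in Ioc (0:ℝ) q.2, ∫ y, K q.1 y (q.2 - s) * (h y s * G (w y s + g y s)) ∂μ) := by
    intro w hw hw0
    have hF := hF1 w hw hw0
    have hset : MeasurableSet {p : (X × ℝ) × ℝ | p.2 ∈ Ioc (0:ℝ) p.1.2} := by
      simp only [mem_Ioc, setOf_and]
      exact (measurableSet_lt measurable_const measurable_snd).inter
        (measurableSet_le measurable_snd measurable_fst.snd)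
    have hf2 : Measurable (fun p : (X × ℝ) × ℝ => if p.2 ∈ Ioc (0:ℝ) p.1.2 then
        (∫ y, K p.1.1 y (p.1.2 - p.2) * (h y p.2 * G (w y p.2 + g y p.2)) ∂μ) else 0) :=
      Measurable.ite hset hF.measurable measurable_const
    have h3 : Measurable fun q : X × ℝ => ∫ s, (if s ∈ Ioc (0:ℝ) q.2 then
        (∫ y, K q.1 y (q.2 - s) * (h y s * G (w y s + g y s)) ∂μ) else 0) ∂(volume : Measure ℝ) :=
      (hf2.stronglyMeasurable.integral_prod_right' :
        StronglyMeasurable fun q : X × ℝ => ∫ s, _ ∂(volume : Measure ℝ)).measurable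
    have heq2 : (fun q : X × ℝ =>
        ∫ s in Ioc (0:ℝ) q.2, ∫ y, K q.1 y (q.2 - s) * (h y s * G (w y s + g y s)) ∂μ)
        = fun q : X × ℝ => ∫ s, (if s ∈ Ioc (0:ℝ) q.2 then
          (∫ y, K q.1 y (q.2 - s) * (h y s * G (w y s + g y s)) ∂μ) else 0) ∂(volume : Measure ℝ) := by
      funext q
      rw [← integral_indicator measurableSet_Ioc]
      congr 1
      funext s
      simp [indicator_apply]
    rw [heq2]
    exact h3
  have hVmeas : ∀ m, Measurable fun q : X × ℝ => V m q.1 q.2 := by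
    intro m
    induction m with
    | zero =>
      have : (fun q : X × ℝ => V 0 q.1 q.2) = fun _ => ξ - β := funext fun q => hV0 _ _
      rw [this]; exact measurable_const
    | succ m ih =>
      have : (fun q : X × ℝ => V (m + 1) q.1 q.2) = fun q : X × ℝ =>
          ∫ s in Ioc (0:ℝ) q.2, ∫ y, K q.1 y (q.2 - s) * (h y s * G (V m y s + g y s)) ∂μ :=
        funext fun q => hVsucc m q.1 q.2
      rw [this]
      exact hmeas_T (V m) ih (hVnonneg m)
  -- a.e. facts
  have hgβ : ∀ᵐ q ∂(μ.prod ν), g q.1 q.2 ≤ β := by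
    have h1 := ae_le_eLpNormEssSup (f := fun q : X × ℝ => g q.1 q.2) (μ := μ.prod ν)
    have hfin : eLpNorm (fun q : X × ℝ => g q.1 q.2) ⊤ (μ.prod ν) ≠ ⊤ := hg_bdd.2.ne
    rw [eLpNorm_exponent_top] at hfin hβ
    filter_upwards [h1] with q hq
    have h2 := ENNReal.toReal_mono hfin hq
    rw [toReal_enorm, Real.norm_of_nonneg (hg_nonneg _ _)] at h2
    rw [hβ]
    exact h2
  have hp₂int : Integrable p₂ ν := by
    by_contra hc
    rw [integral_undef hc] at hp₂_int
    exact one_ne_zero hp₂_int.symm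
  have hp₂ae : AEMeasurable p₂ ν := hp₂_cont.aemeasurable measurableSet_Ioi
  set P2 : ℝ → ℝ := hp₂ae.mk p₂ with hP2def
  have hP2meas : Measurable P2 := hp₂ae.measurable_mk
  have hP2eq : p₂ =ᵐ[ν] P2 := hp₂ae.ae_eq_mk
  have hP2pos : ∀ᵐ s ∂ν, 0 ≤ P2 s := by
    have hmem : ∀ᵐ s ∂ν, s ∈ Ioi (0:ℝ) := ae_restrict_mem measurableSet_Ioi
    filter_upwards [hP2eq, hmem] with s h1 h2
    rw [← h1]; exact (hp₂_pos s h2).le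
  have hP2int : Integrable P2 ν := hp₂int.congr hP2eq
  have hP2integral : (∫ s, P2 s ∂ν) = 1 := by
    rw [← integral_congr_ae hP2eq]; exact hp₂_int
  have hK_good : ∀ᵐ x ∂μ, ∀ᵐ τ ∂ν,
      (∫ y, K x y τ ∂μ) = 1 ∧ Integrable (fun y => K x y τ) μ := by
    filter_upwards [hK_stoch] with x hx
    filter_upwards [hx] with τ hτ
    refine ⟨hτ, ?_⟩
    by_contra hc
    rw [integral_undef hc] at hτ
    exact one_ne_zero hτ.symm
  -- reflection s ↦ t - s
  have hrefl : ∀ (t : ℝ) (Q : ℝ → Prop), (∀ᵐ τ ∂ν, Q τ) →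
      ∀ᵐ s ∂(volume.restrict (Ioc (0:ℝ) t)), Q (t - s) := by
    intro t Q hQ
    have h1 : ∀ᵐ τ ∂(volume : Measure ℝ), τ ∈ Ioi (0:ℝ) → Q τ :=
      (ae_restrict_iff' measurableSet_Ioi).mp hQ
    have hmp : MeasurePreserving (fun s : ℝ => t - s) volume volume :=
      Measure.measurePreserving_sub_left volume t
    have h2 : ∀ᵐ s ∂(volume : Measure ℝ), t - s ∈ Ioi (0:ℝ) → Q (t - s) :=
      hmp.quasiMeasurePreserving.ae h1
    have h3 : ∀ᵐ s ∂(volume.restrict (Ioc (0:ℝ) t)), t - s ∈ Ioi (0:ℝ) → Q (t - s) :=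
      ae_restrict_of_ae h2
    have h5 : ∀ᵐ s ∂(volume : Measure ℝ), s ≠ t := by
      rw [ae_iff]
      have : {s : ℝ | ¬ s ≠ t} = {t} := by ext s; simp
      rw [this]
      exact Real.volume_singleton
    have h5' : ∀ᵐ s ∂(volume.restrict (Ioc (0:ℝ) t)), s ≠ t := ae_restrict_of_ae h5
    have h4 : ∀ᵐ s ∂(volume.restrict (Ioc (0:ℝ) t)), s ∈ Ioc (0:ℝ) t :=
      ae_restrict_mem measurableSet_Ioc
    filter_upwards [h3, h4, h5'] with s hs3 hs4 hs5
    exact hs3 (mem_Ioi.mpr (sub_pos.mpr (lt_of_le_of_ne hs4.2 hs5)))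
  -- swapping a.e. over the product
  have hswap : ∀ (p : X → ℝ → Prop), MeasurableSet {q : X × ℝ | p q.1 q.2} →
      (∀ᵐ q ∂(μ.prod ν), p q.1 q.2) → ∀ᵐ s ∂ν, ∀ᵐ y ∂μ, p y s := by
    intro p hp hap
    exact (Measure.ae_ae_comm hp).mp (Measure.ae_ae_of_ae_prod hap)
  have hp_swap : ∀ᵐ s ∂ν, ∀ᵐ y ∂μ, h y s ≤ P2 s := by
    refine hswap _ (measurableSet_le hh_meas (hP2meas.comp measurable_snd)) ?_
    refine (Measure.ae_prod_iff_ae_ae (p := fun q : X × ℝ => h q.1 q.2 ≤ P2 q.2)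
      (measurableSet_le hh_meas (hP2meas.comp measurable_snd))).mpr ?_
    filter_upwards [hp_bound] with x hx
    filter_upwards [hx, hP2eq] with t ht hpt
    rw [← hpt]; exact ht.2
  have hg_swap : ∀ᵐ s ∂ν, ∀ᵐ y ∂μ, g y s ≤ β :=
    hswap _ (measurableSet_le hg_meas measurable_const) hgβ
  have hnn : ∀ (w : X → ℝ → ℝ), (∀ y s, 0 ≤ w y s) → ∀ (x : X) (t s : ℝ) (y : X),
      0 ≤ K x y (t - s) * (h y s * G (w y s + g y s)) := fun w hw0 x t s y =>
    mul_nonneg (hK_nonneg _ _ _) (mul_nonneg (hh_nonneg _ _)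
      (hG_nonneg _ (add_nonneg (hw0 _ _) (hg_nonneg _ _))))
  have hInnerMeas : ∀ (w : X → ℝ → ℝ), Measurable (fun q : X × ℝ => w q.1 q.2) →
      (∀ y s, 0 ≤ w y s) → ∀ (x : X) (t s : ℝ),
      Measurable (fun y => K x y (t - s) * (h y s * G (w y s + g y s))) := by
    intro w hw hw0 x t s
    have heq : (fun y => K x y (t - s) * (h y s * G (w y s + g y s)))
        = fun y => K x y (t - s) * (h y s * G (max (w y s + g y s) 0)) := by
      funext y; rw [hG'eq _ (add_nonneg (hw0 _ _) (hg_nonneg _ _))]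
    rw [heq]
    exact (hKmeas_y x (t - s)).mul
      ((hh_meas.comp (by fun_prop : Measurable fun y : X => (y, s))).mul
        (hG'meas.comp ((hw.comp (by fun_prop : Measurable fun y : X => (y, s))).add
          (hg_meas.comp (by fun_prop : Measurable fun y : X => (y, s))))))
  have key : ∀ (u w : X → ℝ → ℝ),
      Measurable (fun q : X × ℝ => u q.1 q.2) → Measurable (fun q : X × ℝ => w q.1 q.2) →
      (∀ y s, 0 ≤ u y s) → (∀ y s, 0 ≤ w y s) →
      (∀ᵐ q ∂(μ.prod ν), u q.1 q.2 ≤ w q.1 q.2) → (∀ᵐ q ∂(μ.prod ν), w q.1 q.2 ≤ ξ - β) →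
      ∀ᵐ q ∂(μ.prod ν),
        ((∫ s in Ioc (0:ℝ) q.2, ∫ y, K q.1 y (q.2 - s) * (h y s * G (u y s + g y s)) ∂μ)
          ≤ ∫ s in Ioc (0:ℝ) q.2, ∫ y, K q.1 y (q.2 - s) * (h y s * G (w y s + g y s)) ∂μ) ∧
        ((∫ s in Ioc (0:ℝ) q.2, ∫ y, K q.1 y (q.2 - s) * (h y s * G (w y s + g y s)) ∂μ)
          ≤ ξ - β) := by
    intro u w hu hw hu0 hw0 huw hwξ
    have hsw1 : ∀ᵐ s ∂ν, ∀ᵐ y ∂μ, u y s ≤ w y s := hswap _ (measurableSet_le hu hw) huw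
    have hsw2 : ∀ᵐ s ∂ν, ∀ᵐ y ∂μ, w y s ≤ ξ - β :=
      hswap _ (measurableSet_le hw measurable_const) hwξ
    have hit : ∀ᵐ x ∂μ, ∀ᵐ t ∂ν,
        ((∫ s in Ioc (0:ℝ) t, ∫ y, K x y (t - s) * (h y s * G (u y s + g y s)) ∂μ)
          ≤ ∫ s in Ioc (0:ℝ) t, ∫ y, K x y (t - s) * (h y s * G (w y s + g y s)) ∂μ) ∧
        ((∫ s in Ioc (0:ℝ) t, ∫ y, K x y (t - s) * (h y s * G (w y s + g y s)) ∂μ)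
          ≤ ξ - β) := by
      filter_upwards [hK_good] with x hKx
      refine Eventually.of_forall fun t => ?_
      have hsub : Ioc (0:ℝ) t ⊆ Ioi 0 := Ioc_subset_Ioi_self
      have hs1 : ∀ᵐ s ∂(volume.restrict (Ioc (0:ℝ) t)), ∀ᵐ y ∂μ, u y s ≤ w y s :=
        ae_restrict_of_ae_restrict_of_subset hsub hsw1
      have hs2 : ∀ᵐ s ∂(volume.restrict (Ioc (0:ℝ) t)), ∀ᵐ y ∂μ, w y s ≤ ξ - β :=
        ae_restrict_of_ae_restrict_of_subset hsub hsw2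
      have hs3 : ∀ᵐ s ∂(volume.restrict (Ioc (0:ℝ) t)), ∀ᵐ y ∂μ, g y s ≤ β :=
        ae_restrict_of_ae_restrict_of_subset hsub hg_swap
      have hs4 : ∀ᵐ s ∂(volume.restrict (Ioc (0:ℝ) t)), ∀ᵐ y ∂μ, h y s ≤ P2 s :=
        ae_restrict_of_ae_restrict_of_subset hsub hp_swap
      have hsP2 : ∀ᵐ s ∂(volume.restrict (Ioc (0:ℝ) t)), 0 ≤ P2 s :=
        ae_restrict_of_ae_restrict_of_subset hsub hP2pos
      have hsK : ∀ᵐ s ∂(volume.restrict (Ioc (0:ℝ) t)),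
          (∫ y, K x y (t - s) ∂μ) = 1 ∧ Integrable (fun y => K x y (t - s)) μ :=
        hrefl t _ hKx
      have hs_main : ∀ᵐ s ∂(volume.restrict (Ioc (0:ℝ) t)),
          ((∫ y, K x y (t - s) * (h y s * G (u y s + g y s)) ∂μ)
            ≤ ∫ y, K x y (t - s) * (h y s * G (w y s + g y s)) ∂μ) ∧
          ((∫ y, K x y (t - s) * (h y s * G (w y s + g y s)) ∂μ) ≤ P2 s * G ξ) := by
        filter_upwards [hs1, hs2, hs3, hs4, hsP2, hsK] with s hy1 hy2 hy3 hy4 hP2s hKs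
        obtain ⟨hK1, hK2⟩ := hKs
        have hbInt : Integrable (fun y => K x y (t - s) * (P2 s * G ξ)) μ := hK2.mul_const _
        have hbd : ∀ᵐ y ∂μ, K x y (t - s) * (h y s * G (w y s + g y s))
            ≤ K x y (t - s) * (P2 s * G ξ) := by
          filter_upwards [hy2, hy3, hy4] with y h2 h3 h4
          have harg0 : 0 ≤ w y s + g y s := add_nonneg (hw0 _ _) (hg_nonneg _ _)
          have hGle : G (w y s + g y s) ≤ G ξ :=
            hGmono' (mem_Ici.mpr harg0) (mem_Ici.mpr hξ_pos.le) (by linarith)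
          exact mul_le_mul_of_nonneg_left
            (mul_le_mul h4 hGle (hG_nonneg _ harg0) hP2s) (hK_nonneg _ _ _)
        have hwInt : Integrable (fun y => K x y (t - s) * (h y s * G (w y s + g y s))) μ := by
          refine Integrable.mono' hbInt (hInnerMeas w hw hw0 x t s).aestronglyMeasurable ?_
          filter_upwards [hbd] with y hy
          rw [Real.norm_of_nonneg (hnn w hw0 x t s y)]
          exact hy
        constructor
        · refine integral_mono_of_nonneg (Eventually.of_forall (hnn u hu0 x t s)) hwInt ?_
          filter_upwards [hy1] with y h1
          have hu0' : 0 ≤ u y s + g y s := add_nonneg (hu0 _ _) (hg_nonneg _ _)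
          have hGle : G (u y s + g y s) ≤ G (w y s + g y s) :=
            hGmono' (mem_Ici.mpr hu0')
              (mem_Ici.mpr (add_nonneg (hw0 _ _) (hg_nonneg _ _))) (by linarith)
          exact mul_le_mul_of_nonneg_left
            (mul_le_mul_of_nonneg_left hGle (hh_nonneg _ _)) (hK_nonneg _ _ _)
        · calc (∫ y, K x y (t - s) * (h y s * G (w y s + g y s)) ∂μ)
              ≤ ∫ y, K x y (t - s) * (P2 s * G ξ) ∂μ :=
                integral_mono_of_nonneg (Eventually.of_forall (hnn w hw0 x t s)) hbInt hbd
            _ = (∫ y, K x y (t - s) ∂μ) * (P2 s * G ξ) := integral_mul_const _ _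
            _ = P2 s * G ξ := by rw [hK1, one_mul]
      have hIwMeas : Measurable (fun s => ∫ y, K x y (t - s) * (h y s * G (w y s + g y s)) ∂μ) :=
        (hF1 w hw hw0).measurable.comp (by fun_prop : Measurable fun s : ℝ => ((x, t), s))
      have hBν : Integrable (fun s => P2 s * G ξ) ν := hP2int.mul_const _
      have hB : Integrable (fun s => P2 s * G ξ) (volume.restrict (Ioc (0:ℝ) t)) :=
        hBν.mono_measure (Measure.restrict_mono hsub le_rfl)
      have hIwInt : Integrable
          (fun s => ∫ y, K x y (t - s) * (h y s * G (w y s + g y s)) ∂μ)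
          (volume.restrict (Ioc (0:ℝ) t)) := by
        refine Integrable.mono' hB hIwMeas.aestronglyMeasurable ?_
        filter_upwards [hs_main] with s hsm
        rw [Real.norm_of_nonneg (integral_nonneg (hnn w hw0 x t s))]
        exact hsm.2
      constructor
      · refine integral_mono_of_nonneg
          (Eventually.of_forall fun s => integral_nonneg (hnn u hu0 x t s)) hIwInt ?_
        filter_upwards [hs_main] with s hsm
        exact hsm.1
      · calc (∫ s in Ioc (0:ℝ) t, ∫ y, K x y (t - s) * (h y s * G (w y s + g y s)) ∂μ)
            ≤ ∫ s in Ioc (0:ℝ) t, P2 s * G ξ := by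
              refine integral_mono_of_nonneg
                (Eventually.of_forall fun s => integral_nonneg (hnn w hw0 x t s)) hB ?_
              filter_upwards [hs_main] with s hsm
              exact hsm.2
          _ ≤ ∫ s in Ioi (0:ℝ), P2 s * G ξ := by
              refine setIntegral_mono_set (hP2int.mul_const _) ?_
                (HasSubset.Subset.eventuallyLE hsub)
              filter_upwards [hP2pos] with s hs
              exact mul_nonneg hs hGξpos.le
          _ = ξ - β := by
              rw [integral_mul_const, hP2integral, one_mul, hGξ]
    refine (Measure.ae_prod_iff_ae_ae ?_).mpr hit
    exact MeasurableSet.inter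
      (measurableSet_le (hmeas_T u hu hu0) (hmeas_T w hw hw0))
      (measurableSet_le (hmeas_T w hw hw0) measurable_const)
  have hVle : ∀ m, ∀ᵐ q ∂(μ.prod ν), V m q.1 q.2 ≤ ξ - β := by
    intro m
    induction m with
    | zero => exact Eventually.of_forall fun q => le_of_eq (hV0 q.1 q.2)
    | succ m ih =>
      have hk := key (V m) (V m) (hVmeas m) (hVmeas m) (hVnonneg m) (hVnonneg m)
        (Eventually.of_forall fun q => le_rfl) ih
      filter_upwards [hk] with q hq
      rw [hVsucc m q.1 q.2]
      exact hq.2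
  refine ⟨hVmeas, fun m => Eventually.of_forall fun q => hVnonneg m q.1 q.2, ?_⟩
  intro m
  induction m with
  | zero =>
    filter_upwards [hVle 1] with q hq
    rw [hV0 q.1 q.2]
    exact hq
  | succ m ih =>
    have hk := key (V (m + 1)) (V m) (hVmeas (m + 1)) (hVmeas m)
      (hVnonneg _) (hVnonneg _) ih (hVle m)
    filter_upwards [hk] with q hq
    rw [hVsucc (m + 1) q.1 q.2, hVsucc m q.1 q.2]
    exact hq.1
end

section
/- Sandwich estimate for the second iterate, stochastic case (inequality (3.23)). Define v₀(x,t) := ξ − β and v_{m+1}(x,t) := ∫₀ᵗ ∫_X K(x,y;t−s) h(y,s) G(v_m(y,s) + g(y,s)) dμ(y) ds. Then there exists σ* ∈ (0,1) such that σ* v₁(x,t) ≤ v₂(x,t) ≤ v₁(x,t) for a.e. x ∈ X and a.e. t > 0. -/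
open MeasureTheory Set Filter

open scoped ENNReal

private lemma aux_meas_sandwich {X : Type*} [MeasurableSpace X] (μ : Measure X) [SigmaFinite μ]
    (K : X → X → ℝ → ℝ) (h : X → ℝ → ℝ) (Gb : ℝ → ℝ)
    (hK_meas : Measurable fun q : X × X × ℝ => K q.1 q.2.1 q.2.2)
    (hh_meas : Measurable fun q : X × ℝ => h q.1 q.2)
    (hGb_meas : Measurable Gb)
    (W : X → ℝ → ℝ) (hW_meas : Measurable (fun q : X × ℝ => W q.1 q.2)) :
    Measurable (fun p : ((X × ℝ) × ℝ) × X =>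
        K p.1.1.1 p.2 (p.1.1.2 - p.1.2) * (h p.2 p.1.2 * Gb (W p.2 p.1.2)))
      ∧ StronglyMeasurable (fun p : (X × ℝ) × ℝ =>
        ∫ z, K p.1.1 z (p.1.2 - p.2) * (h z p.2 * Gb (W z p.2)) ∂μ)
      ∧ StronglyMeasurable (fun q : X × ℝ =>
        ∫ s in Ioc (0:ℝ) q.2, ∫ z, K q.1 z (q.2 - s) * (h z s * Gb (W z s)) ∂μ) := by
  have hΦ : Measurable (fun p : ((X × ℝ) × ℝ) × X =>
      K p.1.1.1 p.2 (p.1.1.2 - p.1.2) * (h p.2 p.1.2 * Gb (W p.2 p.1.2))) := by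
    apply Measurable.mul
    · exact hK_meas.comp
        (show Measurable fun p : ((X × ℝ) × ℝ) × X => (p.1.1.1, p.2, p.1.1.2 - p.1.2) by fun_prop)
    · exact ((hh_meas.comp
        (show Measurable fun p : ((X × ℝ) × ℝ) × X => (p.2, p.1.2) by fun_prop))).mul
        ((hGb_meas.comp (hW_meas.comp
        (show Measurable fun p : ((X × ℝ) × ℝ) × X => (p.2, p.1.2) by fun_prop))))
  have hinner : StronglyMeasurable (fun p : (X × ℝ) × ℝ =>
      ∫ z, K p.1.1 z (p.1.2 - p.2) * (h z p.2 * Gb (W z p.2)) ∂μ) :=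
    hΦ.stronglyMeasurable.integral_prod_right'
  refine ⟨hΦ, hinner, ?_⟩
  have hsetm : MeasurableSet {p : (X × ℝ) × ℝ | p.2 ∈ Ioc (0:ℝ) p.1.2} := by
    apply MeasurableSet.inter
    · exact measurableSet_lt measurable_const measurable_snd
    · exact measurableSet_le measurable_snd (measurable_snd.comp measurable_fst)
  have hJ := (hinner.indicator hsetm).integral_prod_right' (ν := volume)
  have heq : (fun q : X × ℝ =>
      ∫ s in Ioc (0:ℝ) q.2, ∫ z, K q.1 z (q.2 - s) * (h z s * Gb (W z s)) ∂μ)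
      = fun q : X × ℝ => ∫ s, ({p : (X × ℝ) × ℝ | p.2 ∈ Ioc (0:ℝ) p.1.2}).indicator
        (fun p => ∫ z, K p.1.1 z (p.1.2 - p.2) * (h z p.2 * Gb (W z p.2)) ∂μ) (q, s) := by
    funext q
    rw [← integral_indicator measurableSet_Ioc]
    congr 1
  rw [heq]
  exact hJ

/-- **Sandwich estimate for the second iterate, stochastic case
(inequality (3.23)).** With `V 0 = ξ - β` and the iteration
`V (m+1)(x,t) = ∫₀ᵗ ∫_X K(x,y;t-s) h(y,s) G(V m (y,s)+g(y,s)) dμ ds`,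
there exists `σ* ∈ (0,1)` such that `σ* V 1 ≤ V 2 ≤ V 1` a.e. -/
theorem second_iterate_sandwich_stochastic
    {X : Type*} [MeasurableSpace X] (μ : Measure X) [SigmaFinite μ]
    (K : X → X → ℝ → ℝ) (g h : X → ℝ → ℝ) (G : ℝ → ℝ)
    (p₁ p₂ : ℝ → ℝ) (β ξ T₀ β₀ ratLim : ℝ)
    (hK_meas : Measurable fun q : X × X × ℝ => K q.1 q.2.1 q.2.2)
    (hK_nonneg : ∀ x y t, 0 ≤ K x y t)
    (hK_stoch : ∀ᵐ x ∂μ, ∀ᵐ t ∂(volume.restrict (Ioi (0:ℝ))),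
      (∫ y, K x y t ∂μ) = 1)
    (hg_meas : Measurable fun q : X × ℝ => g q.1 q.2)
    (hg_nonneg : ∀ x t, 0 ≤ g x t)
    (hg_bdd : MemLp (fun q : X × ℝ => g q.1 q.2) ⊤
      (μ.prod (volume.restrict (Ioi (0:ℝ)))))
    (hβ : β = (eLpNorm (fun q : X × ℝ => g q.1 q.2) ⊤
      (μ.prod (volume.restrict (Ioi (0:ℝ))))).toReal)
    (hT₀ : 0 < T₀) (hβ₀_pos : 0 < β₀)
    (hβ₀ : ∀ x t, 0 < t → t < T₀ → β₀ ≤ g x t)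
    (hh_meas : Measurable fun q : X × ℝ => h q.1 q.2)
    (hh_nonneg : ∀ x t, 0 ≤ h x t)
    (hG_cont : ContinuousOn G (Ici 0))
    (hG_zero : G 0 = 0)
    (hG_nonneg : ∀ u, 0 ≤ u → 0 ≤ G u)
    (hG_mono : StrictMonoOn G (Ici 0))
    (hG_conc : ConcaveOn ℝ (Ici 0) G)
    (hp₁_cont : ContinuousOn p₁ (Ioi 0)) (hp₂_cont : ContinuousOn p₂ (Ioi 0))
    (hp₁_pos : ∀ t ∈ Ioi (0:ℝ), 0 < p₁ t) (hp₂_pos : ∀ t ∈ Ioi (0:ℝ), 0 < p₂ t)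
    (hp_ne : ∃ t ∈ Ioi (0:ℝ), p₁ t ≠ p₂ t)
    (hp₂_int : (∫ t in Ioi (0:ℝ), p₂ t) = 1)
    (hp_bound : ∀ᵐ x ∂μ, ∀ᵐ t ∂(volume.restrict (Ioi (0:ℝ))),
      p₁ t ≤ h x t ∧ h x t ≤ p₂ t)
    (hrat_pos : 0 < ratLim)
    (hrat_lim : Tendsto (fun t => p₁ t / p₂ t) (nhdsWithin 0 (Ioi 0)) (nhds ratLim))
    (hξ_pos : 0 < ξ) (hξ_eq : ξ - G ξ = β)
    (V : ℕ → X → ℝ → ℝ)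
    (hV0 : ∀ x t, V 0 x t = ξ - β)
    (hVsucc : ∀ m x t, V (m + 1) x t =
      ∫ s in Ioc (0:ℝ) t, ∫ y, K x y (t - s) * (h y s * G (V m y s + g y s)) ∂μ) :
    ∃ σs ∈ Ioo (0:ℝ) 1,
      ∀ᵐ q ∂(μ.prod (volume.restrict (Ioi (0:ℝ)))),
        σs * V 1 q.1 q.2 ≤ V 2 q.1 q.2 ∧ V 2 q.1 q.2 ≤ V 1 q.1 q.2 := by
  classical
  set ν : Measure ℝ := volume.restrict (Ioi (0:ℝ)) with hν
  rcases eq_or_ne μ 0 with hμ0 | hμne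
  · refine ⟨1/2, by norm_num, ?_⟩
    simp [hμ0]
  -- basic constants
  set c : ℝ := G ξ with hc
  have hc_pos : 0 < c := by
    have := hG_mono (self_mem_Ici) (mem_Ici.2 hξ_pos.le) hξ_pos
    simpa [hG_zero] using this
  have hβ_nonneg : 0 ≤ β := by rw [hβ]; exact ENNReal.toReal_nonneg
  have hcβ : c + β = ξ := by rw [hc]; linarith
  have hβ_lt_ξ : β < ξ := by linarith
  -- monotone measurable extension of G
  set Gb : ℝ → ℝ := fun u => G (max u 0) with hGbdef
  have hG_monoOn : MonotoneOn G (Ici 0) := hG_mono.monotoneOn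
  have hGb_mono : Monotone Gb := fun u v huv =>
    hG_monoOn (mem_Ici.2 (le_max_right _ _)) (mem_Ici.2 (le_max_right _ _))
      (max_le_max huv le_rfl)
  have hGb_meas : Measurable Gb := hGb_mono.measurable
  have hGb_eq : ∀ u, 0 ≤ u → Gb u = G u := by
    intro u hu; simp [hGbdef, max_eq_left hu]
  have hGb_nonneg : ∀ u, 0 ≤ Gb u := fun u => hG_nonneg _ (le_max_right _ _)
  have hGbξ : Gb ξ = c := by rw [hGb_eq ξ hξ_pos.le, hc]
  -- integrability of p₂ and p₁
  have hp₂_integrable : Integrable p₂ ν := by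
    by_contra hcon
    rw [hν, integral_undef hcon] at hp₂_int
    norm_num at hp₂_int
  have hp₂_ae_nonneg : 0 ≤ᵐ[ν] p₂ := by
    rw [hν]
    exact (ae_restrict_iff' measurableSet_Ioi).2 (ae_of_all _ fun s hs => (hp₂_pos s hs).le)
  -- a.e. bound for g
  have hg_le_prod : ∀ᵐ q ∂(μ.prod ν), g q.1 q.2 ≤ β := by
    have hfin := hg_bdd.2
    rw [eLpNorm_exponent_top] at hfin
    filter_upwards [ae_le_eLpNormEssSup (f := fun q : X × ℝ => g q.1 q.2)
      (μ := μ.prod ν)] with q hq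
    have h1 : ((‖g q.1 q.2‖₊ : ℝ≥0∞)).toReal ≤ β := by
      rw [hβ, eLpNorm_exponent_top]
      exact ENNReal.toReal_mono hfin.ne (by exact_mod_cast hq)
    calc g q.1 q.2 ≤ ‖g q.1 q.2‖ := le_abs_self _
    _ ≤ β := by simpa using h1
  have hg_le : ∀ᵐ s ∂ν, ∀ᵐ z ∂μ, g z s ≤ β :=
    (Measure.ae_ae_comm (p := fun (z : X) (s : ℝ) => g z s ≤ β)
      (measurableSet_le hg_meas measurable_const)).1 (Measure.ae_ae_of_ae_prod hg_le_prod)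
  -- a.e. bounds for h
  have hp₁_aem : AEMeasurable p₁ ν := by
    rw [hν]; exact hp₁_cont.aemeasurable measurableSet_Ioi
  have hp₂_aem : AEMeasurable p₂ ν := by
    rw [hν]; exact hp₂_cont.aemeasurable measurableSet_Ioi
  have hh_le : ∀ᵐ s ∂ν, ∀ᵐ z ∂μ, p₁ s ≤ h z s ∧ h z s ≤ p₂ s := by
    have hq₁ : p₁ =ᵐ[ν] hp₁_aem.mk p₁ := hp₁_aem.ae_eq_mk
    have hq₂ : p₂ =ᵐ[ν] hp₂_aem.mk p₂ := hp₂_aem.ae_eq_mk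
    have hb' : ∀ᵐ x ∂μ, ∀ᵐ t ∂ν, hp₁_aem.mk p₁ t ≤ h x t ∧ h x t ≤ hp₂_aem.mk p₂ t := by
      filter_upwards [hp_bound] with x hx
      filter_upwards [hx, hq₁, hq₂] with t ht h1 h2
      rw [← h1, ← h2]; exact ht
    have hswap : ∀ᵐ s ∂ν, ∀ᵐ z ∂μ, hp₁_aem.mk p₁ s ≤ h z s ∧ h z s ≤ hp₂_aem.mk p₂ s := by
      refine (Measure.ae_ae_comm
        (p := fun (z : X) (s : ℝ) => hp₁_aem.mk p₁ s ≤ h z s ∧ h z s ≤ hp₂_aem.mk p₂ s) ?_).1 hb'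
      exact (measurableSet_le (hp₁_aem.measurable_mk.comp measurable_snd) hh_meas).inter
        (measurableSet_le hh_meas (hp₂_aem.measurable_mk.comp measurable_snd))
    filter_upwards [hswap, hq₁, hq₂] with s hs h1 h2
    rw [h1, h2]; exact hs
  have hgood_s : ∀ᵐ s ∂ν, ∀ᵐ z ∂μ, g z s ≤ β ∧ p₁ s ≤ h z s ∧ h z s ≤ p₂ s := by
    filter_upwards [hg_le, hh_le] with s h1 h2
    filter_upwards [h1, h2] with z hz1 hz2
    exact ⟨hz1, hz2⟩
  have hμae : (ae μ).NeBot := ae_neBot.2 hμne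
  have hp₁_le_p₂ : ∀ᵐ s ∂ν, p₁ s ≤ p₂ s := by
    filter_upwards [hgood_s] with s hs
    obtain ⟨z, hz⟩ := hs.exists
    exact hz.2.1.trans hz.2.2
  have hp₁_integrable : Integrable p₁ ν := by
    refine hp₂_integrable.mono' hp₁_aem.aestronglyMeasurable ?_
    filter_upwards [hp₁_le_p₂, (ae_restrict_iff' measurableSet_Ioi).2
      (ae_of_all _ fun s (hs : s ∈ Ioi (0:ℝ)) => (hp₁_pos s hs).le)] with s h1 h2
    rw [Real.norm_eq_abs, abs_of_nonneg h2]; exact h1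
  -- positivity of ∫ p₁ on (0, T₀)
  set IT₀ : ℝ := ∫ s in Ioo (0:ℝ) T₀, p₁ s with hIT₀def
  have hsub₀ : volume.restrict (Ioo (0:ℝ) T₀) ≤ ν := by
    rw [hν]; exact Measure.restrict_mono (fun s hs => hs.1) le_rfl
  have hIT₀_pos : 0 < IT₀ := by
    have hint : IntegrableOn p₁ (Ioo (0:ℝ) T₀) volume := hp₁_integrable.mono_measure hsub₀
    have hnn : 0 ≤ᵐ[volume.restrict (Ioo (0:ℝ) T₀)] p₁ := by
      filter_upwards [ae_restrict_mem measurableSet_Ioo] with s hs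
      exact (hp₁_pos s hs.1).le
    rw [hIT₀def]
    rw [setIntegral_pos_iff_support_of_nonneg_ae hnn hint]
    refine lt_of_lt_of_le ?_ (measure_mono (fun s hs =>
      ⟨ne_of_gt (hp₁_pos s hs.1), hs⟩ : Ioo (0:ℝ) T₀ ⊆ Function.support p₁ ∩ Ioo 0 T₀))
    rw [Real.volume_Ioo]
    simpa using hT₀
  have hGcβ₀_pos : 0 < G (c + β₀) := by
    have := hG_mono self_mem_Ici (mem_Ici.2 (by positivity : (0:ℝ) ≤ c + β₀)) (by positivity)
    simpa [hG_zero] using this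
  -- measurability packages
  obtain ⟨hΦ₁_meas, hinner₁_sm, houter₁_sm⟩ := aux_meas_sandwich μ K h Gb hK_meas hh_meas hGb_meas
    (fun z s => c + g z s) (measurable_const.add hg_meas)
  -- representation of V 1
  have hV1_eq : ∀ x t, V 1 x t =
      ∫ s in Ioc (0:ℝ) t, ∫ z, K x z (t - s) * (h z s * Gb (c + g z s)) ∂μ := by
    intro x t
    rw [hVsucc]
    refine integral_congr_ae (ae_of_all _ fun s => ?_)
    refine integral_congr_ae (ae_of_all _ fun z => ?_)
    simp only [hV0]
    rw [(show ξ - β = c by linarith), hGb_eq _ (add_nonneg hc_pos.le (hg_nonneg z s))]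
  have hV1_nonneg : ∀ z s, 0 ≤ V 1 z s := by
    intro z s
    rw [hV1_eq]
    refine integral_nonneg fun r => integral_nonneg fun w => ?_
    exact mul_nonneg (hK_nonneg _ _ _) (mul_nonneg (hh_nonneg _ _) (hGb_nonneg _))
  have hV1unc_meas : Measurable (fun q : X × ℝ => V 1 q.1 q.2) := by
    have heq : (fun q : X × ℝ => V 1 q.1 q.2) = fun q : X × ℝ =>
        ∫ s in Ioc (0:ℝ) q.2, ∫ z, K q.1 z (q.2 - s) * (h z s * Gb (c + g z s)) ∂μ :=
      funext fun q => hV1_eq q.1 q.2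
    rw [heq]; exact houter₁_sm.measurable
  obtain ⟨hΦ₂_meas, hinner₂_sm, houter₂_sm⟩ := aux_meas_sandwich μ K h Gb hK_meas hh_meas hGb_meas
    (fun z s => V 1 z s + g z s) (hV1unc_meas.add hg_meas)
  have hV2_eq : ∀ x t, V 2 x t =
      ∫ s in Ioc (0:ℝ) t, ∫ z, K x z (t - s) * (h z s * Gb (V 1 z s + g z s)) ∂μ := by
    intro x t
    rw [hVsucc]
    refine integral_congr_ae (ae_of_all _ fun s => ?_)
    refine integral_congr_ae (ae_of_all _ fun z => ?_)
    simp only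
    rw [hGb_eq _ (add_nonneg (hV1_nonneg z s) (hg_nonneg z s))]
  -- key per-x estimates for V 1
  have hmain : ∀ᵐ x ∂μ, ∀ t : ℝ, V 1 x t ≤ c ∧ (T₀ ≤ t → IT₀ * G (c + β₀) ≤ V 1 x t) := by
    filter_upwards [hK_stoch] with x Hx
    intro t
    by_cases ht : 0 < t
    swap
    · constructor
      · rw [hV1_eq, Ioc_eq_empty ht, Measure.restrict_empty, integral_zero_measure]
        exact hc_pos.le
      · intro hT; exact absurd (hT₀.trans_le hT) ht
    have hgoodS : ∀ᵐ s ∂(volume.restrict (Ioc (0:ℝ) t)),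
        ((∫ z, K x z (t - s) ∂μ) = 1 ∧ Integrable (fun z => K x z (t - s)) μ)
        ∧ (∀ᵐ z ∂μ, g z s ≤ β ∧ p₁ s ≤ h z s ∧ h z s ≤ p₂ s) ∧ s ∈ Ioc (0:ℝ) t := by
      have H1 : ∀ᵐ τ ∂volume, τ ∈ Ioi (0:ℝ) → (∫ z, K x z τ ∂μ) = 1 :=
        (ae_restrict_iff' measurableSet_Ioi).1 Hx
      have H2 : ∀ᵐ s ∂volume, (t - s) ∈ Ioi (0:ℝ) → (∫ z, K x z (t - s) ∂μ) = 1 :=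
        (Measure.measurePreserving_sub_left volume t).quasiMeasurePreserving.ae H1
      have H3 : ∀ᵐ s ∂volume, s ≠ t := by
        refine ae_iff.2 ?_
        simpa using (volume_singleton (a := t))
      have hle : volume.restrict (Ioc (0:ℝ) t) ≤ ν := by
        rw [hν]; exact Measure.restrict_mono Ioc_subset_Ioi_self le_rfl
      filter_upwards [ae_mono Measure.restrict_le_self (H2.and H3),
        ae_mono hle hgood_s, ae_restrict_mem measurableSet_Ioc] with s hs hz hmem
      have hts : (0:ℝ) < t - s := by
        rcases lt_or_eq_of_le hmem.2 with h' | h'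
        · linarith
        · exact absurd h' hs.2
      have h1 := hs.1 hts
      have h2 : Integrable (fun z => K x z (t - s)) μ := by
        by_contra hcon
        rw [integral_undef hcon] at h1
        norm_num at h1
      exact ⟨⟨h1, h2⟩, hz, hmem⟩
    set F : ℝ → ℝ := fun s => ∫ z, K x z (t - s) * (h z s * Gb (c + g z s)) ∂μ with hFdef
    have hF_nonneg : ∀ s, 0 ≤ F s := fun s =>
      integral_nonneg fun z => mul_nonneg (hK_nonneg _ _ _)
        (mul_nonneg (hh_nonneg _ _) (hGb_nonneg _))
    have hF_sm : StronglyMeasurable F := by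
      have heq : F = fun s => (fun p : (X × ℝ) × ℝ =>
          ∫ z, K p.1.1 z (p.1.2 - p.2) * (h z p.2 * Gb (c + g z p.2)) ∂μ) ((x, t), s) := rfl
      rw [heq]
      exact hinner₁_sm.comp_measurable (by fun_prop)
    have hF_le : ∀ᵐ s ∂(volume.restrict (Ioc (0:ℝ) t)), F s ≤ p₂ s * c := by
      filter_upwards [hgoodS] with s hs
      calc F s ≤ ∫ z, K x z (t - s) * (p₂ s * c) ∂μ := by
            refine integral_mono_of_nonneg (ae_of_all _ fun z => mul_nonneg (hK_nonneg _ _ _)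
              (mul_nonneg (hh_nonneg _ _) (hGb_nonneg _))) (hs.1.2.mul_const _) ?_
            filter_upwards [hs.2.1] with z hz
            have h1 : Gb (c + g z s) ≤ c := by
              rw [← hGbξ]; exact hGb_mono (by linarith [hz.1])
            exact mul_le_mul_of_nonneg_left
              (mul_le_mul hz.2.2 h1 (hGb_nonneg _) ((hh_nonneg z s).trans hz.2.2))
              (hK_nonneg _ _ _)
      _ = p₂ s * c := by rw [integral_mul_const, hs.1.1, one_mul]
    have hle : volume.restrict (Ioc (0:ℝ) t) ≤ ν := by
      rw [hν]; exact Measure.restrict_mono Ioc_subset_Ioi_self le_rfl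
    have hp₂c_int : Integrable (fun s => p₂ s * c) (volume.restrict (Ioc (0:ℝ) t)) :=
      (hp₂_integrable.mono_measure hle).mul_const c
    have hF_int : Integrable F (volume.restrict (Ioc (0:ℝ) t)) := by
      refine hp₂c_int.mono' hF_sm.aestronglyMeasurable ?_
      filter_upwards [hF_le] with s hs
      rw [Real.norm_eq_abs, abs_of_nonneg (hF_nonneg s)]
      exact hs
    have hupper : V 1 x t ≤ c := by
      rw [hV1_eq]
      calc (∫ s in Ioc (0:ℝ) t, F s) ≤ ∫ s in Ioc (0:ℝ) t, p₂ s * c :=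
            integral_mono_of_nonneg (ae_of_all _ hF_nonneg) hp₂c_int hF_le
      _ ≤ ∫ s, p₂ s * c ∂ν := by
            refine integral_mono_measure hle ?_ (hp₂_integrable.mul_const c)
            filter_upwards [hp₂_ae_nonneg] with s hs
            exact mul_nonneg hs hc_pos.le
      _ = c := by rw [integral_mul_const, hp₂_int, one_mul]
    refine ⟨hupper, fun hTt => ?_⟩
    have hle2 : volume.restrict (Ioo (0:ℝ) T₀) ≤ volume.restrict (Ioc (0:ℝ) t) :=
      Measure.restrict_mono (Ioo_subset_Ioc_self.trans (Ioc_subset_Ioc_right hTt)) le_rfl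
    have hFlow : ∀ᵐ s ∂(volume.restrict (Ioo (0:ℝ) T₀)), p₁ s * G (c + β₀) ≤ F s := by
      filter_upwards [ae_mono hle2 hgoodS, ae_restrict_mem measurableSet_Ioo] with s hs hsmem
      have hΦint : Integrable (fun z => K x z (t - s) * (h z s * Gb (c + g z s))) μ := by
        refine (hs.1.2.mul_const (p₂ s * c)).mono' ?_ ?_
        · exact (hΦ₁_meas.comp
            (show Measurable fun z : X => (((x, t), s), z) by fun_prop)).aestronglyMeasurable
        · filter_upwards [hs.2.1] with z hz
          have h1 : Gb (c + g z s) ≤ c := by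
            rw [← hGbξ]; exact hGb_mono (by linarith [hz.1])
          rw [Real.norm_eq_abs, abs_of_nonneg (mul_nonneg (hK_nonneg _ _ _)
            (mul_nonneg (hh_nonneg _ _) (hGb_nonneg _)))]
          exact mul_le_mul_of_nonneg_left
            (mul_le_mul hz.2.2 h1 (hGb_nonneg _) ((hh_nonneg z s).trans hz.2.2)) (hK_nonneg _ _ _)
      calc p₁ s * G (c + β₀) = ∫ z, K x z (t - s) * (p₁ s * G (c + β₀)) ∂μ := by
            rw [integral_mul_const, hs.1.1, one_mul]
      _ ≤ F s := by
            refine integral_mono_of_nonneg (ae_of_all _ fun z => mul_nonneg (hK_nonneg _ _ _)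
              (mul_nonneg ((hp₁_pos s (mem_Ioi.2 hsmem.1)).le) hGcβ₀_pos.le)) hΦint ?_
            filter_upwards [hs.2.1] with z hz
            have h2 : G (c + β₀) ≤ Gb (c + g z s) := by
              rw [← hGb_eq (c + β₀) (by positivity)]
              exact hGb_mono (by linarith [hβ₀ z s hsmem.1 hsmem.2])
            exact mul_le_mul_of_nonneg_left
              (mul_le_mul hz.2.1 h2 hGcβ₀_pos.le (hh_nonneg z s)) (hK_nonneg _ _ _)
    calc IT₀ * G (c + β₀) = ∫ s in Ioo (0:ℝ) T₀, p₁ s * G (c + β₀) :=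
          (integral_mul_const _ _).symm
    _ ≤ ∫ s in Ioo (0:ℝ) T₀, F s := by
          refine integral_mono_of_nonneg ?_ (hF_int.mono_measure hle2) hFlow
          filter_upwards [ae_restrict_mem measurableSet_Ioo] with s hs
          exact mul_nonneg (hp₁_pos s hs.1).le hGcβ₀_pos.le
    _ ≤ ∫ s in Ioc (0:ℝ) t, F s :=
          integral_mono_measure hle2 (ae_of_all _ hF_nonneg) hF_int
    _ = V 1 x t := (hV1_eq x t).symm
  -- β₀ ≤ β
  have hβ₀β : β₀ ≤ β := by
    have hν' : volume.restrict (Ioo (0:ℝ) T₀) ≠ 0 := by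
      intro hcon
      have h0 : volume.restrict (Ioo (0:ℝ) T₀) (Ioo 0 T₀) = 0 := by rw [hcon]; rfl
      rw [Measure.restrict_apply measurableSet_Ioo, inter_self, Real.volume_Ioo] at h0
      exact absurd h0 (ne_of_gt (ENNReal.ofReal_pos.2 (by linarith)))
    have hne : (ae (volume.restrict (Ioo (0:ℝ) T₀))).NeBot := ae_neBot.2 hν'
    have hg_le' : ∀ᵐ s ∂(volume.restrict (Ioo (0:ℝ) T₀)), ∀ᵐ z ∂μ, g z s ≤ β :=
      ae_mono hsub₀ hg_le
    obtain ⟨s, hs, hsmem⟩ :=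
      (hg_le'.and (ae_restrict_mem measurableSet_Ioo)).exists
    obtain ⟨z, hz⟩ := hs.exists
    exact le_trans (hβ₀ z s hsmem.1 hsmem.2) hz
  -- the constant D and σ
  set D : ℝ := min β₀ (IT₀ * G (c + β₀)) with hDdef
  have hD_pos : 0 < D := lt_min hβ₀_pos (by positivity)
  have hD_lt_ξ : D < ξ := (min_le_left _ _).trans_lt (lt_of_le_of_lt hβ₀β hβ_lt_ξ)
  have hGD_pos : 0 < G D := by
    have := hG_mono self_mem_Ici (mem_Ici.2 hD_pos.le) hD_pos
    simpa [hG_zero] using this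
  have hGD_lt : G D < c := by
    rw [hc]
    exact hG_mono (mem_Ici.2 hD_pos.le) (mem_Ici.2 hξ_pos.le) hD_lt_ξ
  set σ : ℝ := G D / c with hσdef
  have hσ_pos : 0 < σ := div_pos hGD_pos hc_pos
  have hσ_lt1 : σ < 1 := (div_lt_one hc_pos).2 hGD_lt
  have hσc : σ * c = G D := div_mul_cancel₀ _ hc_pos.ne'
  -- lower bound for V 1 + g
  have hDle : ∀ᵐ z ∂μ, ∀ s, 0 < s → D ≤ V 1 z s + g z s := by
    filter_upwards [hmain] with z hz
    intro s hs
    by_cases hsT : s < T₀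
    · calc D ≤ β₀ := min_le_left _ _
      _ ≤ g z s := hβ₀ z s hs hsT
      _ ≤ V 1 z s + g z s := le_add_of_nonneg_left (hV1_nonneg z s)
    · calc D ≤ IT₀ * G (c + β₀) := min_le_right _ _
      _ ≤ V 1 z s := (hz s).2 (not_lt.1 hsT)
      _ ≤ V 1 z s + g z s := le_add_of_nonneg_right (hg_nonneg z s)
  -- final per-x estimate
  have hfinal : ∀ᵐ x ∂μ, ∀ t : ℝ, σ * V 1 x t ≤ V 2 x t ∧ V 2 x t ≤ V 1 x t := by
    filter_upwards [hK_stoch] with x Hx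
    intro t
    by_cases ht : 0 < t
    swap
    · rw [hV1_eq, hV2_eq, Ioc_eq_empty ht, Measure.restrict_empty, integral_zero_measure,
        integral_zero_measure]
      simp
    have hgoodS : ∀ᵐ s ∂(volume.restrict (Ioc (0:ℝ) t)),
        ((∫ z, K x z (t - s) ∂μ) = 1 ∧ Integrable (fun z => K x z (t - s)) μ)
        ∧ (∀ᵐ z ∂μ, (g z s ≤ β ∧ p₁ s ≤ h z s ∧ h z s ≤ p₂ s)
            ∧ (∀ s', V 1 z s' ≤ c) ∧ (∀ s', 0 < s' → D ≤ V 1 z s' + g z s'))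
        ∧ s ∈ Ioc (0:ℝ) t := by
      have H1 : ∀ᵐ τ ∂volume, τ ∈ Ioi (0:ℝ) → (∫ z, K x z τ ∂μ) = 1 :=
        (ae_restrict_iff' measurableSet_Ioi).1 Hx
      have H2 : ∀ᵐ s ∂volume, (t - s) ∈ Ioi (0:ℝ) → (∫ z, K x z (t - s) ∂μ) = 1 :=
        (Measure.measurePreserving_sub_left volume t).quasiMeasurePreserving.ae H1
      have H3 : ∀ᵐ s ∂volume, s ≠ t := by
        refine ae_iff.2 ?_
        simpa using (volume_singleton (a := t))
      have hle : volume.restrict (Ioc (0:ℝ) t) ≤ ν := by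
        rw [hν]; exact Measure.restrict_mono Ioc_subset_Ioi_self le_rfl
      have hzfix : ∀ᵐ z ∂μ, (∀ s', V 1 z s' ≤ c) ∧ (∀ s', 0 < s' → D ≤ V 1 z s' + g z s') := by
        filter_upwards [hmain, hDle] with z h1 h2
        exact ⟨fun s' => (h1 s').1, h2⟩
      filter_upwards [ae_mono Measure.restrict_le_self (H2.and H3),
        ae_mono hle hgood_s, ae_restrict_mem measurableSet_Ioc] with s hs hz hmem
      have hts : (0:ℝ) < t - s := by
        rcases lt_or_eq_of_le hmem.2 with h' | h'
        · linarith
        · exact absurd h' hs.2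
      have h1 := hs.1 hts
      have h2 : Integrable (fun z => K x z (t - s)) μ := by
        by_contra hcon
        rw [integral_undef hcon] at h1
        norm_num at h1
      refine ⟨⟨h1, h2⟩, ?_, hmem⟩
      filter_upwards [hz, hzfix] with z hz1 hz2
      exact ⟨hz1, hz2⟩
    set F : ℝ → ℝ := fun s => ∫ z, K x z (t - s) * (h z s * Gb (c + g z s)) ∂μ with hFdef
    set F₂ : ℝ → ℝ := fun s => ∫ z, K x z (t - s) * (h z s * Gb (V 1 z s + g z s)) ∂μ with hF₂def
    have hF_nonneg : ∀ s, 0 ≤ F s := fun s =>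
      integral_nonneg fun z => mul_nonneg (hK_nonneg _ _ _)
        (mul_nonneg (hh_nonneg _ _) (hGb_nonneg _))
    have hF₂_nonneg : ∀ s, 0 ≤ F₂ s := fun s =>
      integral_nonneg fun z => mul_nonneg (hK_nonneg _ _ _)
        (mul_nonneg (hh_nonneg _ _) (hGb_nonneg _))
    have hF_sm : StronglyMeasurable F := by
      have heq : F = fun s => (fun p : (X × ℝ) × ℝ =>
          ∫ z, K p.1.1 z (p.1.2 - p.2) * (h z p.2 * Gb (c + g z p.2)) ∂μ) ((x, t), s) := rfl
      rw [heq]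
      exact hinner₁_sm.comp_measurable (by fun_prop)
    have hF₂_sm : StronglyMeasurable F₂ := by
      have heq : F₂ = fun s => (fun p : (X × ℝ) × ℝ =>
          ∫ z, K p.1.1 z (p.1.2 - p.2) * (h z p.2 * Gb (V 1 z p.2 + g z p.2)) ∂μ) ((x, t), s) := rfl
      rw [heq]
      exact hinner₂_sm.comp_measurable (by fun_prop)
    -- pointwise comparisons for a.e. s
    have hcomp : ∀ᵐ s ∂(volume.restrict (Ioc (0:ℝ) t)),
        σ * F s ≤ F₂ s ∧ F₂ s ≤ F s ∧ F s ≤ p₂ s * c := by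
      filter_upwards [hgoodS] with s hs
      obtain ⟨⟨hstoch, hKint⟩, hz_ae, hmem⟩ := hs
      -- integrability of the two inner integrands
      have hΦ₁int : Integrable (fun z => K x z (t - s) * (h z s * Gb (c + g z s))) μ := by
        refine (hKint.mul_const (p₂ s * c)).mono' ?_ ?_
        · exact (hΦ₁_meas.comp
            (show Measurable fun z : X => (((x, t), s), z) by fun_prop)).aestronglyMeasurable
        · filter_upwards [hz_ae] with z hz
          have h1 : Gb (c + g z s) ≤ c := by
            rw [← hGbξ]; exact hGb_mono (by linarith [hz.1.1])
          rw [Real.norm_eq_abs, abs_of_nonneg (mul_nonneg (hK_nonneg _ _ _)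
            (mul_nonneg (hh_nonneg _ _) (hGb_nonneg _)))]
          exact mul_le_mul_of_nonneg_left
            (mul_le_mul hz.1.2.2 h1 (hGb_nonneg _) ((hh_nonneg z s).trans hz.1.2.2))
            (hK_nonneg _ _ _)
      have hΦ₂int : Integrable (fun z => K x z (t - s) * (h z s * Gb (V 1 z s + g z s))) μ := by
        refine (hKint.mul_const (p₂ s * c)).mono' ?_ ?_
        · exact (hΦ₂_meas.comp
            (show Measurable fun z : X => (((x, t), s), z) by fun_prop)).aestronglyMeasurable
        · filter_upwards [hz_ae] with z hz
          have h1 : Gb (V 1 z s + g z s) ≤ c := by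
            rw [← hGbξ]
            exact hGb_mono (by linarith [hz.1.1, hz.2.1 s])
          rw [Real.norm_eq_abs, abs_of_nonneg (mul_nonneg (hK_nonneg _ _ _)
            (mul_nonneg (hh_nonneg _ _) (hGb_nonneg _)))]
          exact mul_le_mul_of_nonneg_left
            (mul_le_mul hz.1.2.2 h1 (hGb_nonneg _) ((hh_nonneg z s).trans hz.1.2.2))
            (hK_nonneg _ _ _)
      refine ⟨?_, ?_, ?_⟩
      · -- σ * F s ≤ F₂ s
        have : σ * F s = ∫ z, σ * (K x z (t - s) * (h z s * Gb (c + g z s))) ∂μ := by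
          rw [integral_const_mul]
        rw [this]
        refine integral_mono_of_nonneg (ae_of_all _ fun z => mul_nonneg hσ_pos.le
          (mul_nonneg (hK_nonneg _ _ _)
          (mul_nonneg (hh_nonneg _ _) (hGb_nonneg _)))) hΦ₂int ?_
        filter_upwards [hz_ae] with z hz
        have h1 : Gb (c + g z s) ≤ c := by
          rw [← hGbξ]; exact hGb_mono (by linarith [hz.1.1])
        have h2 : σ * Gb (c + g z s) ≤ Gb (V 1 z s + g z s) := by
          calc σ * Gb (c + g z s) ≤ σ * c := by
                exact mul_le_mul_of_nonneg_left h1 hσ_pos.le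
          _ = G D := hσc
          _ = Gb D := (hGb_eq D hD_pos.le).symm
          _ ≤ Gb (V 1 z s + g z s) := hGb_mono (hz.2.2 s hmem.1)
        calc σ * (K x z (t - s) * (h z s * Gb (c + g z s)))
            = K x z (t - s) * (h z s * (σ * Gb (c + g z s))) := by ring
        _ ≤ K x z (t - s) * (h z s * Gb (V 1 z s + g z s)) :=
            mul_le_mul_of_nonneg_left
              (mul_le_mul_of_nonneg_left h2 (hh_nonneg z s)) (hK_nonneg _ _ _)
      · -- F₂ s ≤ F s
        refine integral_mono_of_nonneg (ae_of_all _ fun z => mul_nonneg (hK_nonneg _ _ _)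
          (mul_nonneg (hh_nonneg _ _) (hGb_nonneg _))) hΦ₁int ?_
        filter_upwards [hz_ae] with z hz
        have h1 : Gb (V 1 z s + g z s) ≤ Gb (c + g z s) := hGb_mono (by linarith [hz.2.1 s])
        exact mul_le_mul_of_nonneg_left
          (mul_le_mul_of_nonneg_left h1 (hh_nonneg z s)) (hK_nonneg _ _ _)
      · -- F s ≤ p₂ s * c
        calc F s ≤ ∫ z, K x z (t - s) * (p₂ s * c) ∂μ := by
              refine integral_mono_of_nonneg (ae_of_all _ fun z => mul_nonneg (hK_nonneg _ _ _)
                (mul_nonneg (hh_nonneg _ _) (hGb_nonneg _))) (hKint.mul_const _) ?_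
              filter_upwards [hz_ae] with z hz
              have h1 : Gb (c + g z s) ≤ c := by
                rw [← hGbξ]; exact hGb_mono (by linarith [hz.1.1])
              exact mul_le_mul_of_nonneg_left
                (mul_le_mul hz.1.2.2 h1 (hGb_nonneg _) ((hh_nonneg z s).trans hz.1.2.2))
                (hK_nonneg _ _ _)
        _ = p₂ s * c := by rw [integral_mul_const, hstoch, one_mul]
    have hle : volume.restrict (Ioc (0:ℝ) t) ≤ ν := by
      rw [hν]; exact Measure.restrict_mono Ioc_subset_Ioi_self le_rfl
    have hp₂c_int : Integrable (fun s => p₂ s * c) (volume.restrict (Ioc (0:ℝ) t)) :=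
      (hp₂_integrable.mono_measure hle).mul_const c
    have hF_int : Integrable F (volume.restrict (Ioc (0:ℝ) t)) := by
      refine hp₂c_int.mono' hF_sm.aestronglyMeasurable ?_
      filter_upwards [hcomp] with s hs
      rw [Real.norm_eq_abs, abs_of_nonneg (hF_nonneg s)]
      exact hs.2.2
    have hF₂_int : Integrable F₂ (volume.restrict (Ioc (0:ℝ) t)) := by
      refine hp₂c_int.mono' hF₂_sm.aestronglyMeasurable ?_
      filter_upwards [hcomp] with s hs
      rw [Real.norm_eq_abs, abs_of_nonneg (hF₂_nonneg s)]
      exact hs.2.1.trans hs.2.2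
    constructor
    · -- σ * V 1 x t ≤ V 2 x t
      rw [hV1_eq, hV2_eq]
      have h1 : σ * (∫ s in Ioc (0:ℝ) t, F s) = ∫ s in Ioc (0:ℝ) t, σ * F s := by
        rw [integral_const_mul]
      calc σ * (∫ s in Ioc (0:ℝ) t, F s) = ∫ s in Ioc (0:ℝ) t, σ * F s := h1
      _ ≤ ∫ s in Ioc (0:ℝ) t, F₂ s := by
            refine integral_mono_of_nonneg (ae_of_all _ fun s =>
              mul_nonneg hσ_pos.le (hF_nonneg s)) hF₂_int ?_
            filter_upwards [hcomp] with s hs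
            exact hs.1
    · -- V 2 x t ≤ V 1 x t
      rw [hV1_eq, hV2_eq]
      refine integral_mono_of_nonneg (ae_of_all _ hF₂_nonneg) hF_int ?_
      filter_upwards [hcomp] with s hs
      exact hs.2.1
  -- conclusion
  refine ⟨σ, ⟨hσ_pos, hσ_lt1⟩, ?_⟩
  have hqmp : Measure.QuasiMeasurePreserving (Prod.fst : X × ℝ → X) (μ.prod ν) μ :=
    Measure.quasiMeasurePreserving_fst
  exact (hqmp.ae hfinal).mono fun q hq => hq q.2
end
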